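/- arXiv:2406.18480 — 5 statements merged into one kernel-verified Lean document; each statement's English description precedes it below -/
import Mathlib

section
/- For every integer t ≥ 2 one has β*_t < 1/2. -/
/-- `Ical a c = ∫_0^∞ e^{−ax}/(1+e^{−2x})^c dx`. -/
noncomputable def Ical (a c : ℕ) : ℝ :=
  ∫ x in Set.Ioi (0 : ℝ), Real.exp (-(a : ℝ) * x) / (1 + Real.exp (-2 * x)) ^ c

/-- `ub t c = ⌊(t − c)/6⌋ + 1`, computed in `ℤ` and truncated to `ℕ`; this is the
number of terms in a sum `Σ_{k=0}^{⌊(t−c)/6⌋}` (zero when `t < c − 5`). -/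
def ub (t c : ℕ) : ℕ := ((((t : ℤ) - c) / 6) + 1).toNat

/-- The constant `β*_t` of Ballantine–Burson–Craig–Folsom–Wen. -/
noncomputable def betaStar (t : ℕ) : ℝ :=
  if Even t then
    (∑ k ∈ Finset.range (ub t 4),
        (Nat.choose ((t - 2 * k - 2) / 2) (2 * k + 1) : ℝ) * Ical (4 * k + 4) ((t - 2 * k) / 2))
      + ∑ k ∈ Finset.range (ub t 2),
        (Nat.choose ((t - 2 * k - 2) / 2) (2 * k) : ℝ) * Ical (4 * k + 2) ((t - 2 * k) / 2)
  else
    (∑ k ∈ Finset.range (ub t 1),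
        (Nat.choose ((t - 2 * k - 1) / 2) (2 * k) : ℝ) * Ical (4 * k + 2) ((t - 2 * k + 1) / 2))
      + ∑ k ∈ Finset.range (ub t 5),
        (Nat.choose ((t - 2 * k - 3) / 2) (2 * k + 1) : ℝ) * Ical (4 * k + 4) ((t - 2 * k - 1) / 2)

open Real MeasureTheory Set


noncomputable def AA (q : ℝ) (n : ℕ) : ℝ :=
  ∑ k ∈ Finset.range (n + 1), (Nat.choose (n - k) (2 * k) : ℝ) * (q ^ 2 * (1 + q)) ^ k

noncomputable def BB (q : ℝ) (n : ℕ) : ℝ :=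
  ∑ k ∈ Finset.range (n + 1), (Nat.choose (n - 1 - k) (2 * k + 1) : ℝ) * (q ^ 2 * (1 + q)) ^ k

lemma AA_nonneg {q : ℝ} (hq : 0 ≤ q) (n : ℕ) : 0 ≤ AA q n :=
  Finset.sum_nonneg fun k _ => mul_nonneg (Nat.cast_nonneg _)
    (pow_nonneg (mul_nonneg (sq_nonneg q) (by linarith)) k)

lemma BB_nonneg {q : ℝ} (hq : 0 ≤ q) (n : ℕ) : 0 ≤ BB q n :=
  Finset.sum_nonneg fun k _ => mul_nonneg (Nat.cast_nonneg _)
    (pow_nonneg (mul_nonneg (sq_nonneg q) (by linarith)) k)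

lemma choose_aux1 (n k : ℕ) :
    Nat.choose (n - k) (2 * k + 2) = Nat.choose (n - 1 - k) (2 * k + 1) + Nat.choose (n - 1 - k) (2 * k + 2) := by
  rcases lt_or_ge k n with h | h
  · have h1 : n - k = (n - 1 - k) + 1 := by omega
    rw [h1]
    exact Nat.choose_succ_succ _ (2 * k + 1)
  · have h1 : n - k = 0 := by omega
    have h2 : n - 1 - k = 0 := by omega
    rw [h1, h2, Nat.choose_eq_zero_of_lt (show 0 < 2*k+2 by omega),
      Nat.choose_eq_zero_of_lt (show 0 < 2*k+1 by omega)]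

lemma choose_aux2 (n k : ℕ) :
    Nat.choose (n + 1 - k) (2 * k + 1) = Nat.choose (n - k) (2 * k) + Nat.choose (n - k) (2 * k + 1) := by
  rcases le_or_gt k n with h | h
  · have h1 : n + 1 - k = (n - k) + 1 := by omega
    rw [h1]
    exact Nat.choose_succ_succ _ (2 * k)
  · have h1 : n + 1 - k = 0 := by omega
    have h2 : n - k = 0 := by omega
    rw [h1, h2, Nat.choose_eq_zero_of_lt (show 0 < 2*k+1 by omega),
      Nat.choose_eq_zero_of_lt (show 0 < 2*k by omega)]

lemma AA_rec (q : ℝ) (n : ℕ) : AA q (n + 1) = AA q n + (q ^ 2 * (1 + q)) * BB q n := by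
  unfold AA BB
  rw [Finset.sum_range_succ' (fun k => (Nat.choose (n + 1 - k) (2 * k) : ℝ) * (q ^ 2 * (1 + q)) ^ k) (n+1),
      Finset.sum_range_succ' (fun k => (Nat.choose (n - k) (2 * k) : ℝ) * (q ^ 2 * (1 + q)) ^ k) n,
      Finset.mul_sum]
  have key : (∑ k ∈ Finset.range (n+1), (Nat.choose (n + 1 - (k+1)) (2 * (k+1)) : ℝ) * (q ^ 2 * (1 + q)) ^ (k+1))
      = (∑ k ∈ Finset.range n, (Nat.choose (n - (k+1)) (2 * (k+1)) : ℝ) * (q ^ 2 * (1 + q)) ^ (k+1))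
        + ∑ k ∈ Finset.range (n+1), (q ^ 2 * (1 + q)) * ((Nat.choose (n - 1 - k) (2 * k + 1) : ℝ) * (q ^ 2 * (1 + q)) ^ k) := by
    have ext : (∑ k ∈ Finset.range n, (Nat.choose (n - (k+1)) (2 * (k+1)) : ℝ) * (q ^ 2 * (1 + q)) ^ (k+1))
        = ∑ k ∈ Finset.range (n+1), (Nat.choose (n - 1 - k) (2 * k + 2) : ℝ) * (q ^ 2 * (1 + q)) ^ (k+1) := by
      rw [Finset.sum_range_succ, Nat.choose_eq_zero_of_lt (by omega)]
      push_cast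
      rw [zero_mul, add_zero]
      refine Finset.sum_congr rfl fun k hk => ?_
      have e1 : n - (k+1) = n - 1 - k := by omega
      have e2 : 2 * (k+1) = 2 * k + 2 := by omega
      rw [e1, e2]
    rw [ext, ← Finset.sum_add_distrib]
    refine Finset.sum_congr rfl fun k hk => ?_
    have e2 : 2 * (k+1) = 2 * k + 2 := by omega
    have e1 : n + 1 - (k + 1) = n - k := by omega
    rw [e1, e2, choose_aux1 n k]
    push_cast
    ring
  rw [key]
  simp only [Nat.sub_zero, Nat.choose_zero_right, mul_zero, Nat.choose_zero_right]
  push_cast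
  ring

lemma BB_rec (q : ℝ) (n : ℕ) : BB q (n + 2) = BB q (n + 1) + AA q n := by
  unfold AA BB
  have ext1 : (∑ k ∈ Finset.range (n + 2), (Nat.choose (n + 1 - 1 - k) (2 * k + 1) : ℝ) * (q ^ 2 * (1 + q)) ^ k)
      = ∑ k ∈ Finset.range (n + 3), (Nat.choose (n - k) (2 * k + 1) : ℝ) * (q ^ 2 * (1 + q)) ^ k := by
    rw [Finset.sum_range_succ _ (n+2), Nat.choose_eq_zero_of_lt (show n - (n+2) < 2*(n+2)+1 by omega)]
    push_cast
    try rw [zero_mul, add_zero]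
    try (refine Finset.sum_congr rfl fun k hk => ?_
         have e : n + 1 - 1 - k = n - k := by omega
         rw [e])
  have ext2 : (∑ k ∈ Finset.range (n + 1), (Nat.choose (n - k) (2 * k) : ℝ) * (q ^ 2 * (1 + q)) ^ k)
      = ∑ k ∈ Finset.range (n + 3), (Nat.choose (n - k) (2 * k) : ℝ) * (q ^ 2 * (1 + q)) ^ k := by
    rw [Finset.sum_range_succ _ (n+2), Finset.sum_range_succ _ (n+1),
      Nat.choose_eq_zero_of_lt (show n - (n+2) < 2*(n+2) by omega),
      Nat.choose_eq_zero_of_lt (show n - (n+1) < 2*(n+1) by omega)]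
    push_cast
    ring
  rw [ext1, ext2, ← Finset.sum_add_distrib]
  refine Finset.sum_congr rfl fun k hk => ?_
  have e : n + 2 - 1 - k = n + 1 - k := by omega
  rw [e, choose_aux2 n k]
  push_cast
  ring

lemma star (q : ℝ) : ∀ n : ℕ, (1 + q) ^ (n + 1) = AA q (n + 1) + q * (1 + q) * BB q (n + 1) + q * AA q n := by
  intro n
  induction n with
  | zero =>
    simp only [AA, BB]
    norm_num [Finset.sum_range_succ, Finset.sum_range_zero]
    try ring
  | succ n ih =>
    rw [AA_rec q (n + 1), BB_rec q n]
    linear_combination (1 + q) * ih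


lemma AA_zero (q : ℝ) : AA q 0 = 1 := by simp [AA]

lemma BB_small (q : ℝ) : BB q 0 = 0 ∧ BB q 1 = 0 := by
  constructor <;> norm_num [BB, Finset.sum_range_succ]

lemma P_le {q : ℝ} (h0 : 0 ≤ q) (n : ℕ) : AA q n + q * (1 + q) * BB q n ≤ (1 + q) ^ n := by
  cases n with
  | zero => simp [AA_zero, (BB_small q).1]
  | succ n =>
    have h := star q n
    have h2 : 0 ≤ q * AA q n := mul_nonneg h0 (AA_nonneg h0 n)
    linarith

lemma Q_le {q : ℝ} (h0 : 0 ≤ q) (n : ℕ) : AA q n + q * BB q (n + 1) ≤ (1 + q) ^ n := by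
  cases n with
  | zero => simp [AA_zero, (BB_small q).2]
  | succ n =>
    have h := star q n
    have h2 := BB_rec q n
    have h3 : 0 ≤ q * q * BB q (n + 1) := mul_nonneg (mul_nonneg h0 h0) (BB_nonneg h0 (n + 1))
    nlinarith [BB_nonneg h0 (n + 1)]

lemma div_pow_sub {D : ℝ} (hD : 0 < D) (a : ℝ) {k n : ℕ} (hk : k ≤ n) :
    a / D ^ (n - k) = a * D ^ k / D ^ n := by
  have h : D ^ n = D ^ (n - k) * D ^ k := by rw [← pow_add]; congr 1; omega
  rw [h, mul_div_mul_right _ _ (pow_ne_zero k hD.ne')]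

lemma frac_le {q : ℝ} (h0 : 0 ≤ q) (h1 : q ≤ 1) : q / (1 + q) ≤ q - q ^ 2 / 2 := by
  have hD : (0:ℝ) < 1 + q := by linarith
  rw [div_le_iff₀ hD]
  nlinarith

lemma even_core {q : ℝ} (h0 : 0 ≤ q) (h1 : q ≤ 1) (m : ℕ) :
    (∑ k ∈ Finset.range (m + 1), (Nat.choose (m - k) (2 * k + 1) : ℝ) * (q ^ (2 * k + 2) / (1 + q) ^ (m + 1 - k)))
      + ∑ k ∈ Finset.range (m + 1), (Nat.choose (m - k) (2 * k) : ℝ) * (q ^ (2 * k + 1) / (1 + q) ^ (m + 1 - k))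
    ≤ q - q ^ 2 / 2 := by
  have hD : (0:ℝ) < 1 + q := by linarith
  have e1 : ∀ k ∈ Finset.range (m + 1),
      (Nat.choose (m - k) (2 * k + 1) : ℝ) * (q ^ (2 * k + 2) / (1 + q) ^ (m + 1 - k))
      = (Nat.choose (m - k) (2 * k + 1) : ℝ) * q ^ (2 * k + 2) * (1 + q) ^ k / (1 + q) ^ (m + 1) := by
    intro k hk
    rw [Finset.mem_range] at hk
    rw [div_pow_sub hD _ (show k ≤ m + 1 by omega)]
    ring
  have e2 : ∀ k ∈ Finset.range (m + 1),
      (Nat.choose (m - k) (2 * k) : ℝ) * (q ^ (2 * k + 1) / (1 + q) ^ (m + 1 - k))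
      = (Nat.choose (m - k) (2 * k) : ℝ) * q ^ (2 * k + 1) * (1 + q) ^ k / (1 + q) ^ (m + 1) := by
    intro k hk
    rw [Finset.mem_range] at hk
    rw [div_pow_sub hD _ (show k ≤ m + 1 by omega)]
    ring
  rw [Finset.sum_congr rfl e1, Finset.sum_congr rfl e2, ← Finset.sum_div, ← Finset.sum_div,
    ← add_div]
  have hS1 : (∑ k ∈ Finset.range (m + 1), (Nat.choose (m - k) (2 * k + 1) : ℝ) * q ^ (2 * k + 2) * (1 + q) ^ k)
      = q ^ 2 * BB q (m + 1) := by
    unfold BB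
    rw [Finset.sum_range_succ _ (m + 1), show m + 1 - 1 - (m + 1) = 0 by omega,
      Nat.choose_eq_zero_of_lt (show 0 < 2 * (m + 1) + 1 by omega)]
    push_cast
    rw [zero_mul, add_zero, Finset.mul_sum]
    refine Finset.sum_congr rfl fun k hk => ?_
    rw [mul_pow, ← pow_mul]
    ring
  have hS2 : (∑ k ∈ Finset.range (m + 1), (Nat.choose (m - k) (2 * k) : ℝ) * q ^ (2 * k + 1) * (1 + q) ^ k)
      = q * AA q m := by
    unfold AA
    rw [Finset.mul_sum]
    refine Finset.sum_congr rfl fun k hk => ?_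
    rw [mul_pow, ← pow_mul]
    ring
  rw [hS1, hS2]
  have hQ : q ^ 2 * BB q (m + 1) + q * AA q m ≤ q * (1 + q) ^ m := by
    have := Q_le h0 m
    nlinarith [BB_nonneg h0 (m + 1), AA_nonneg h0 m]
  calc (q ^ 2 * BB q (m + 1) + q * AA q m) / (1 + q) ^ (m + 1)
      ≤ q * (1 + q) ^ m / (1 + q) ^ (m + 1) := by
        exact (div_le_div_iff_of_pos_right (pow_pos hD (m+1))).mpr hQ
    _ = q / (1 + q) := by
        rw [pow_succ, mul_comm ((1 + q) ^ m) (1 + q)]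
        exact mul_div_mul_right _ _ (pow_ne_zero m hD.ne')
    _ ≤ q - q ^ 2 / 2 := frac_le h0 h1

lemma odd_core {q : ℝ} (h0 : 0 ≤ q) (h1 : q ≤ 1) (m : ℕ) :
    (∑ k ∈ Finset.range (m + 2), (Nat.choose (m + 1 - k) (2 * k) : ℝ) * (q ^ (2 * k + 1) / (1 + q) ^ (m + 2 - k)))
      + ∑ k ∈ Finset.range (m + 1), (Nat.choose (m - k) (2 * k + 1) : ℝ) * (q ^ (2 * k + 2) / (1 + q) ^ (m + 1 - k))
    ≤ q - q ^ 2 / 2 := by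
  have hD : (0:ℝ) < 1 + q := by linarith
  have e1 : ∀ k ∈ Finset.range (m + 2),
      (Nat.choose (m + 1 - k) (2 * k) : ℝ) * (q ^ (2 * k + 1) / (1 + q) ^ (m + 2 - k))
      = (Nat.choose (m + 1 - k) (2 * k) : ℝ) * q ^ (2 * k + 1) * (1 + q) ^ k / (1 + q) ^ (m + 2) := by
    intro k hk
    rw [div_pow_sub hD _ (show k ≤ m + 2 by rw [Finset.mem_range] at hk; omega)]
    ring
  have e2 : ∀ k ∈ Finset.range (m + 1),
      (Nat.choose (m - k) (2 * k + 1) : ℝ) * (q ^ (2 * k + 2) / (1 + q) ^ (m + 1 - k))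
      = (Nat.choose (m - k) (2 * k + 1) : ℝ) * q ^ (2 * k + 2) * (1 + q) ^ (k + 1) / (1 + q) ^ (m + 2) := by
    intro k hk
    rw [Finset.mem_range] at hk
    rw [show m + 1 - k = m + 2 - (k + 1) by omega, div_pow_sub hD _ (show k + 1 ≤ m + 2 by omega)]
    ring
  rw [Finset.sum_congr rfl e1, Finset.sum_congr rfl e2, ← Finset.sum_div, ← Finset.sum_div,
    ← add_div]
  have hS1 : (∑ k ∈ Finset.range (m + 2), (Nat.choose (m + 1 - k) (2 * k) : ℝ) * q ^ (2 * k + 1) * (1 + q) ^ k)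
      = q * AA q (m + 1) := by
    unfold AA
    rw [Finset.mul_sum]
    refine Finset.sum_congr rfl fun k hk => ?_
    rw [mul_pow, ← pow_mul]
    ring
  have hS2 : (∑ k ∈ Finset.range (m + 1), (Nat.choose (m - k) (2 * k + 1) : ℝ) * q ^ (2 * k + 2) * (1 + q) ^ (k + 1))
      = q * (1 + q) * (q * BB q (m + 1)) := by
    unfold BB
    rw [Finset.sum_range_succ _ (m + 1), show m + 1 - 1 - (m + 1) = 0 by omega,
      Nat.choose_eq_zero_of_lt (show 0 < 2 * (m + 1) + 1 by omega)]
    push_cast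
    rw [zero_mul, add_zero, Finset.mul_sum, Finset.mul_sum]
    refine Finset.sum_congr rfl fun k hk => ?_
    rw [mul_pow, ← pow_mul]
    ring
  rw [hS1, hS2]
  have hP : q * AA q (m + 1) + q * (1 + q) * (q * BB q (m + 1)) ≤ q * (1 + q) ^ (m + 1) := by
    have := P_le h0 (m + 1)
    nlinarith [AA_nonneg h0 (m + 1), BB_nonneg h0 (m + 1)]
  calc (q * AA q (m + 1) + q * (1 + q) * (q * BB q (m + 1))) / (1 + q) ^ (m + 2)
      ≤ q * (1 + q) ^ (m + 1) / (1 + q) ^ (m + 2) :=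
        (div_le_div_iff_of_pos_right (pow_pos hD (m + 2))).mpr hP
    _ = q / (1 + q) := by
        rw [show ((1 + q):ℝ) ^ (m + 2) = (1 + q) * (1 + q) ^ (m + 1) from by ring]
        exact mul_div_mul_right _ _ (pow_ne_zero (m + 1) hD.ne')
    _ ≤ q - q ^ 2 / 2 := frac_le h0 h1

lemma f_integrable (a c : ℕ) (ha : 0 < a) :
    IntegrableOn (fun x : ℝ => Real.exp (-(a : ℝ) * x) / (1 + Real.exp (-2 * x)) ^ c) (Ioi 0) := by
  have ha' : (0:ℝ) < a := by exact_mod_cast ha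
  have hcont : Continuous fun x : ℝ => Real.exp (-(a : ℝ) * x) / (1 + Real.exp (-2 * x)) ^ c := by
    apply Continuous.div (by fun_prop) (by fun_prop)
    intro x
    positivity
  apply Integrable.mono' (exp_neg_integrableOn_Ioi 0 ha') hcont.aestronglyMeasurable
  filter_upwards with x
  rw [Real.norm_eq_abs, abs_of_nonneg (by positivity)]
  apply div_le_self (Real.exp_pos _).le
  have h := (Real.exp_pos (-2 * x)).le
  exact one_le_pow₀ (by linarith)

lemma integral_exp_Ioi (b : ℝ) (hb : 0 < b) : ∫ x in Ioi (0:ℝ), Real.exp (-b * x) = 1 / b := by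
  have hderiv : ∀ x ∈ Ioi (0:ℝ), HasDerivAt (fun y : ℝ => -(Real.exp (-b * y) / b)) (Real.exp (-b * x)) x := by
    intro x _
    have h0 : HasDerivAt (fun y : ℝ => -b * y) (-b) x := by
      simpa using (hasDerivAt_id x).const_mul (-b)
    have h1 := ((h0.exp).div_const b).neg
    refine h1.congr_deriv ?_
    field_simp
  have htend : Filter.Tendsto (fun x : ℝ => -(Real.exp (-b * x) / b)) Filter.atTop (nhds 0) := by
    have h2 : Filter.Tendsto (fun x : ℝ => b * x) Filter.atTop Filter.atTop :=
      Filter.Tendsto.const_mul_atTop hb Filter.tendsto_id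
    have h3 : Filter.Tendsto (fun x : ℝ => Real.exp (-(b * x))) Filter.atTop (nhds 0) :=
      Real.tendsto_exp_neg_atTop_nhds_zero.comp h2
    have h4 : Filter.Tendsto (fun x : ℝ => -(Real.exp (-(b * x)) / b)) Filter.atTop (nhds (-(0 / b))) :=
      (h3.div_const b).neg
    simpa [neg_mul] using h4
  have hcont : ContinuousWithinAt (fun x : ℝ => -(Real.exp (-b * x) / b)) (Ici 0) 0 :=
    Continuous.continuousWithinAt (by fun_prop)
  have := integral_Ioi_of_hasDerivAt_of_tendsto hcont hderiv (exp_neg_integrableOn_Ioi 0 hb) htend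
  rw [this]
  simp [Real.exp_zero]

lemma integral_bound : ∫ x in Ioi (0:ℝ), (Real.exp (-2 * x) - Real.exp (-4 * x) / 2) = 3 / 8 := by
  have h2 : (0:ℝ) < 2 := by norm_num
  have h4 : (0:ℝ) < 4 := by norm_num
  rw [integral_sub (exp_neg_integrableOn_Ioi 0 h2) ((exp_neg_integrableOn_Ioi 0 h4).div_const 2),
    integral_div, integral_exp_Ioi 2 h2, integral_exp_Ioi 4 h4]
  norm_num

lemma exp_pow_eq (x : ℝ) (n : ℕ) : Real.exp (-(2 * n : ℝ) * x) = Real.exp (-2 * x) ^ n := by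
  rw [← Real.exp_nat_mul]
  congr 1
  push_cast
  ring

lemma even_case (m : ℕ) : betaStar (2 * m + 2) ≤ 3 / 8 := by
  have hev : Even (2 * m + 2) := ⟨m + 1, by ring⟩
  have hint1 : ∀ k ∈ Finset.range (ub (2 * m + 2) 4),
      Integrable (fun x : ℝ => (Nat.choose ((2 * m + 2 - 2 * k - 2) / 2) (2 * k + 1) : ℝ) *
        (Real.exp (-((4 * k + 4 : ℕ) : ℝ) * x) / (1 + Real.exp (-2 * x)) ^ ((2 * m + 2 - 2 * k) / 2)))
        (volume.restrict (Ioi 0)) :=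
    fun k _ => (f_integrable (4 * k + 4) _ (by omega)).const_mul _
  have hint2 : ∀ k ∈ Finset.range (ub (2 * m + 2) 2),
      Integrable (fun x : ℝ => (Nat.choose ((2 * m + 2 - 2 * k - 2) / 2) (2 * k) : ℝ) *
        (Real.exp (-((4 * k + 2 : ℕ) : ℝ) * x) / (1 + Real.exp (-2 * x)) ^ ((2 * m + 2 - 2 * k) / 2)))
        (volume.restrict (Ioi 0)) :=
    fun k _ => (f_integrable (4 * k + 2) _ (by omega)).const_mul _
  calc betaStar (2 * m + 2)
      = ∫ x in Ioi (0:ℝ),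
          ((∑ k ∈ Finset.range (ub (2 * m + 2) 4),
            (Nat.choose ((2 * m + 2 - 2 * k - 2) / 2) (2 * k + 1) : ℝ) *
              (Real.exp (-((4 * k + 4 : ℕ) : ℝ) * x) / (1 + Real.exp (-2 * x)) ^ ((2 * m + 2 - 2 * k) / 2)))
          + ∑ k ∈ Finset.range (ub (2 * m + 2) 2),
            (Nat.choose ((2 * m + 2 - 2 * k - 2) / 2) (2 * k) : ℝ) *
              (Real.exp (-((4 * k + 2 : ℕ) : ℝ) * x) / (1 + Real.exp (-2 * x)) ^ ((2 * m + 2 - 2 * k) / 2))) := by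
        rw [integral_add (integrable_finset_sum _ hint1) (integrable_finset_sum _ hint2),
          integral_finset_sum _ hint1, integral_finset_sum _ hint2]
        simp only [betaStar, if_pos hev, Ical]
        congr 1
        all_goals exact Finset.sum_congr rfl fun k hk => (integral_const_mul _ _).symm
    _ ≤ ∫ x in Ioi (0:ℝ), (Real.exp (-2 * x) - Real.exp (-4 * x) / 2) := by
        apply setIntegral_mono_on
          ((integrable_finset_sum _ hint1).add (integrable_finset_sum _ hint2))
          ((exp_neg_integrableOn_Ioi 0 (by norm_num : (0:ℝ) < 2)).sub
            ((exp_neg_integrableOn_Ioi 0 (by norm_num : (0:ℝ) < 4)).div_const 2))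
          measurableSet_Ioi
        intro x hx
        rw [mem_Ioi] at hx
        simp only [Pi.add_apply, Pi.sub_apply]
        have hq0 : (0:ℝ) < Real.exp (-2 * x) := Real.exp_pos _
        have hq1 : Real.exp (-2 * x) ≤ 1 := by
          have := Real.exp_le_exp.mpr (show -2 * x ≤ 0 by linarith)
          simpa using this
        have hc1 : ∀ k ∈ Finset.range (ub (2 * m + 2) 4),
            (Nat.choose ((2 * m + 2 - 2 * k - 2) / 2) (2 * k + 1) : ℝ) *
              (Real.exp (-((4 * k + 4 : ℕ) : ℝ) * x) / (1 + Real.exp (-2 * x)) ^ ((2 * m + 2 - 2 * k) / 2))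
            = (Nat.choose (m - k) (2 * k + 1) : ℝ) *
              (Real.exp (-2 * x) ^ (2 * k + 2) / (1 + Real.exp (-2 * x)) ^ (m + 1 - k)) := by
          intro k hk
          rw [Finset.mem_range] at hk
          have hub : 6 * k + 4 ≤ 2 * m + 2 := by simp only [ub] at hk; omega
          have e1 : (2 * m + 2 - 2 * k - 2) / 2 = m - k := by omega
          have e2 : (2 * m + 2 - 2 * k) / 2 = m + 1 - k := by omega
          have e3 : Real.exp (-((4 * k + 4 : ℕ) : ℝ) * x) = Real.exp (-2 * x) ^ (2 * k + 2) := by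
            rw [← exp_pow_eq x (2 * k + 2)]
            congr 2
            push_cast
            ring
          rw [e1, e2, e3]
        have hc2 : ∀ k ∈ Finset.range (ub (2 * m + 2) 2),
            (Nat.choose ((2 * m + 2 - 2 * k - 2) / 2) (2 * k) : ℝ) *
              (Real.exp (-((4 * k + 2 : ℕ) : ℝ) * x) / (1 + Real.exp (-2 * x)) ^ ((2 * m + 2 - 2 * k) / 2))
            = (Nat.choose (m - k) (2 * k) : ℝ) *
              (Real.exp (-2 * x) ^ (2 * k + 1) / (1 + Real.exp (-2 * x)) ^ (m + 1 - k)) := by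
          intro k hk
          rw [Finset.mem_range] at hk
          have hub : 6 * k + 2 ≤ 2 * m + 2 := by simp only [ub] at hk; omega
          have e1 : (2 * m + 2 - 2 * k - 2) / 2 = m - k := by omega
          have e2 : (2 * m + 2 - 2 * k) / 2 = m + 1 - k := by omega
          have e3 : Real.exp (-((4 * k + 2 : ℕ) : ℝ) * x) = Real.exp (-2 * x) ^ (2 * k + 1) := by
            rw [← exp_pow_eq x (2 * k + 1)]
            congr 2
            push_cast
            ring
          rw [e1, e2, e3]
        rw [Finset.sum_congr rfl hc1, Finset.sum_congr rfl hc2]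
        have hsub1 : (∑ k ∈ Finset.range (ub (2 * m + 2) 4),
            (Nat.choose (m - k) (2 * k + 1) : ℝ) *
              (Real.exp (-2 * x) ^ (2 * k + 2) / (1 + Real.exp (-2 * x)) ^ (m + 1 - k)))
            ≤ ∑ k ∈ Finset.range (m + 1),
            (Nat.choose (m - k) (2 * k + 1) : ℝ) *
              (Real.exp (-2 * x) ^ (2 * k + 2) / (1 + Real.exp (-2 * x)) ^ (m + 1 - k)) := by
          apply Finset.sum_le_sum_of_subset_of_nonneg
          · exact Finset.range_subset_range.mpr (by simp only [ub]; omega)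
          · intro k _ _
            positivity
        have hsub2 : (∑ k ∈ Finset.range (ub (2 * m + 2) 2),
            (Nat.choose (m - k) (2 * k) : ℝ) *
              (Real.exp (-2 * x) ^ (2 * k + 1) / (1 + Real.exp (-2 * x)) ^ (m + 1 - k)))
            ≤ ∑ k ∈ Finset.range (m + 1),
            (Nat.choose (m - k) (2 * k) : ℝ) *
              (Real.exp (-2 * x) ^ (2 * k + 1) / (1 + Real.exp (-2 * x)) ^ (m + 1 - k)) := by
          apply Finset.sum_le_sum_of_subset_of_nonneg
          · exact Finset.range_subset_range.mpr (by simp only [ub]; omega)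
          · intro k _ _
            positivity
        have hcore := even_core hq0.le hq1 m
        have hg : Real.exp (-4 * x) = Real.exp (-2 * x) ^ 2 := by
          rw [← exp_pow_eq x 2]
          norm_num
        rw [hg]
        linarith
    _ = 3 / 8 := integral_bound


lemma odd_case (m : ℕ) : betaStar (2 * m + 3) ≤ 3 / 8 := by
  have hodd : ¬ Even (2 * m + 3) := by
    rw [Nat.even_iff]
    omega
  have hint1 : ∀ k ∈ Finset.range (ub (2 * m + 3) 1),
      Integrable (fun x : ℝ => (Nat.choose ((2 * m + 3 - 2 * k - 1) / 2) (2 * k) : ℝ) *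
        (Real.exp (-((4 * k + 2 : ℕ) : ℝ) * x) / (1 + Real.exp (-2 * x)) ^ ((2 * m + 3 - 2 * k + 1) / 2)))
        (volume.restrict (Ioi 0)) :=
    fun k _ => (f_integrable (4 * k + 2) _ (by omega)).const_mul _
  have hint2 : ∀ k ∈ Finset.range (ub (2 * m + 3) 5),
      Integrable (fun x : ℝ => (Nat.choose ((2 * m + 3 - 2 * k - 3) / 2) (2 * k + 1) : ℝ) *
        (Real.exp (-((4 * k + 4 : ℕ) : ℝ) * x) / (1 + Real.exp (-2 * x)) ^ ((2 * m + 3 - 2 * k - 1) / 2)))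
        (volume.restrict (Ioi 0)) :=
    fun k _ => (f_integrable (4 * k + 4) _ (by omega)).const_mul _
  calc betaStar (2 * m + 3)
      = ∫ x in Ioi (0:ℝ),
          ((∑ k ∈ Finset.range (ub (2 * m + 3) 1),
            (Nat.choose ((2 * m + 3 - 2 * k - 1) / 2) (2 * k) : ℝ) *
              (Real.exp (-((4 * k + 2 : ℕ) : ℝ) * x) / (1 + Real.exp (-2 * x)) ^ ((2 * m + 3 - 2 * k + 1) / 2)))
          + ∑ k ∈ Finset.range (ub (2 * m + 3) 5),
            (Nat.choose ((2 * m + 3 - 2 * k - 3) / 2) (2 * k + 1) : ℝ) *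
              (Real.exp (-((4 * k + 4 : ℕ) : ℝ) * x) / (1 + Real.exp (-2 * x)) ^ ((2 * m + 3 - 2 * k - 1) / 2))) := by
        rw [integral_add (integrable_finset_sum _ hint1) (integrable_finset_sum _ hint2),
          integral_finset_sum _ hint1, integral_finset_sum _ hint2]
        simp only [betaStar, if_neg hodd, Ical]
        congr 1
        all_goals exact Finset.sum_congr rfl fun k hk => (integral_const_mul _ _).symm
    _ ≤ ∫ x in Ioi (0:ℝ), (Real.exp (-2 * x) - Real.exp (-4 * x) / 2) := by
        apply setIntegral_mono_on
          ((integrable_finset_sum _ hint1).add (integrable_finset_sum _ hint2))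
          ((exp_neg_integrableOn_Ioi 0 (by norm_num : (0:ℝ) < 2)).sub
            ((exp_neg_integrableOn_Ioi 0 (by norm_num : (0:ℝ) < 4)).div_const 2))
          measurableSet_Ioi
        intro x hx
        rw [mem_Ioi] at hx
        simp only [Pi.add_apply, Pi.sub_apply]
        have hq0 : (0:ℝ) < Real.exp (-2 * x) := Real.exp_pos _
        have hq1 : Real.exp (-2 * x) ≤ 1 := by
          have := Real.exp_le_exp.mpr (show -2 * x ≤ 0 by linarith)
          simpa using this
        have hc1 : ∀ k ∈ Finset.range (ub (2 * m + 3) 1),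
            (Nat.choose ((2 * m + 3 - 2 * k - 1) / 2) (2 * k) : ℝ) *
              (Real.exp (-((4 * k + 2 : ℕ) : ℝ) * x) / (1 + Real.exp (-2 * x)) ^ ((2 * m + 3 - 2 * k + 1) / 2))
            = (Nat.choose (m + 1 - k) (2 * k) : ℝ) *
              (Real.exp (-2 * x) ^ (2 * k + 1) / (1 + Real.exp (-2 * x)) ^ (m + 2 - k)) := by
          intro k hk
          rw [Finset.mem_range] at hk
          have hub : 6 * k + 1 ≤ 2 * m + 3 := by simp only [ub] at hk; omega
          have e1 : (2 * m + 3 - 2 * k - 1) / 2 = m + 1 - k := by omega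
          have e2 : (2 * m + 3 - 2 * k + 1) / 2 = m + 2 - k := by omega
          have e3 : Real.exp (-((4 * k + 2 : ℕ) : ℝ) * x) = Real.exp (-2 * x) ^ (2 * k + 1) := by
            rw [← exp_pow_eq x (2 * k + 1)]
            congr 2
            push_cast
            ring
          rw [e1, e2, e3]
        have hc2 : ∀ k ∈ Finset.range (ub (2 * m + 3) 5),
            (Nat.choose ((2 * m + 3 - 2 * k - 3) / 2) (2 * k + 1) : ℝ) *
              (Real.exp (-((4 * k + 4 : ℕ) : ℝ) * x) / (1 + Real.exp (-2 * x)) ^ ((2 * m + 3 - 2 * k - 1) / 2))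
            = (Nat.choose (m - k) (2 * k + 1) : ℝ) *
              (Real.exp (-2 * x) ^ (2 * k + 2) / (1 + Real.exp (-2 * x)) ^ (m + 1 - k)) := by
          intro k hk
          rw [Finset.mem_range] at hk
          have hub : 6 * k + 5 ≤ 2 * m + 3 := by simp only [ub] at hk; omega
          have e1 : (2 * m + 3 - 2 * k - 3) / 2 = m - k := by omega
          have e2 : (2 * m + 3 - 2 * k - 1) / 2 = m + 1 - k := by omega
          have e3 : Real.exp (-((4 * k + 4 : ℕ) : ℝ) * x) = Real.exp (-2 * x) ^ (2 * k + 2) := by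
            rw [← exp_pow_eq x (2 * k + 2)]
            congr 2
            push_cast
            ring
          rw [e1, e2, e3]
        rw [Finset.sum_congr rfl hc1, Finset.sum_congr rfl hc2]
        have hsub1 : (∑ k ∈ Finset.range (ub (2 * m + 3) 1),
            (Nat.choose (m + 1 - k) (2 * k) : ℝ) *
              (Real.exp (-2 * x) ^ (2 * k + 1) / (1 + Real.exp (-2 * x)) ^ (m + 2 - k)))
            ≤ ∑ k ∈ Finset.range (m + 2),
            (Nat.choose (m + 1 - k) (2 * k) : ℝ) *
              (Real.exp (-2 * x) ^ (2 * k + 1) / (1 + Real.exp (-2 * x)) ^ (m + 2 - k)) := by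
          apply Finset.sum_le_sum_of_subset_of_nonneg
          · exact Finset.range_subset_range.mpr (by simp only [ub]; omega)
          · intro k _ _
            positivity
        have hsub2 : (∑ k ∈ Finset.range (ub (2 * m + 3) 5),
            (Nat.choose (m - k) (2 * k + 1) : ℝ) *
              (Real.exp (-2 * x) ^ (2 * k + 2) / (1 + Real.exp (-2 * x)) ^ (m + 1 - k)))
            ≤ ∑ k ∈ Finset.range (m + 1),
            (Nat.choose (m - k) (2 * k + 1) : ℝ) *
              (Real.exp (-2 * x) ^ (2 * k + 2) / (1 + Real.exp (-2 * x)) ^ (m + 1 - k)) := by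
          apply Finset.sum_le_sum_of_subset_of_nonneg
          · exact Finset.range_subset_range.mpr (by simp only [ub]; omega)
          · intro k _ _
            positivity
        have hcore := odd_core hq0.le hq1 m
        have hg : Real.exp (-4 * x) = Real.exp (-2 * x) ^ 2 := by
          rw [← exp_pow_eq x 2]
          norm_num
        rw [hg]
        linarith
    _ = 3 / 8 := integral_bound

/-- For every integer `t ≥ 2`, one has `β*_t < 1/2`. -/
theorem betaStar_lt_half (t : ℕ) (ht : 2 ≤ t) : betaStar t < 1 / 2 := by
  have h : betaStar t ≤ 3 / 8 := by
    obtain ⟨m, hm | hm⟩ : ∃ m, t = 2 * m + 2 ∨ t = 2 * m + 3 := ⟨(t - 2) / 2, by omega⟩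
    · rw [hm]; exact even_case m
    · rw [hm]; exact odd_case m
  linarith
end

section
/- With γ*_t := 1/(2β*_t), one has lim_{t→∞} γ*_t = 3/(2 ln(5/2)); equivalently, lim_{t→∞} β*_t = (1/3) ln(5/2). -/
open Finset

/-- the `x`-integrand of `betaStar`, written in terms of `u = e^{-2x}` -/
noncomputable def Wu (t : ℕ) (u : ℝ) : ℝ :=
  if Even t then
    (∑ k ∈ Finset.range (ub t 4),
        (Nat.choose ((t - 2 * k - 2) / 2) (2 * k + 1) : ℝ) * (u ^ (2*k+2) / (1+u) ^ ((t - 2 * k) / 2)))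
      + ∑ k ∈ Finset.range (ub t 2),
        (Nat.choose ((t - 2 * k - 2) / 2) (2 * k) : ℝ) * (u ^ (2*k+1) / (1+u) ^ ((t - 2 * k) / 2))
  else
    (∑ k ∈ Finset.range (ub t 1),
        (Nat.choose ((t - 2 * k - 1) / 2) (2 * k) : ℝ) * (u ^ (2*k+1) / (1+u) ^ ((t - 2 * k + 1) / 2)))
      + ∑ k ∈ Finset.range (ub t 5),
        (Nat.choose ((t - 2 * k - 3) / 2) (2 * k + 1) : ℝ) * (u ^ (2*k+2) / (1+u) ^ ((t - 2 * k - 1) / 2))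

lemma van4 {t k : ℕ} (h : ub t 4 ≤ k) : Nat.choose ((t - 2 * k - 2) / 2) (2 * k + 1) = 0 :=
  Nat.choose_eq_zero_of_lt (by unfold ub at h; omega)

lemma van2 {t k : ℕ} (ht : 2 ≤ t) (h : ub t 2 ≤ k) :
    Nat.choose ((t - 2 * k - 2) / 2) (2 * k) = 0 :=
  Nat.choose_eq_zero_of_lt (by unfold ub at h; omega)

lemma van1 {t k : ℕ} (ht : 1 ≤ t) (h : ub t 1 ≤ k) :
    Nat.choose ((t - 2 * k - 1) / 2) (2 * k) = 0 :=
  Nat.choose_eq_zero_of_lt (by unfold ub at h; omega)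

lemma van5 {t k : ℕ} (h : ub t 5 ≤ k) : Nat.choose ((t - 2 * k - 3) / 2) (2 * k + 1) = 0 :=
  Nat.choose_eq_zero_of_lt (by unfold ub at h; omega)


open Finset

/-- per-`k` term of the key identity -/
noncomputable def Tk (u : ℝ) (n k : ℕ) : ℝ :=
  (((n - k).choose (2 * k) : ℝ) + ((n - k).choose (2 * k + 1) : ℝ) * u
      + ((n - k - 1).choose (2 * k + 1) : ℝ) * u ^ 2) * u ^ (2 * k) * (1 + u) ^ k

lemma Tk_zero (u : ℝ) {n k : ℕ} (h : n < k) : Tk u n k = 0 := by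
  have h1 : n - k = 0 := by omega
  have h2 : n - k - 1 = 0 := by omega
  have hk : 1 ≤ k := by omega
  simp [Tk, h1, h2, Nat.choose_eq_zero_of_lt (by omega : 0 < 2 * k),
    Nat.choose_eq_zero_of_lt (by omega : 0 < 2 * k + 1)]

/-- telescoping helper for the key identity -/
noncomputable def gk (u : ℝ) (n k : ℕ) : ℝ :=
  match k with
  | 0 => 0
  | k + 1 => -(((n - k - 1).choose (2 * k + 1) : ℝ)) * u ^ (2 * k + 2) * (1 + u) ^ (k + 1)

lemma Tk_step (u : ℝ) (n k : ℕ) :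
    Tk u (n + 1) k = (1 + u) * Tk u n k + gk u n (k + 1) - gk u n k := by
  rcases Nat.eq_zero_or_pos k with rfl | hk
  · rcases Nat.eq_zero_or_pos n with rfl | hn
    · simp [Tk, gk]
    · obtain ⟨m, rfl⟩ : ∃ m, n = m + 1 := ⟨n - 1, by omega⟩
      simp only [Tk, gk]
      rw [show m + 1 + 1 - 0 - 1 = m + 1 by omega, show m + 1 - 0 - 1 = m by omega,
        show m + 1 + 1 - 0 = m + 2 by omega, show m + 1 - 0 = m + 1 by omega]
      norm_num [Nat.choose_one_right]
      push_cast
      ring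
  · rcases le_or_gt n k with hnk | hnk
    · -- k ≥ n, k ≥ 1 : everything vanishes
      have h1 : Tk u (n + 1) k = 0 := by
        have h1 : n + 1 - k ≤ 1 := by omega
        rcases Nat.lt_or_ge (n+1) k with h | h
        · exact Tk_zero u h
        · have e1 : n + 1 - k - 1 = 0 := by omega
          simp only [Tk, e1]
          rcases Nat.eq_or_lt_of_le h1 with h2 | h2
          · rw [show n + 1 - k = 1 by omega]
            simp [Nat.choose_eq_zero_of_lt (by omega : 1 < 2 * k),
              Nat.choose_eq_zero_of_lt (by omega : 1 < 2 * k + 1),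
              Nat.choose_eq_zero_of_lt (by omega : 0 < 2 * k + 1)]
          · rw [show n + 1 - k = 0 by omega]
            simp [Nat.choose_eq_zero_of_lt (by omega : 0 < 2 * k),
              Nat.choose_eq_zero_of_lt (by omega : 0 < 2 * k + 1)]
      have h2 : Tk u n k = 0 := by
        rcases Nat.lt_or_ge n k with h | h
        · exact Tk_zero u h
        · have hek : n = k := by omega
          simp only [Tk, hek, Nat.sub_self, Nat.zero_sub,
            Nat.choose_eq_zero_of_lt (by omega : 0 < 2 * k),
            Nat.choose_eq_zero_of_lt (by omega : 0 < 2 * k + 1)]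
          norm_num
      have h3 : gk u n (k + 1) = 0 := by
        simp [gk, show n - k - 1 = 0 by omega,
          Nat.choose_eq_zero_of_lt (by omega : 0 < 2 * k + 1)]
      have h4 : gk u n k = 0 := by
        obtain ⟨k', rfl⟩ : ∃ k', k = k' + 1 := ⟨k - 1, by omega⟩
        simp [gk, show n - k' - 1 = 0 by omega,
          Nat.choose_eq_zero_of_lt (by omega : 0 < 2 * k' + 1)]
      rw [h1, h2, h3, h4]; ring
    · -- 1 ≤ k, k + 1 ≤ n : clean Pascal case, n = m + k + 1
      obtain ⟨k', rfl⟩ : ∃ k', k = k' + 1 := ⟨k - 1, by omega⟩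
      obtain ⟨m, rfl⟩ : ∃ m, n = m + k' + 2 := ⟨n - k' - 2, by omega⟩
      simp only [Tk, gk]
      rw [show m + k' + 2 + 1 - (k' + 1) - 1 = m + 1 by omega,
        show m + k' + 2 - (k' + 1) - 1 = m by omega,
        show m + k' + 2 + 1 - (k' + 1) = m + 2 by omega,
        show m + k' + 2 - (k' + 1) = m + 1 by omega,
        show m + k' + 2 - k' - 1 = m + 1 by omega]
      rw [show 2 * (k' + 1) = 2 * k' + 1 + 1 by ring]
      rw [show (m + 2).choose (2 * k' + 1 + 1)
            = (m + 1).choose (2 * k' + 1) + (m + 1).choose (2 * k' + 1 + 1) from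
          Nat.choose_succ_succ (m + 1) (2 * k' + 1),
        show (m + 2).choose (2 * k' + 1 + 1 + 1)
            = (m + 1).choose (2 * k' + 1 + 1) + (m + 1).choose (2 * k' + 1 + 1 + 1) from
          Nat.choose_succ_succ (m + 1) (2 * k' + 1 + 1),
        show (m + 1).choose (2 * k' + 1 + 1 + 1)
            = m.choose (2 * k' + 1 + 1) + m.choose (2 * k' + 1 + 1 + 1) from
          Nat.choose_succ_succ m (2 * k' + 1 + 1)]
      push_cast
      ring

lemma key (u : ℝ) (n N : ℕ) (hN : n + 1 ≤ N) :
    ∑ k ∈ range N, Tk u n k = (1 + u) ^ n := by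
  induction n generalizing N with
  | zero =>
    rw [Finset.sum_eq_single 0]
    · simp [Tk]
    · intro k _ hk
      exact Tk_zero u (by omega)
    · intro h; exact absurd (Finset.mem_range.mpr (by omega)) h
  | succ n ih =>
    have e1 : ∀ k ∈ range N, Tk u (n+1) k
        = (1+u) * Tk u n k + (gk u n (k+1) - gk u n k) := by
      intro k _
      rw [Tk_step u n k]; ring
    have tel : ∑ k ∈ range N, (gk u n (k + 1) - gk u n k) = gk u n N - gk u n 0 :=
      Finset.sum_range_sub (gk u n) N
    have hgN : gk u n N = 0 := by
      obtain ⟨M, rfl⟩ : ∃ M, N = M + 1 := ⟨N - 1, by omega⟩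
      simp [gk, show n - M - 1 = 0 by omega,
        Nat.choose_eq_zero_of_lt (by omega : 0 < 2 * M + 1)]
    have hg0 : gk u n 0 = 0 := rfl
    rw [Finset.sum_congr rfl e1, Finset.sum_add_distrib, ← Finset.mul_sum,
      ih N (by omega), tel, hgN, hg0, pow_succ]
    ring

lemma Tk_zero' (u : ℝ) {n k : ℕ} (h : n ≤ k) (h1 : 1 ≤ k) : Tk u n k = 0 := by
  rcases Nat.lt_or_ge n k with h2 | h2
  · exact Tk_zero u h2
  · have hek : n = k := by omega
    simp only [Tk, hek, Nat.sub_self, Nat.zero_sub,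
      Nat.choose_eq_zero_of_lt (by omega : 0 < 2 * k),
      Nat.choose_eq_zero_of_lt (by omega : 0 < 2 * k + 1)]
    norm_num

/-- the per-`k` identity, even case -/
lemma perk_even (u : ℝ) (hu : 0 < u) (n k : ℕ) (hn : 1 ≤ n) :
    ((n - k).choose (2*k+1) : ℝ) * (u ^ (2*k+2) / (1+u) ^ (n+1-k))
      + ((n - k).choose (2*k) : ℝ) * (u ^ (2*k+1) / (1+u) ^ (n+1-k))
      + (((n - k).choose (2*k) : ℝ) * (u ^ (2*k+1) / (1+u) ^ (n+1-k))
        + ((n - k - 1).choose (2*k+1) : ℝ) * (u ^ (2*k+2) / (1+u) ^ (n-k)))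
      + u / (1+u) * (((n - k - 1).choose (2*k+1) : ℝ) * (u ^ (2*k+2) / (1+u) ^ (n-k))
        + ((n - k - 1).choose (2*k) : ℝ) * (u ^ (2*k+1) / (1+u) ^ (n-k)))
      = 2 * u / (1+u) ^ (n+1) * Tk u n k := by
  have hu1 : (0:ℝ) < 1 + u := by linarith
  rcases Nat.lt_or_ge k n with hk | hk
  · -- k ≤ n - 1, write n = m + k + 1
    obtain ⟨m, rfl⟩ : ∃ m, n = m + k + 1 := ⟨n - k - 1, by omega⟩
    simp only [Tk]
    rw [show m + k + 1 - k - 1 = m by omega, show m + k + 1 + 1 - k = m + 2 by omega,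
      show m + k + 1 - k = m + 1 by omega]
    rw [show (m + 1).choose (2*k+1) = m.choose (2*k) + m.choose (2*k+1) from
      Nat.choose_succ_succ m (2*k)]
    have h1 : (1+u) ^ (m + k + 1 + 1) = (1+u) ^ (m+2) * (1+u) ^ k := by
      rw [← pow_add]; ring_nf
    have h2 : (1+u) ^ (m + 2) = (1+u) ^ (m+1) * (1+u) := by rw [pow_succ]
    field_simp
    push_cast
    ring
  · -- k ≥ n : everything vanishes
    have e0 : n - k = 0 := by omega
    have e1 : n - k - 1 = 0 := by omega
    have hk1 : 1 ≤ k := hn.trans hk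
    rw [Tk_zero' u hk hk1]
    simp only [e1, e0, Nat.zero_sub,
      Nat.choose_eq_zero_of_lt (by omega : 0 < 2 * k),
      Nat.choose_eq_zero_of_lt (by omega : 0 < 2 * k + 1)]
    norm_num

lemma Wu_even (n : ℕ) (u : ℝ) : Wu (2*n) u
    = (∑ k ∈ Finset.range (ub (2*n) 4),
        ((n - k - 1).choose (2 * k + 1) : ℝ) * (u ^ (2*k+2) / (1+u) ^ (n - k)))
      + ∑ k ∈ Finset.range (ub (2*n) 2),
        ((n - k - 1).choose (2 * k) : ℝ) * (u ^ (2*k+1) / (1+u) ^ (n - k)) := by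
  rw [Wu, if_pos (even_two_mul n)]
  congr 1 <;> refine Finset.sum_congr rfl (fun k _ => ?_) <;>
    rw [show (2*n - 2*k - 2)/2 = n - k - 1 by omega, show (2*n - 2*k)/2 = n - k by omega]

lemma Wu_odd (n : ℕ) (u : ℝ) : Wu (2*n+1) u
    = (∑ k ∈ Finset.range (ub (2*n+1) 1),
        ((n - k).choose (2 * k) : ℝ) * (u ^ (2*k+1) / (1+u) ^ (n + 1 - k)))
      + ∑ k ∈ Finset.range (ub (2*n+1) 5),
        ((n - k - 1).choose (2 * k + 1) : ℝ) * (u ^ (2*k+2) / (1+u) ^ (n - k)) := by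
  rw [Wu, if_neg (by rintro ⟨r, hr⟩; omega)]
  congr 1 <;> refine Finset.sum_congr rfl (fun k _ => ?_)
  · rw [show (2*n+1 - 2*k - 1)/2 = n - k by omega, show (2*n+1 - 2*k + 1)/2 = n + 1 - k by omega]
  · rw [show (2*n+1 - 2*k - 3)/2 = n - k - 1 by omega, show (2*n+1 - 2*k - 1)/2 = n - k by omega]

lemma sum_ext {f : ℕ → ℝ} {m N : ℕ} (hm : m ≤ N) (hf : ∀ k, m ≤ k → f k = 0) :
    ∑ k ∈ Finset.range m, f k = ∑ k ∈ Finset.range N, f k :=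
  Finset.sum_subset (Finset.range_subset_range.mpr hm)
    (fun k _ hk => hf k (by simpa using hk))

lemma ub_le4 (t : ℕ) : ub t 4 ≤ t / 2 + 1 := by unfold ub; omega
lemma ub_le2 (t : ℕ) : ub t 2 ≤ t / 2 + 1 := by unfold ub; omega
lemma ub_le1 (t : ℕ) : ub t 1 ≤ t / 2 + 1 := by unfold ub; omega
lemma ub_le5 (t : ℕ) : ub t 5 ≤ t / 2 + 1 := by unfold ub; omega

lemma vanE4 {n k : ℕ} (h : ub (2*n+2) 4 ≤ k) : (n - k).choose (2*k+1) = 0 :=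
  Nat.choose_eq_zero_of_lt (by unfold ub at h; omega)
lemma vanE2 {n k : ℕ} (h : ub (2*n+2) 2 ≤ k) : (n - k).choose (2*k) = 0 :=
  Nat.choose_eq_zero_of_lt (by unfold ub at h; omega)
lemma vanO1 {n k : ℕ} (h : ub (2*n+1) 1 ≤ k) : (n - k).choose (2*k) = 0 :=
  Nat.choose_eq_zero_of_lt (by unfold ub at h; omega)
lemma vanO5 {n k : ℕ} (h : ub (2*n+1) 5 ≤ k) : (n - k - 1).choose (2*k+1) = 0 :=
  Nat.choose_eq_zero_of_lt (by unfold ub at h; omega)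
lemma vanE4' {n k : ℕ} (h : ub (2*n) 4 ≤ k) : (n - k - 1).choose (2*k+1) = 0 :=
  Nat.choose_eq_zero_of_lt (by unfold ub at h; omega)
lemma vanE2' {n k : ℕ} (hn : 1 ≤ n) (h : ub (2*n) 2 ≤ k) : (n - k - 1).choose (2*k) = 0 :=
  Nat.choose_eq_zero_of_lt (by unfold ub at h; omega)

lemma ub_le {t c : ℕ} : ub t c ≤ t / 6 + 1 := by unfold ub; omega

lemma hA_even (n N : ℕ) (hN : n+1 ≤ N) (u : ℝ) : Wu (2*n+2) u = ∑ k ∈ Finset.range N,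
    (((n - k).choose (2*k+1) : ℝ) * (u ^ (2*k+2) / (1+u) ^ (n+1-k))
      + ((n - k).choose (2*k) : ℝ) * (u ^ (2*k+1) / (1+u) ^ (n+1-k))) := by
  have e := Wu_even (n+1) u
  rw [show 2*(n+1) = 2*n+2 by ring] at e
  simp only [show ∀ k, n+1-k-1 = n-k from fun k => by omega] at e
  rw [e, Finset.sum_add_distrib]
  congr 1
  · exact sum_ext (le_trans (ub_le) (by omega)) (fun k hk => by rw [vanE4 hk]; norm_num)
  · exact sum_ext (le_trans (ub_le) (by omega)) (fun k hk => by rw [vanE2 hk]; norm_num)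

lemma hB_odd (n N : ℕ) (hN : n+1 ≤ N) (u : ℝ) : Wu (2*n+1) u = ∑ k ∈ Finset.range N,
    (((n - k).choose (2*k) : ℝ) * (u ^ (2*k+1) / (1+u) ^ (n+1-k))
      + ((n - k - 1).choose (2*k+1) : ℝ) * (u ^ (2*k+2) / (1+u) ^ (n-k))) := by
  rw [Wu_odd n u, Finset.sum_add_distrib]
  congr 1
  · exact sum_ext (le_trans (ub_le) (by omega)) (fun k hk => by rw [vanO1 hk]; norm_num)
  · exact sum_ext (le_trans (ub_le) (by omega)) (fun k hk => by rw [vanO5 hk]; norm_num)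

lemma hC_even (n N : ℕ) (hN : n+1 ≤ N) (hn : 1 ≤ n) (u : ℝ) : Wu (2*n) u = ∑ k ∈ Finset.range N,
    (((n - k - 1).choose (2*k+1) : ℝ) * (u ^ (2*k+2) / (1+u) ^ (n-k))
      + ((n - k - 1).choose (2*k) : ℝ) * (u ^ (2*k+1) / (1+u) ^ (n-k))) := by
  rw [Wu_even n u, Finset.sum_add_distrib]
  congr 1
  · exact sum_ext (le_trans (ub_le) (by omega)) (fun k hk => by rw [vanE4' hk]; norm_num)
  · exact sum_ext (le_trans (ub_le) (by omega)) (fun k hk => by rw [vanE2' hn hk]; norm_num)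

lemma Wu_rec_even (n : ℕ) (hn : 1 ≤ n) (u : ℝ) (hu : 0 < u) :
    Wu (2*n+2) u = 2*u/(1+u) - Wu (2*n+1) u - u/(1+u) * Wu (2*n) u := by
  have hu1 : (0:ℝ) < 1 + u := by linarith
  rw [hA_even n (n+1) le_rfl, hB_odd n (n+1) le_rfl, hC_even n (n+1) le_rfl hn,
    sub_sub, eq_sub_iff_add_eq, Finset.mul_sum,
    ← Finset.sum_add_distrib, ← Finset.sum_add_distrib]
  trans (∑ k ∈ Finset.range (n+1), 2*u/(1+u)^(n+1) * Tk u n k)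
  · exact Finset.sum_congr rfl (fun k _ => by
      have := perk_even u hu n k hn; linarith)
  · rw [← Finset.mul_sum, key u n (n+1) le_rfl, pow_succ]
    field_simp

/-- telescoping helper for the odd case -/
noncomputable def fk (u : ℝ) (n : ℕ) : ℕ → ℝ
  | 0 => 0
  | (k+1) => ((n - k - 1).choose (2*k+1) : ℝ) * u^(2*k+3) / (1+u)^(n+1-k)

/-- the per-`k` identity, odd case -/
lemma perk_odd (u : ℝ) (hu : 0 < u) (n k : ℕ) :
    ((n+1-k).choose (2*k) : ℝ) * (u^(2*k+1)/(1+u)^(n+2-k))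
      + ((n-k).choose (2*k+1) : ℝ) * (u^(2*k+2)/(1+u)^(n+1-k))
      + (((n-k).choose (2*k+1) : ℝ) * (u^(2*k+2)/(1+u)^(n+1-k))
        + ((n-k).choose (2*k) : ℝ) * (u^(2*k+1)/(1+u)^(n+1-k)))
      + u/(1+u) * (((n-k).choose (2*k) : ℝ) * (u^(2*k+1)/(1+u)^(n+1-k))
        + ((n-k-1).choose (2*k+1) : ℝ) * (u^(2*k+2)/(1+u)^(n-k)))
      = 2*u/(1+u)^(n+2) * Tk u (n+1) k + (fk u n (k+1) - fk u n k) := by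
  have hu1 : (0:ℝ) < 1 + u := by linarith
  rcases Nat.eq_zero_or_pos k with rfl | hk
  · rcases Nat.eq_zero_or_pos n with rfl | hn
    · simp only [Tk, fk]
      norm_num
      field_simp
      ring
    · obtain ⟨m, rfl⟩ : ∃ m, n = m + 1 := ⟨n - 1, by omega⟩
      simp only [Tk, fk]
      rw [show m + 1 + 1 - 0 - 1 = m + 1 by omega, show m + 1 - 0 - 1 = m by omega,
        show m + 1 + 1 - 0 = m + 2 by omega, show m + 1 - 0 = m + 1 by omega,
        show m + 1 + 2 - 0 = m + 3 by omega]
      simp only [Nat.mul_zero, Nat.choose_zero_right, Nat.zero_add,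
        Nat.choose_one_right]
      push_cast
      field_simp
      ring
  · rcases Nat.lt_or_ge k n with hkn | hkn
    · -- 1 ≤ k, k + 1 ≤ n
      obtain ⟨k', rfl⟩ : ∃ k', k = k' + 1 := ⟨k - 1, by omega⟩
      obtain ⟨m, rfl⟩ : ∃ m, n = m + k' + 2 := ⟨n - k' - 2, by omega⟩
      simp only [Tk, fk]
      rw [show m + k' + 2 + 1 - (k' + 1) - 1 = m + 1 by omega,
        show m + k' + 2 - (k' + 1) - 1 = m by omega,
        show m + k' + 2 + 1 - (k' + 1) = m + 2 by omega,
        show m + k' + 2 - (k' + 1) = m + 1 by omega,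
        show m + k' + 2 + 2 - (k' + 1) = m + 3 by omega,
        show m + k' + 2 - k' - 1 = m + 1 by omega,
        show m + k' + 2 + 1 - k' = m + 3 by omega]
      rw [show 2 * (k' + 1) = 2 * k' + 1 + 1 by ring]
      rw [show (m + 2).choose (2 * k' + 1 + 1)
            = (m + 1).choose (2 * k' + 1) + (m + 1).choose (2 * k' + 1 + 1) from
          Nat.choose_succ_succ (m + 1) (2 * k' + 1),
        show (m + 2).choose (2 * k' + 1 + 1 + 1)
            = (m + 1).choose (2 * k' + 1 + 1) + (m + 1).choose (2 * k' + 1 + 1 + 1) from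
          Nat.choose_succ_succ (m + 1) (2 * k' + 1 + 1),
        show (m + 1).choose (2 * k' + 1 + 1 + 1)
            = m.choose (2 * k' + 1 + 1) + m.choose (2 * k' + 1 + 1 + 1) from
          Nat.choose_succ_succ m (2 * k' + 1 + 1)]
      push_cast
      field_simp
      ring
    · -- k ≥ n, k ≥ 1 : everything vanishes
      have e0 : n - k = 0 := by omega
      have hT : Tk u (n+1) k = 0 := by
        rcases Nat.lt_or_ge k (n+1) with h | h
        · have hek : k = n := by omega
          subst hek
          simp only [Tk, show k + 1 - k = 1 by omega, show k + 1 - k - 1 = 0 by omega]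
          simp [Nat.choose_eq_zero_of_lt (by omega : 1 < 2 * k),
            Nat.choose_eq_zero_of_lt (by omega : 1 < 2 * k + 1),
            Nat.choose_eq_zero_of_lt (by omega : 0 < 2 * k + 1)]
        · exact Tk_zero' u h (by omega)
      have hf1 : fk u n (k+1) = 0 := by
        simp [fk, show n - k - 1 = 0 by omega,
          Nat.choose_eq_zero_of_lt (by omega : 0 < 2 * k + 1)]
      have hf0 : fk u n k = 0 := by
        obtain ⟨k', rfl⟩ : ∃ k', k = k' + 1 := ⟨k - 1, by omega⟩
        simp [fk, show n - k' - 1 = 0 by omega,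
          Nat.choose_eq_zero_of_lt (by omega : 0 < 2 * k' + 1)]
      have hc1 : ((n+1-k).choose (2*k) : ℝ) = 0 := by
        rcases Nat.lt_or_ge k (n+1) with h | h
        · rw [show n + 1 - k = 1 by omega]
          simp [Nat.choose_eq_zero_of_lt (by omega : 1 < 2 * k)]
        · rw [show n + 1 - k = 0 by omega]
          simp [Nat.choose_eq_zero_of_lt (by omega : 0 < 2 * k)]
      rw [hT, hf1, hf0, hc1, e0,
        Nat.choose_eq_zero_of_lt (by omega : 0 < 2 * k),
        Nat.choose_eq_zero_of_lt (by omega : 0 < 2 * k + 1)]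
      simp [show n - k - 1 = 0 by omega,
        Nat.choose_eq_zero_of_lt (by omega : 0 < 2 * k + 1)]

lemma Wu_rec_odd (n : ℕ) (u : ℝ) (hu : 0 < u) :
    Wu (2*n+3) u = 2*u/(1+u) - Wu (2*n+2) u - u/(1+u) * Wu (2*n+1) u := by
  have hu1 : (0:ℝ) < 1 + u := by linarith
  have hW3 : Wu (2*n+3) u = ∑ k ∈ Finset.range (n+2),
      (((n+1-k).choose (2*k) : ℝ) * (u^(2*k+1)/(1+u)^(n+2-k))
        + ((n-k).choose (2*k+1) : ℝ) * (u^(2*k+2)/(1+u)^(n+1-k))) := by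
    have e := hB_odd (n+1) (n+2) le_rfl u
    rw [show 2*(n+1)+1 = 2*n+3 by ring] at e
    simp only [show ∀ k, n+1-k-1 = n-k from fun k => by omega,
      show n+1+1 = n+2 from rfl, show ∀ k, n+1+1-k = n+2-k from fun k => rfl] at e
    exact e
  rw [hW3, hA_even n (n+2) (by omega), hB_odd n (n+2) (by omega),
    sub_sub, eq_sub_iff_add_eq, Finset.mul_sum,
    ← Finset.sum_add_distrib, ← Finset.sum_add_distrib]
  trans (∑ k ∈ Finset.range (n+2),
      (2*u/(1+u)^(n+2) * Tk u (n+1) k + (fk u n (k+1) - fk u n k)))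
  · exact Finset.sum_congr rfl (fun k _ => by
      have := perk_odd u hu n k; linarith)
  · rw [Finset.sum_add_distrib, ← Finset.mul_sum, key u (n+1) (n+2) le_rfl,
      Finset.sum_range_sub (fk u n) (n+2)]
    have hfN : fk u n (n+2) = 0 := by
      simp [fk, show n - (n+1) - 1 = 0 by omega,
        Nat.choose_eq_zero_of_lt (by omega : 0 < 2 * (n+1) + 1)]
    rw [hfN, show fk u n 0 = 0 from rfl, pow_succ]
    field_simp
    ring

lemma Wu_rec (t : ℕ) (ht : 1 ≤ t) (u : ℝ) (hu : 0 < u) :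
    Wu (t+2) u = 2*u/(1+u) - Wu (t+1) u - u/(1+u) * Wu t u := by
  rcases Nat.even_or_odd t with ⟨n, hn⟩ | ⟨n, hn⟩
  · subst hn
    have hn1 : 1 ≤ n := by omega
    have := Wu_rec_even n hn1 u hu
    rw [show n + n + 2 = 2*n+2 by ring, show n + n + 1 = 2*n+1 by ring,
      show n + n = 2*n by ring]
    exact this
  · subst hn
    have := Wu_rec_odd n u hu
    rw [show 2*n + 1 + 2 = 2*n+3 by ring, show 2*n + 1 + 1 = 2*n+2 by ring]
    exact this

lemma seq_bound {w : ℝ} (hw0 : 0 ≤ w) (hw1 : w ≤ 1) {a : ℕ → ℝ}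
    (hrec : ∀ t, a (t+2) = -a (t+1) - w * a t) (t : ℕ) :
    |a t| ≤ max |a 0| (max |a 1| |a 2|) := by
  induction t using Nat.strong_induction_on with
  | _ t ih =>
    match t with
    | 0 => exact le_max_left _ _
    | 1 => exact le_trans (le_max_left _ _) (le_max_right _ _)
    | 2 => exact le_trans (le_max_right _ _) (le_max_right _ _)
    | (s+3) =>
      have h3 : a (s+3) = (1-w) * a (s+1) + w * a s := by
        have h1 := hrec (s+1)
        have h2 := hrec s
        rw [show s+1+2 = s+3 from rfl, show s+1+1 = s+2 from rfl] at h1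
        rw [h1, h2]; ring
      have b1 := ih (s+1) (by omega)
      have b0 := ih s (by omega)
      set M := max |a 0| (max |a 1| |a 2|) with hM
      calc |a (s+3)| = |(1-w) * a (s+1) + w * a s| := by rw [h3]
        _ ≤ |(1-w) * a (s+1)| + |w * a s| := abs_add_le _ _
        _ = (1-w) * |a (s+1)| + w * |a s| := by
            rw [abs_mul, abs_mul, abs_of_nonneg (by linarith), abs_of_nonneg hw0]
        _ ≤ (1-w) * M + w * M := by
            have := abs_nonneg (a (s+1))
            have := abs_nonneg (a s)
            nlinarith
        _ = M := by ring

lemma seq_tendsto {w : ℝ} (hw0 : 0 < w) (hw2 : w < 1/2) (hw4 : w ≠ 1/4) {a : ℕ → ℝ}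
    (hrec : ∀ t, a (t+2) = -a (t+1) - w * a t) :
    Filter.Tendsto a Filter.atTop (nhds 0) := by
  set δ : ℝ := 1 - 4*w with hδ
  have hδ0 : δ ≠ 0 := by simp only [hδ]; intro h; apply hw4; linarith
  have hδ1 : δ < 1 := by simp only [hδ]; linarith
  have hδm : -1 < δ := by simp only [hδ]; linarith
  -- a complex square root of δ
  obtain ⟨s, hs2, hs0, hsn⟩ : ∃ s : ℂ, s^2 = (δ:ℂ) ∧ s ≠ 0 ∧ ‖s‖ < 1 := by
    rcases le_or_gt 0 δ with h | h
    · have hδpos : 0 < δ := lt_of_le_of_ne h (Ne.symm hδ0)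
      refine ⟨(Real.sqrt δ : ℂ), ?_, ?_, ?_⟩
      · rw [← Complex.ofReal_pow, Real.sq_sqrt h]
      · simp only [ne_eq, Complex.ofReal_eq_zero]
        exact ne_of_gt (Real.sqrt_pos.mpr hδpos)
      · rw [Complex.norm_real, Real.norm_eq_abs, abs_of_nonneg (Real.sqrt_nonneg _)]
        nlinarith [Real.sq_sqrt h, Real.sqrt_nonneg δ]
    · refine ⟨(Real.sqrt (-δ) : ℂ) * Complex.I, ?_, ?_, ?_⟩
      · rw [mul_pow, Complex.I_sq, ← Complex.ofReal_pow, Real.sq_sqrt (by linarith : (0:ℝ) ≤ -δ)]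
        push_cast
        ring
      · simp only [ne_eq, mul_eq_zero, Complex.I_ne_zero, or_false,
          Complex.ofReal_eq_zero]
        exact ne_of_gt (Real.sqrt_pos.mpr (by linarith))
      · rw [norm_mul, Complex.norm_I, mul_one, Complex.norm_real, Real.norm_eq_abs,
          abs_of_nonneg (Real.sqrt_nonneg _)]
        nlinarith [Real.sq_sqrt (by linarith : (0:ℝ) ≤ -δ), Real.sqrt_nonneg (-δ)]
  have hs2' : s^2 = 1 - 4*(w:ℂ) := by
    rw [hs2, hδ]; push_cast; ring
  set r₁ : ℂ := (-1 + s)/2 with hr₁def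
  set r₂ : ℂ := (-1 - s)/2 with hr₂def
  have hr₁ : r₁^2 = -r₁ - (w:ℂ) := by
    rw [hr₁def]; linear_combination hs2'/4
  have hr₂ : r₂^2 = -r₂ - (w:ℂ) := by
    rw [hr₂def]; linear_combination hs2'/4
  have hr12 : r₁ - r₂ ≠ 0 := by
    have e : r₁ - r₂ = s := by rw [hr₁def, hr₂def]; ring
    rw [e]; exact hs0
  have hn1 : ‖r₁‖ < 1 := by
    have h1 : ‖r₁‖ ≤ (‖(-1:ℂ)‖ + ‖s‖)/2 := by
      rw [hr₁def, norm_div]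
      have := norm_add_le (-1:ℂ) s
      have h2 : ‖(2:ℂ)‖ = 2 := by norm_num
      rw [h2]
      linarith
    simp only [norm_neg, norm_one] at h1
    linarith
  have hn2 : ‖r₂‖ < 1 := by
    have h1 : ‖r₂‖ ≤ (‖(-1:ℂ)‖ + ‖s‖)/2 := by
      rw [hr₂def, norm_div]
      have := norm_sub_le (-1:ℂ) s
      have h2 : ‖(2:ℂ)‖ = 2 := by norm_num
      rw [h2]
      linarith
    simp only [norm_neg, norm_one] at h1
    linarith
  obtain ⟨A, B, hab0, hab1⟩ : ∃ A B : ℂ, (a 0 : ℂ) = A + B ∧ (a 1 : ℂ) = A * r₁ + B * r₂ := by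
    refine ⟨((a 1 : ℂ) - r₂ * (a 0 : ℂ))/(r₁ - r₂), (r₁ * (a 0 : ℂ) - (a 1 : ℂ))/(r₁ - r₂),
      ?_, ?_⟩
    · field_simp
      ring
    · field_simp
      ring
  have hform : ∀ t, (a t : ℂ) = A * r₁^t + B * r₂^t := by
    intro t
    induction t using Nat.twoStepInduction with
    | zero => simpa using hab0
    | one => simpa using hab1
    | more n ih ih1 =>
      have ecast : (a (n+2) : ℂ) = -(a (n+1) : ℂ) - (w:ℂ) * (a n : ℂ) := by
        rw [hrec n]; push_cast; ring
      rw [ecast, ih, ih1]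
      linear_combination (-(A * r₁^n)) * hr₁ + (-(B * r₂^n)) * hr₂
  have hc : Filter.Tendsto (fun t : ℕ => A * r₁^t + B * r₂^t) Filter.atTop (nhds 0) := by
    have t1 := tendsto_pow_atTop_nhds_zero_of_norm_lt_one hn1
    have t2 := tendsto_pow_atTop_nhds_zero_of_norm_lt_one hn2
    have := (t1.const_mul A).add (t2.const_mul B)
    simpa using this
  have hoc : Filter.Tendsto (fun t : ℕ => ((a t : ℝ) : ℂ)) Filter.atTop (nhds 0) := by
    simp only [hform]
    exact hc
  rw [← Complex.ofReal_zero] at hoc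
  exact Filter.tendsto_ofReal_iff.mp hoc

open MeasureTheory Real Filter

noncomputable def Wx (t : ℕ) (x : ℝ) : ℝ := Wu t (Real.exp (-2 * x))

lemma cont_term (a c : ℕ) :
    Continuous (fun x : ℝ => Real.exp (-(a : ℝ) * x) / (1 + Real.exp (-2 * x)) ^ c) := by
  apply Continuous.div
  · exact Real.continuous_exp.comp (continuous_const.mul continuous_id)
  · exact (continuous_const.add (Real.continuous_exp.comp
      (continuous_const.mul continuous_id))).pow c
  · intro x
    positivity

lemma integrableOn_term (a c : ℕ) (ha : 1 ≤ a) :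
    IntegrableOn (fun x : ℝ => Real.exp (-(a : ℝ) * x) / (1 + Real.exp (-2 * x)) ^ c)
      (Set.Ioi (0:ℝ)) := by
  apply Integrable.mono' (exp_neg_integrableOn_Ioi 0 (by norm_num : (0:ℝ) < 1))
  · exact (cont_term a c).aestronglyMeasurable
  · filter_upwards [ae_restrict_mem measurableSet_Ioi] with x hx
    have hx0 : (0:ℝ) < x := hx
    rw [Real.norm_eq_abs, abs_of_nonneg (by positivity)]
    have h1 : Real.exp (-(a : ℝ) * x) / (1 + Real.exp (-2 * x)) ^ c
        ≤ Real.exp (-(a : ℝ) * x) := by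
      apply div_le_self (le_of_lt (Real.exp_pos _))
      apply one_le_pow₀
      nlinarith [Real.exp_pos (-2*x)]
    have h2 : Real.exp (-(a:ℝ) * x) ≤ Real.exp (-1 * x) := by
      apply Real.exp_le_exp.mpr
      have : (1:ℝ) ≤ (a:ℝ) := by exact_mod_cast ha
      nlinarith
    linarith

lemma pow_exp_eq (m : ℕ) (x : ℝ) :
    (Real.exp (-2 * x)) ^ m = Real.exp (-((2*m : ℕ) : ℝ) * x) := by
  rw [← Real.exp_nat_mul]
  congr 1
  push_cast
  ring

lemma betaStar_aux (t : ℕ) :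
    (if Even t then
      (∑ k ∈ Finset.range (ub t 4),
          (Nat.choose ((t - 2 * k - 2) / 2) (2 * k + 1) : ℝ) * Ical (4 * k + 4) ((t - 2 * k) / 2))
        + ∑ k ∈ Finset.range (ub t 2),
          (Nat.choose ((t - 2 * k - 2) / 2) (2 * k) : ℝ) * Ical (4 * k + 2) ((t - 2 * k) / 2)
    else
      (∑ k ∈ Finset.range (ub t 1),
          (Nat.choose ((t - 2 * k - 1) / 2) (2 * k) : ℝ) * Ical (4 * k + 2) ((t - 2 * k + 1) / 2))
        + ∑ k ∈ Finset.range (ub t 5),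
          (Nat.choose ((t - 2 * k - 3) / 2) (2 * k + 1) : ℝ) * Ical (4 * k + 4) ((t - 2 * k - 1) / 2))
    = ∫ x in Set.Ioi (0:ℝ), Wx t x := by
  have hterm : ∀ (C : ℝ) (a c : ℕ), 1 ≤ a → C * Ical a c
      = ∫ x in Set.Ioi (0:ℝ), C * (Real.exp (-(a : ℝ) * x) / (1 + Real.exp (-2 * x)) ^ c) := by
    intro C a c ha
    rw [Ical, ← integral_const_mul]
  by_cases h : Even t
  · rw [if_pos h]
    have e1 : ∀ k : ℕ, ((4 * k + 4 : ℕ) : ℝ) = ((2 * (2*k+2) : ℕ) : ℝ) := by intro k; push_cast; ring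
    have hW : ∀ x : ℝ, Wx t x
        = (∑ k ∈ Finset.range (ub t 4), (Nat.choose ((t - 2 * k - 2) / 2) (2 * k + 1) : ℝ)
            * (Real.exp (-((4 * k + 4 : ℕ)) * x) / (1 + Real.exp (-2 * x)) ^ ((t - 2 * k) / 2)))
          + ∑ k ∈ Finset.range (ub t 2), (Nat.choose ((t - 2 * k - 2) / 2) (2 * k) : ℝ)
            * (Real.exp (-((4 * k + 2 : ℕ)) * x) / (1 + Real.exp (-2 * x)) ^ ((t - 2 * k) / 2)) := by
      intro x
      rw [Wx, Wu, if_pos h]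
      congr 1 <;> refine Finset.sum_congr rfl (fun k _ => ?_)
      · rw [pow_exp_eq, show ((2*(2*k+2):ℕ):ℝ) = ((4*k+4:ℕ):ℝ) by push_cast; ring]
      · rw [pow_exp_eq, show ((2*(2*k+1):ℕ):ℝ) = ((4*k+2:ℕ):ℝ) by push_cast; ring]
    rw [show (fun x => Wx t x) = _ from funext hW]
    rw [integral_add (integrable_finset_sum _ (fun k _ =>
        (integrableOn_term (4*k+4) ((t-2*k)/2) (by omega)).const_mul _))
      (integrable_finset_sum _ (fun k _ =>
        (integrableOn_term (4*k+2) ((t-2*k)/2) (by omega)).const_mul _)),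
      integral_finset_sum _ (fun k _ =>
        (integrableOn_term (4*k+4) ((t-2*k)/2) (by omega)).const_mul _),
      integral_finset_sum _ (fun k _ =>
        (integrableOn_term (4*k+2) ((t-2*k)/2) (by omega)).const_mul _)]
    congr 1 <;> exact Finset.sum_congr rfl (fun k _ => hterm _ _ _ (by omega))
  · rw [if_neg h]
    have hW : ∀ x : ℝ, Wx t x
        = (∑ k ∈ Finset.range (ub t 1), (Nat.choose ((t - 2 * k - 1) / 2) (2 * k) : ℝ)
            * (Real.exp (-((4 * k + 2 : ℕ)) * x) / (1 + Real.exp (-2 * x)) ^ ((t - 2 * k + 1) / 2)))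
          + ∑ k ∈ Finset.range (ub t 5), (Nat.choose ((t - 2 * k - 3) / 2) (2 * k + 1) : ℝ)
            * (Real.exp (-((4 * k + 4 : ℕ)) * x) / (1 + Real.exp (-2 * x)) ^ ((t - 2 * k - 1) / 2)) := by
      intro x
      rw [Wx, Wu, if_neg h]
      congr 1 <;> refine Finset.sum_congr rfl (fun k _ => ?_)
      · rw [pow_exp_eq, show ((2*(2*k+1):ℕ):ℝ) = ((4*k+2:ℕ):ℝ) by push_cast; ring]
      · rw [pow_exp_eq, show ((2*(2*k+2):ℕ):ℝ) = ((4*k+4:ℕ):ℝ) by push_cast; ring]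
    rw [show (fun x => Wx t x) = _ from funext hW]
    rw [integral_add (integrable_finset_sum _ (fun k _ =>
        (integrableOn_term (4*k+2) ((t-2*k+1)/2) (by omega)).const_mul _))
      (integrable_finset_sum _ (fun k _ =>
        (integrableOn_term (4*k+4) ((t-2*k-1)/2) (by omega)).const_mul _)),
      integral_finset_sum _ (fun k _ =>
        (integrableOn_term (4*k+2) ((t-2*k+1)/2) (by omega)).const_mul _),
      integral_finset_sum _ (fun k _ =>
        (integrableOn_term (4*k+4) ((t-2*k-1)/2) (by omega)).const_mul _)]
    congr 1 <;> exact Finset.sum_congr rfl (fun k _ => hterm _ _ _ (by omega))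

noncomputable def Gs (x : ℝ) : ℝ := 2 * Real.exp (-2*x) / (2 + 3 * Real.exp (-2*x))

lemma cont_Wx (t : ℕ) : Continuous (Wx t) := by
  have hbase : Continuous (fun x : ℝ => Real.exp (-2*x)) :=
    Real.continuous_exp.comp (continuous_const.mul continuous_id)
  have hterm : ∀ (C : ℝ) (p q : ℕ),
      Continuous (fun x : ℝ => C * ((Real.exp (-2*x))^p / (1+Real.exp (-2*x))^q)) := by
    intro C p q
    apply Continuous.mul continuous_const
    apply Continuous.div (hbase.pow p) ((continuous_const.add hbase).pow q)
    intro x; exact pow_ne_zero _ (by positivity : (0:ℝ) < 1 + Real.exp (-2*x)).ne'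
  unfold Wx Wu
  by_cases h : Even t
  · simp only [if_pos h]
    exact (continuous_finset_sum _ (fun k _ => hterm _ _ _)).add
      (continuous_finset_sum _ (fun k _ => hterm _ _ _))
  · simp only [if_neg h]
    exact (continuous_finset_sum _ (fun k _ => hterm _ _ _)).add
      (continuous_finset_sum _ (fun k _ => hterm _ _ _))

lemma Wu_one (u : ℝ) : Wu 1 u = u / (1+u) := by
  rw [Wu, if_neg (by decide), show ub 1 1 = 1 from rfl, show ub 1 5 = 0 from rfl]
  norm_num

lemma Wu_two (u : ℝ) : Wu 2 u = u / (1+u) := by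
  rw [Wu, if_pos (by decide), show ub 2 4 = 0 from rfl, show ub 2 2 = 1 from rfl]
  norm_num

lemma Wu_three (u : ℝ) : Wu 3 u = u / (1+u)^2 := by
  rw [Wu, if_neg (by decide), show ub 3 1 = 1 from rfl, show ub 3 5 = 0 from rfl]
  norm_num

lemma integral_Gs : ∫ x in Set.Ioi (0:ℝ), Gs x = (1/3) * Real.log (5/2) := by
  have hpos : ∀ x : ℝ, (0:ℝ) < 2 + 3*Real.exp (-2*x) := fun x => by positivity
  have hbase : Continuous (fun x : ℝ => Real.exp (-2*x)) :=
    Real.continuous_exp.comp (continuous_const.mul continuous_id)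
  have hcontf : Continuous (fun x : ℝ => -(1/3) * Real.log (2+3*Real.exp (-2*x))) := by
    apply Continuous.mul continuous_const
    exact (continuous_const.add (continuous_const.mul hbase)).log (fun x => ne_of_gt (hpos x))
  have hderiv : ∀ x ∈ Set.Ioi (0:ℝ),
      HasDerivAt (fun x => -(1/3) * Real.log (2+3*Real.exp (-2*x))) (Gs x) x := by
    intro x _
    have h1 : HasDerivAt (fun x : ℝ => -2*x) (-2) x := by
      simpa using (hasDerivAt_id x).const_mul (-2)
    have h2 : HasDerivAt (fun x : ℝ => Real.exp (-2*x)) (Real.exp (-2*x) * (-2)) x :=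
      (Real.hasDerivAt_exp _).comp x h1
    have h3 : HasDerivAt (fun x : ℝ => 2+3*Real.exp (-2*x)) (3*(Real.exp (-2*x)*(-2))) x :=
      (h2.const_mul 3).const_add 2
    have h4 := (Real.hasDerivAt_log (ne_of_gt (hpos x))).comp x h3
    have h5 := h4.const_mul (-(1/3))
    refine h5.congr_deriv ?_
    rw [Gs]
    field_simp
  have hint : IntegrableOn Gs (Set.Ioi (0:ℝ)) := by
    apply Integrable.mono' (exp_neg_integrableOn_Ioi 0 (by norm_num : (0:ℝ) < 2))
    · exact (Continuous.div (continuous_const.mul hbase) (continuous_const.add (continuous_const.mul hbase))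
        (fun x => ne_of_gt (hpos x))).aestronglyMeasurable
    · filter_upwards [] with x
      rw [Real.norm_eq_abs, Gs, abs_of_nonneg (by positivity)]
      rw [div_le_iff₀ (hpos x)]
      nlinarith [Real.exp_pos (-2*x), sq_nonneg (Real.exp (-2*x))]
  have htends : Tendsto (fun x : ℝ => -(1/3) * Real.log (2+3*Real.exp (-2*x)))
      atTop (nhds (-(1/3) * Real.log 2)) := by
    have h0 : Tendsto (fun x : ℝ => -2*x) atTop atBot := by
      have h2 : Tendsto (fun x : ℝ => 2*x) atTop atTop :=
        Filter.Tendsto.const_mul_atTop two_pos tendsto_id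
      simpa [neg_mul] using tendsto_neg_atBot_iff.mpr h2
    have hexp : Tendsto (fun x : ℝ => Real.exp (-2*x)) atTop (nhds 0) :=
      Real.tendsto_exp_atBot.comp h0
    have hinner : Tendsto (fun x : ℝ => 2 + 3*Real.exp (-2*x)) atTop (nhds 2) := by
      have := tendsto_const_nhds (x := (2:ℝ)) (f := atTop (α := ℝ)) |>.add (hexp.const_mul 3)
      simpa using this
    have hlog : Tendsto (fun x : ℝ => Real.log (2 + 3*Real.exp (-2*x))) atTop
        (nhds (Real.log 2)) :=
      ((Real.continuousAt_log (by norm_num)).tendsto.comp hinner)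
    exact hlog.const_mul _
  have := integral_Ioi_of_hasDerivAt_of_tendsto
    (hcontf.continuousWithinAt) hderiv hint htends
  rw [this]
  norm_num
  rw [Real.log_div (by norm_num) (by norm_num)]
  ring

lemma D_rec (x : ℝ) (hx : 0 < x) : ∀ s : ℕ,
    (fun s => Wx (s+1) x - Gs x) (s+2)
      = -((fun s => Wx (s+1) x - Gs x) (s+1))
        - (Real.exp (-2*x)/(1+Real.exp (-2*x))) * ((fun s => Wx (s+1) x - Gs x) s) := by
  intro s
  have hu : 0 < Real.exp (-2*x) := Real.exp_pos _
  have h := Wu_rec (s+1) (by omega) (Real.exp (-2*x)) hu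
  simp only [Wx, Gs]
  rw [show s+2+1 = s+1+2 by ring, show s+1+1 = s+1+1 from rfl, h]
  have h1u : (0:ℝ) < 1 + Real.exp (-2*x) := by linarith
  have h23 : (0:ℝ) < 2 + 3*Real.exp (-2*x) := by linarith
  field_simp
  ring

lemma D_bound (x : ℝ) (hx : 0 < x) (t : ℕ) : ‖Wx (t+1) x‖ ≤ 3 * Real.exp (-2*x) := by
  have hu : 0 < Real.exp (-2*x) := Real.exp_pos _
  set u := Real.exp (-2*x) with hu'
  have h1u : (0:ℝ) < 1 + u := by linarith
  have h23 : (0:ℝ) < 2 + 3*u := by linarith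
  have hw0 : 0 ≤ u/(1+u) := by positivity
  have hw1 : u/(1+u) ≤ 1 := by rw [div_le_one h1u]; linarith
  have hb := seq_bound hw0 hw1 (a := fun s => Wx (s+1) x - Gs x) (D_rec x hx) t
  have hG0 : 0 ≤ Gs x := by rw [Gs, ← hu']; positivity
  have hG1 : Gs x ≤ u := by
    rw [Gs, ← hu', div_le_iff₀ h23]; nlinarith
  have habs : ∀ v : ℝ, 0 ≤ v → v ≤ u → |v - Gs x| ≤ 2*u := fun v h0 h1 =>
    abs_le.mpr ⟨by linarith, by linarith⟩
  have b0 : |Wx (0+1) x - Gs x| ≤ 2*u := by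
    rw [show (0+1) = 1 from rfl, Wx, Wu_one, ← hu']
    exact habs _ (by positivity) (by rw [div_le_iff₀ h1u]; nlinarith)
  have b1 : |Wx (1+1) x - Gs x| ≤ 2*u := by
    rw [show (1+1) = 2 from rfl, Wx, Wu_two, ← hu']
    exact habs _ (by positivity) (by rw [div_le_iff₀ h1u]; nlinarith)
  have b2 : |Wx (2+1) x - Gs x| ≤ 2*u := by
    rw [show (2+1) = 3 from rfl, Wx, Wu_three, ← hu']
    refine habs _ (by positivity) ?_
    rw [div_le_iff₀ (by positivity)]
    nlinarith [mul_pos hu hu, sq_nonneg u, mul_pos (mul_pos hu hu) hu]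
  have hmax : max |Wx (0+1) x - Gs x| (max |Wx (1+1) x - Gs x| |Wx (2+1) x - Gs x|) ≤ 2*u :=
    max_le b0 (max_le b1 b2)
  have hfin : |Wx (t+1) x - Gs x| ≤ 2*u := le_trans hb hmax
  rw [Real.norm_eq_abs]
  have := abs_sub_abs_le_abs_sub (Wx (t+1) x) (Gs x)
  have hGabs : |Gs x| = Gs x := abs_of_nonneg hG0
  calc |Wx (t+1) x| = |(Wx (t+1) x - Gs x) + Gs x| := by ring_nf
    _ ≤ |Wx (t+1) x - Gs x| + |Gs x| := abs_add_le _ _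
    _ ≤ 2*u + u := by rw [hGabs]; linarith
    _ = 3 * u := by ring

lemma D_lim (x : ℝ) (hx : 0 < x) (hne : x ≠ Real.log 3 / 2) :
    Tendsto (fun t : ℕ => Wx (t+1) x) atTop (nhds (Gs x)) := by
  have hu : 0 < Real.exp (-2*x) := Real.exp_pos _
  set u := Real.exp (-2*x) with hu'
  have hu1 : u < 1 := by
    rw [hu', Real.exp_lt_one_iff]
    linarith
  have h1u : (0:ℝ) < 1 + u := by linarith
  have hne3 : u ≠ 1/3 := by
    intro hc
    apply hne
    have h1 : Real.exp (-2*x) = Real.exp (Real.log (1/3)) := by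
      rw [← hu', hc, Real.exp_log (by norm_num)]
    have h2 : -2*x = Real.log (1/3) := Real.exp_eq_exp.mp h1
    rw [show (1:ℝ)/3 = 3⁻¹ by norm_num, Real.log_inv] at h2
    linarith
  have hw0 : 0 < u/(1+u) := by positivity
  have hw2 : u/(1+u) < 1/2 := by rw [div_lt_iff₀ h1u]; linarith
  have hw4 : u/(1+u) ≠ 1/4 := by
    intro hc
    apply hne3
    field_simp at hc
    linarith
  have hrec : ∀ s : ℕ, Wx (s+2+1) x - Gs x
      = -(Wx (s+1+1) x - Gs x) - (u/(1+u)) * (Wx (s+1) x - Gs x) := by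
    rw [hu']
    exact fun s => D_rec x hx s
  have h := seq_tendsto hw0 hw2 hw4 (a := fun s => Wx (s+1) x - Gs x) hrec
  have h2 := h.add_const (Gs x)
  simp only [sub_add_cancel, zero_add] at h2
  exact h2

lemma Wx_lim : Tendsto (fun t : ℕ => ∫ x in Set.Ioi (0:ℝ), Wx (t+1) x) atTop
    (nhds ((1/3) * Real.log (5/2))) := by
  rw [← integral_Gs]
  apply tendsto_integral_of_dominated_convergence (fun x => 3 * Real.exp (-2*x))
  · exact fun n => (cont_Wx (n+1)).aestronglyMeasurable
  · exact (exp_neg_integrableOn_Ioi 0 (by norm_num : (0:ℝ) < 2)).const_mul 3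
  · intro n
    filter_upwards [ae_restrict_mem measurableSet_Ioi] with x hx
    exact D_bound x hx n
  · have hsing : ∀ᵐ (x : ℝ) ∂(volume.restrict (Set.Ioi 0)), x ≠ Real.log 3 / 2 := by
      refine MeasureTheory.ae_iff.mpr ?_
      have he : {x : ℝ | ¬ x ≠ Real.log 3 / 2} = {Real.log 3 / 2} := by ext y; simp
      rw [he, Measure.restrict_apply (measurableSet_singleton _)]
      exact measure_mono_null Set.inter_subset_left (Real.volume_singleton)
    filter_upwards [ae_restrict_mem measurableSet_Ioi, hsing] with x hx hne
    exact D_lim x hx hne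


open Filter in
/-- With `γ*_t = 1/(2β*_t)`, one has `lim_{t→∞} γ*_t = 3/(2 ln(5/2))`; equivalently,
`lim_{t→∞} β*_t = (1/3) ln(5/2)`. -/
theorem gammaStar_tendsto :
    Tendsto (fun t : ℕ => 1 / (2 * betaStar t)) atTop (nhds (3 / (2 * Real.log (5 / 2)))) ∧
    Tendsto (fun t : ℕ => betaStar t) atTop (nhds ((1 / 3) * Real.log (5 / 2))) := by
  classical
  have hbeta1 : Filter.Tendsto (fun t : ℕ => betaStar (t+1)) Filter.atTop
      (nhds ((1/3) * Real.log (5/2))) := by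
    have he : (fun t : ℕ => betaStar (t+1))
        = fun t : ℕ => ∫ x in Set.Ioi (0:ℝ), Wx (t+1) x := by
      funext t
      rw [betaStar]
      exact betaStar_aux (t+1)
    rw [he]
    exact Wx_lim
  have hbeta : Filter.Tendsto (fun t : ℕ => betaStar t) Filter.atTop
      (nhds ((1/3) * Real.log (5/2))) :=
    (Filter.tendsto_add_atTop_iff_nat 1).mp hbeta1
  refine ⟨?_, hbeta⟩
  have hL : (0:ℝ) < Real.log (5/2) := Real.log_pos (by norm_num)
  have h2 : Filter.Tendsto (fun t : ℕ => 2 * betaStar t) Filter.atTop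
      (nhds (2 * ((1/3) * Real.log (5/2)))) := hbeta.const_mul 2
  have h3 := Filter.Tendsto.div (tendsto_const_nhds (x := (1:ℝ))) h2 (by positivity)
  have he2 : (1:ℝ) / (2 * ((1/3) * Real.log (5/2))) = 3 / (2 * Real.log (5/2)) := by
    field_simp
  rw [← he2]
  exact h3
end

section
/- Fix positive integers a, b, c and a constant Δ > 0. As z → 0 within the cone R_Δ := {x + iy : x > 0, |y| ≤ Δx}, one has z · Σ_{m≥0} e^{−amz} / ∏_{i=0}^{c−1}(1 + e^{−(2m+b+2i)z}) → ∫_0^∞ e^{−ax}/(1+e^{−2x})^c dx. Equivalently, setting q = e^{−z} and F_{a,b,c}(q) := Σ_{m≥0} q^{am}/(−q^{2m+b}; q²)_c, one has F_{a,b,c}(e^{−z}) ~ (1/z) ∫_0^∞ e^{−ax}/(1+e^{−2x})^c dx. -/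
open Complex Filter MeasureTheory Set Topology Metric
open scoped ENNReal

noncomputable section FabcAuxSection

namespace FabcAux

/-- The uniform lower bound for `‖1 + e^{-w}‖` on the cone `|Im w| ≤ T Re w`. -/
def del (T : ℝ) : ℝ := 1 - Real.exp (-(Real.pi / (2 * T)))

lemma del_pos {T : ℝ} (hT : 0 < T) : 0 < del T := by
  have h : Real.exp (-(Real.pi / (2 * T))) < 1 := by
    rw [Real.exp_lt_one_iff]
    have := Real.pi_pos
    rw [neg_lt_zero]
    positivity
  simp only [del]; linarith

lemma del_le_one (T : ℝ) : del T ≤ 1 := by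
  have := Real.exp_pos (-(Real.pi / (2 * T)))
  simp only [del]; linarith

lemma norm_one_add_exp_neg_ge {T : ℝ} (hT : 0 < T) {w : ℂ} (h1 : 0 ≤ w.re)
    (h2 : |w.im| ≤ T * w.re) : del T ≤ ‖1 + Complex.exp (-w)‖ := by
  rcases le_or_gt |w.im| (Real.pi / 2) with hle | hgt
  · have hre : 0 ≤ (Complex.exp (-w)).re := by
      rw [Complex.exp_re]
      refine mul_nonneg (Real.exp_pos _).le ?_
      refine Real.cos_nonneg_of_mem_Icc ?_
      have hh := abs_le.mp hle
      rw [Complex.neg_im, Set.mem_Icc]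
      constructor <;> linarith [hh.1, hh.2]
    calc del T ≤ 1 := del_le_one T
    _ ≤ (1 + Complex.exp (-w)).re := by
        rw [Complex.add_re, Complex.one_re]; linarith
    _ ≤ ‖1 + Complex.exp (-w)‖ := by
        exact Complex.re_le_norm _
  · have hw : Real.pi / (2 * T) ≤ w.re := by
      have h3 : Real.pi / 2 < T * w.re := lt_of_lt_of_le hgt h2
      rw [div_le_iff₀ (by positivity)]
      calc Real.pi = 2 * (Real.pi / 2) := by ring
      _ ≤ 2 * (T * w.re) := by linarith
      _ = w.re * (2 * T) := by ring
    have hnorm : ‖Complex.exp (-w)‖ ≤ Real.exp (-(Real.pi / (2 * T))) := by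
      rw [Complex.norm_exp, Complex.neg_re]
      exact Real.exp_le_exp.2 (by linarith)
    have htri : (1 : ℝ) ≤ ‖1 + Complex.exp (-w)‖ + ‖Complex.exp (-w)‖ := by
      calc (1:ℝ) = ‖(1 + Complex.exp (-w)) + (-Complex.exp (-w))‖ := by norm_num
      _ ≤ ‖1 + Complex.exp (-w)‖ + ‖-Complex.exp (-w)‖ := norm_add_le _ _
      _ = ‖1 + Complex.exp (-w)‖ + ‖Complex.exp (-w)‖ := by rw [norm_neg]
    simp only [del]; linarith

lemma one_add_exp_cone {Δ : ℝ} (hΔ : 0 < Δ) {z : ℂ} (hz : 0 < z.re ∧ |z.im| ≤ Δ * z.re)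
    (k : ℕ) : del Δ ≤ ‖1 + Complex.exp (-((k : ℂ) * z))‖ := by
  have hre : ((k : ℂ) * z).re = (k:ℝ) * z.re := by
    simp [Complex.mul_re]
  have him : ((k : ℂ) * z).im = (k:ℝ) * z.im := by
    simp [Complex.mul_im]
  refine norm_one_add_exp_neg_ge hΔ ?_ ?_
  · rw [hre]; exact mul_nonneg (Nat.cast_nonneg k) hz.1.le
  · rw [hre, him, abs_mul, Nat.abs_cast]
    calc (k:ℝ) * |z.im| ≤ (k:ℝ) * (Δ * z.re) :=
          mul_le_mul_of_nonneg_left hz.2 (Nat.cast_nonneg k)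
    _ = Δ * ((k:ℝ) * z.re) := by ring


def fz (a b c : ℕ) (z : ℂ) (m : ℕ) : ℂ :=
  Complex.exp (-((a * m : ℕ) : ℂ) * z) /
    ∏ i ∈ Finset.range c, (1 + Complex.exp (-(((2 * m + b + 2 * i : ℕ)) : ℂ) * z))

def gg (a c : ℕ) (w : ℂ) : ℂ :=
  Complex.exp (-(a : ℂ) * w) / (1 + Complex.exp (-(2 : ℂ) * w)) ^ c

def dg (a c : ℕ) (w : ℂ) : ℂ :=
  -(a:ℂ) * gg a c w +
    2 * c * Complex.exp (-((a:ℂ) + 2) * w) / (1 + Complex.exp (-(2:ℂ) * w)) ^ (c + 1)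


lemma norm_prod_ge {Δ : ℝ} (hΔ : 0 < Δ) {z : ℂ} (hz : 0 < z.re ∧ |z.im| ≤ Δ * z.re)
    (b c : ℕ) (m : ℕ) :
    del Δ ^ c ≤ ‖∏ i ∈ Finset.range c, (1 + Complex.exp (-(((2 * m + b + 2 * i : ℕ)) : ℂ) * z))‖ := by
  rw [norm_prod]
  calc del Δ ^ c = ∏ _i ∈ Finset.range c, del Δ := by rw [Finset.prod_const, Finset.card_range]
  _ ≤ _ := by
      refine Finset.prod_le_prod (fun i _ => (del_pos hΔ).le) (fun i _ => ?_)
      have := one_add_exp_cone hΔ hz (2 * m + b + 2 * i)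
      rwa [← neg_mul] at this

lemma norm_fz_le {Δ : ℝ} (hΔ : 0 < Δ) {z : ℂ} (hz : 0 < z.re ∧ |z.im| ≤ Δ * z.re)
    (a b c : ℕ) (m : ℕ) :
    ‖fz a b c z m‖ ≤ (del Δ ^ c)⁻¹ * Real.exp (-(((a : ℝ) * m) * z.re)) := by
  have hnum : ‖Complex.exp (-((a * m : ℕ) : ℂ) * z)‖ = Real.exp (-(((a : ℝ) * m) * z.re)) := by
    rw [Complex.norm_exp]
    congr 1
    simp [Complex.mul_re]
  rw [fz, norm_div, hnum, div_eq_inv_mul, mul_comm ((del Δ ^ c)⁻¹), mul_comm _ (Real.exp _)]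
  refine mul_le_mul_of_nonneg_left ?_ (Real.exp_pos _).le
  have hd := del_pos hΔ
  rw [inv_le_inv₀ ?_ (by positivity)]
  · exact norm_prod_ge hΔ hz b c m
  · exact lt_of_lt_of_le (by positivity) (norm_prod_ge hΔ hz b c m)

lemma summable_norm_fz {Δ : ℝ} (hΔ : 0 < Δ) {z : ℂ} (hz : 0 < z.re ∧ |z.im| ≤ Δ * z.re)
    (a b c : ℕ) (ha : 0 < a) : Summable (fun m => ‖fz a b c z m‖) := by
  refine Summable.of_nonneg_of_le (fun m => norm_nonneg _)
    (fun m => (norm_fz_le hΔ hz a b c m).trans (le_of_eq ?_))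
    (((summable_geometric_of_lt_one (by positivity : (0:ℝ) ≤ Real.exp (-((a:ℝ) * z.re)))
        (?_ : Real.exp (-((a:ℝ) * z.re)) < 1)).mul_left ((del Δ ^ c)⁻¹)))
  · congr 1
    rw [← Real.exp_nat_mul]
    congr 1
    ring
  · rw [Real.exp_lt_one_iff, neg_lt_zero]
    have : (0:ℝ) < (a:ℝ) := by exact_mod_cast ha
    exact mul_pos this hz.1

lemma meas_Ico_inter (m : ℕ) : volume (Ico (m:ℝ) (m+1) ∩ Ioi 0) = 1 := by
  apply le_antisymm
  · calc volume (Ico (m:ℝ) (m+1) ∩ Ioi 0) ≤ volume (Ico (m:ℝ) (m+1)) :=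
        measure_mono inter_subset_left
    _ = 1 := by simp [Real.volume_Ico]
  · calc (1:ℝ≥0∞) = volume (Ioo (m:ℝ) (m+1)) := by simp [Real.volume_Ioo]
    _ ≤ _ := by
        refine measure_mono (fun u hu => ?_)
        simp only [mem_Ioo, mem_Ico, mem_inter_iff, mem_Ioi] at *
        exact ⟨⟨hu.1.le, hu.2⟩, lt_of_le_of_lt (Nat.cast_nonneg m) hu.1⟩

lemma integral_indicator_Ico {E : Type*} [NormedAddCommGroup E] [NormedSpace ℝ E] [CompleteSpace E]
    (v : E) (m : ℕ) :
    ∫ u in Ioi (0:ℝ), (Ico (m:ℝ) (m+1)).indicator (fun _ => v) u = v := by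
  rw [MeasureTheory.integral_indicator measurableSet_Ico,
    Measure.restrict_restrict measurableSet_Ico, setIntegral_const, measureReal_def, meas_Ico_inter,
    ENNReal.toReal_one, one_smul]

/-- Integral of `g ∘ ⌊·⌋₊` over `(0,∞)` equals the sum. -/
lemma integral_nat_floor (g : ℕ → ℂ) (hg : Summable fun m => ‖g m‖) :
    ∫ u in Ioi (0:ℝ), g ⌊u⌋₊ = ∑' m, g m := by
  have hgs : Summable g := hg.of_norm
  have key : ∀ u ∈ Ioi (0:ℝ),
      g ⌊u⌋₊ = ∑' m : ℕ, (Ico (m:ℝ) (m+1)).indicator (fun _ => g m) u := by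
    intro u hu
    rw [tsum_eq_single ⌊u⌋₊ ?_]
    · rw [indicator_of_mem]
      exact ⟨Nat.floor_le (le_of_lt hu), Nat.lt_floor_add_one u⟩
    · intro m hm
      rw [indicator_of_notMem]
      intro hmem
      have hfl : ⌊u⌋₊ = m := by
        rw [Nat.floor_eq_iff (le_of_lt hu)]
        exact ⟨hmem.1, hmem.2⟩
      exact hm hfl.symm
  rw [setIntegral_congr_fun measurableSet_Ioi key]
  rw [← MeasureTheory.integral_tsum_of_summable_integral_norm ?_ ?_]
  · exact tsum_congr fun m => integral_indicator_Ico (g m) m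
  · intro m
    rw [integrable_indicator_iff measurableSet_Ico]
    refine integrableOn_const (ne_of_lt ?_)
    calc (volume.restrict (Ioi 0)) (Ico (m:ℝ) (m+1)) ≤ volume (Ico (m:ℝ) (m+1)) :=
        Measure.restrict_apply_le _ _
    _ < ⊤ := by simp [Real.volume_Ico]
  · have heq : ∀ m : ℕ, (∫ u in Ioi (0:ℝ), ‖(Ico (m:ℝ) (m+1)).indicator (fun _ => g m) u‖)
        = ‖g m‖ := by
      intro m
      simp_rw [norm_indicator_eq_indicator_norm]
      exact integral_indicator_Ico _ m
    rw [funext heq]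
    exact hg


lemma stepA {Δ : ℝ} (hΔ : 0 < Δ) {z : ℂ} (hz : 0 < z.re ∧ |z.im| ≤ Δ * z.re)
    (a b c : ℕ) (ha : 0 < a) :
    ∫ s in Ioi (0:ℝ), (z / z.re) * fz a b c z ⌊s / z.re⌋₊
      = z * ∑' m, fz a b c z m := by
  have hx : 0 < z.re := hz.1
  have hsum : Summable fun m => ‖(z / z.re) * fz a b c z m‖ := by
    simp_rw [norm_mul]
    exact (summable_norm_fz hΔ hz a b c ha).mul_left _
  have h2 : ∫ u in Ioi (0:ℝ), (z / z.re) * fz a b c z ⌊u⌋₊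
      = (z / z.re) * ∑' m, fz a b c z m := by
    rw [integral_nat_floor _ hsum, tsum_mul_left]
  calc ∫ s in Ioi (0:ℝ), (z / z.re) * fz a b c z ⌊s / z.re⌋₊
      = ∫ s in Ioi (0:ℝ), (fun u => (z / z.re) * fz a b c z ⌊u⌋₊) ((z.re)⁻¹ * s) := by
        simp_rw [div_eq_inv_mul]
    _ = ((z.re)⁻¹)⁻¹ • ∫ u in Ioi ((z.re)⁻¹ * 0), (z / z.re) * fz a b c z ⌊u⌋₊ :=
        integral_comp_mul_left_Ioi (fun u => z / (z.re:ℂ) * fz a b c z ⌊u⌋₊) 0 (inv_pos.mpr hx)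
    _ = (z.re : ℂ) * ((z / z.re) * ∑' m, fz a b c z m) := by
        rw [mul_zero, inv_inv, h2, Complex.real_smul]
    _ = z * ∑' m, fz a b c z m := by
        rw [← mul_assoc, mul_div_cancel₀]
        exact Complex.ofReal_ne_zero.mpr hx.ne'

lemma Dlb {T : ℝ} (hT : 0 < T) {w : ℂ} (h1 : 0 ≤ w.re) (h2 : |w.im| ≤ T * w.re) :
    del T ≤ ‖1 + Complex.exp (-(2:ℂ) * w)‖ := by
  have h := norm_one_add_exp_neg_ge (w := 2 * w) hT ?_ ?_
  · rwa [show -(2*w) = -(2:ℂ)*w by ring] at h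
  · simp only [Complex.mul_re, Complex.re_ofNat, Complex.im_ofNat, zero_mul, sub_zero]
    linarith
  · have hre : ((2:ℂ)*w).re = 2*w.re := by simp [Complex.mul_re]
    have him : ((2:ℂ)*w).im = 2*w.im := by simp [Complex.mul_im]
    rw [hre, him, abs_mul, show |(2:ℝ)| = 2 by norm_num]
    linarith

lemma Dne {T : ℝ} (hT : 0 < T) {w : ℂ} (h1 : 0 ≤ w.re) (h2 : |w.im| ≤ T * w.re) :
    (1 + Complex.exp (-(2:ℂ) * w)) ≠ 0 := by
  intro h
  have := Dlb hT h1 h2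
  rw [h, norm_zero] at this
  exact absurd this (not_le.mpr (del_pos hT))

lemma norm_exp_neg_mul (k : ℝ) (w : ℂ) :
    ‖Complex.exp (-(k:ℂ) * w)‖ = Real.exp (-(k * w.re)) := by
  rw [Complex.norm_exp]
  congr 1
  simp [Complex.mul_re]

lemma norm_gg_le {T : ℝ} (hT : 0 < T) {w : ℂ} (h1 : 0 ≤ w.re) (h2 : |w.im| ≤ T * w.re)
    (a c : ℕ) : ‖gg a c w‖ ≤ (del T ^ c)⁻¹ * Real.exp (-((a:ℝ) * w.re)) := by
  have hd := del_pos hT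
  rw [gg, norm_div, norm_pow]
  rw [show ‖Complex.exp (-(a:ℂ) * w)‖ = Real.exp (-((a:ℝ) * w.re)) from by
    simpa using norm_exp_neg_mul a w]
  rw [div_eq_inv_mul, mul_comm ((del T ^ c)⁻¹), mul_comm _ (Real.exp _)]
  refine mul_le_mul_of_nonneg_left ?_ (Real.exp_pos _).le
  have hD := Dlb hT h1 h2
  rw [inv_le_inv₀ (lt_of_lt_of_le (by positivity) (pow_le_pow_left₀ hd.le hD c)) (by positivity)]
  exact pow_le_pow_left₀ hd.le hD c

lemma norm_dg_le {T : ℝ} (hT : 0 < T) {w : ℂ} (h1 : 0 ≤ w.re) (h2 : |w.im| ≤ T * w.re)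
    (a c : ℕ) :
    ‖dg a c w‖ ≤ ((a:ℝ) * (del T ^ c)⁻¹ + 2 * c * (del T ^ (c+1))⁻¹)
      * Real.exp (-((a:ℝ) * w.re)) := by
  have hd := del_pos hT
  have hD := Dlb hT h1 h2
  have hterm1 : ‖-(a:ℂ) * gg a c w‖ ≤ (a:ℝ) * ((del T ^ c)⁻¹ * Real.exp (-((a:ℝ) * w.re))) := by
    rw [norm_mul]
    refine mul_le_mul ?_ (norm_gg_le hT h1 h2 a c) (norm_nonneg _) (Nat.cast_nonneg a)
    simp
  have hterm2 : ‖2 * (c:ℂ) * Complex.exp (-((a:ℂ) + 2) * w)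
        / (1 + Complex.exp (-(2:ℂ) * w)) ^ (c + 1)‖
      ≤ 2 * (c:ℝ) * (del T ^ (c+1))⁻¹ * Real.exp (-((a:ℝ) * w.re)) := by
    rw [norm_div, norm_mul, norm_pow]
    have hnum : ‖Complex.exp (-((a:ℂ) + 2) * w)‖ ≤ Real.exp (-((a:ℝ) * w.re)) := by
      rw [show (-((a:ℂ) + 2) * w) = -((((a:ℝ) + 2) : ℝ) : ℂ) * w by push_cast; ring]
      rw [norm_exp_neg_mul]
      refine Real.exp_le_exp.2 ?_
      nlinarith [h1]
    have h2c : ‖(2 : ℂ) * (c:ℂ)‖ = 2 * (c:ℝ) := by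
      rw [norm_mul]; simp
    have hden : del T ^ (c+1) ≤ ‖1 + Complex.exp (-(2:ℂ) * w)‖ ^ (c+1) :=
      pow_le_pow_left₀ hd.le hD (c+1)
    calc ‖(2:ℂ) * (c:ℂ)‖ * ‖Complex.exp (-((a:ℂ) + 2) * w)‖
          / ‖1 + Complex.exp (-(2:ℂ) * w)‖ ^ (c + 1)
        ≤ 2 * (c:ℝ) * Real.exp (-((a:ℝ) * w.re)) / del T ^ (c+1) := by
          rw [h2c]
          refine div_le_div₀ (by positivity) ?_ (by positivity) hden
          exact mul_le_mul_of_nonneg_left hnum (by positivity)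
      _ = 2 * (c:ℝ) * (del T ^ (c+1))⁻¹ * Real.exp (-((a:ℝ) * w.re)) := by
          rw [div_eq_mul_inv]; ring
  calc ‖dg a c w‖ ≤ ‖-(a:ℂ) * gg a c w‖ + ‖2 * (c:ℂ) * Complex.exp (-((a:ℂ) + 2) * w)
        / (1 + Complex.exp (-(2:ℂ) * w)) ^ (c + 1)‖ := by
        rw [dg]
        exact norm_add_le _ _
    _ ≤ _ := by
        refine le_trans (add_le_add hterm1 hterm2) (le_of_eq ?_)
        ring

lemma hasDerivAt_cexp_mul (k : ℂ) (w : ℂ) :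
    HasDerivAt (fun x => Complex.exp (k * x)) (k * Complex.exp (k * w)) w := by
  simpa [mul_comm] using ((hasDerivAt_id w).const_mul k).cexp

lemma hasDerivAt_gg (a c : ℕ) (hc : 0 < c) {w : ℂ}
    (hne : (1 + Complex.exp (-(2:ℂ) * w)) ≠ 0) :
    HasDerivAt (gg a c) (dg a c w) w := by
  obtain ⟨k, rfl⟩ := Nat.exists_eq_succ_of_ne_zero hc.ne'
  have hnum := hasDerivAt_cexp_mul (-(a:ℂ)) w
  have hD : HasDerivAt (fun w => 1 + Complex.exp (-(2:ℂ) * w))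
      (-(2:ℂ) * Complex.exp (-(2:ℂ) * w)) w := (hasDerivAt_cexp_mul (-(2:ℂ)) w).const_add 1
  have hDp := hD.pow (k+1)
  have hdiv := hnum.div hDp (pow_ne_zero (k+1) hne)
  refine hdiv.congr_deriv ?_
  symm
  simp only [Pi.pow_apply]
  rw [dg, gg]
  have hexp : Complex.exp (-((a:ℂ) + 2) * w)
      = Complex.exp (-(a:ℂ) * w) * Complex.exp (-(2:ℂ) * w) := by
    rw [← Complex.exp_add]; congr 1; ring
  rw [hexp]
  simp only [Nat.add_sub_cancel, Nat.cast_add, Nat.cast_one]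
  generalize Complex.exp (-(a:ℂ) * w) = EA
  generalize hE2 : Complex.exp (-(2:ℂ) * w) = E2 at hne ⊢
  simp only [Nat.succ_eq_add_one]
  field_simp
  push_cast
  ring


/-- direction -/
def uu (θ : ℝ) : ℂ := 1 + (θ:ℂ) * I

lemma uu_re_mul (θ : ℝ) (s : ℝ) : ((s:ℂ) * uu θ).re = s := by
  simp [uu, Complex.mul_re, Complex.mul_im]

lemma uu_im_mul (θ : ℝ) (s : ℝ) : ((s:ℂ) * uu θ).im = s * θ := by
  simp [uu, Complex.mul_im]

lemma norm_uu_le (θ : ℝ) : ‖uu θ‖ ≤ 1 + |θ| := by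
  refine le_trans (norm_add_le _ _) ?_
  simp

def FF (a c : ℕ) (θ : ℝ) (s : ℝ) : ℂ := uu θ * gg a c ((s:ℂ) * uu θ)

def FFd (a c : ℕ) (θ : ℝ) (s : ℝ) : ℂ :=
  I * gg a c ((s:ℂ) * uu θ) + uu θ * (((s:ℂ) * I) * dg a c ((s:ℂ) * uu θ))

def PP (a c : ℕ) (θ : ℝ) (s : ℝ) : ℂ := I * (s:ℂ) * gg a c ((s:ℂ) * uu θ)

def JJ (a c : ℕ) (θ : ℝ) : ℂ := ∫ s in Ioi (0:ℝ), FF a c θ s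

-- cone data for w = s • uu θ
lemma cone_mem {T : ℝ} (θ : ℝ) (hθ : |θ| ≤ T) {s : ℝ} (hs : 0 ≤ s) :
    0 ≤ ((s:ℂ) * uu θ).re ∧ |((s:ℂ) * uu θ).im| ≤ T * ((s:ℂ) * uu θ).re := by
  rw [uu_re_mul, uu_im_mul]
  refine ⟨hs, ?_⟩
  rw [abs_mul, _root_.abs_of_nonneg hs]
  calc s * |θ| ≤ s * T := mul_le_mul_of_nonneg_left hθ hs
  _ = T * s := mul_comm _ _

lemma hasDerivAt_inner (θ : ℝ) (s : ℝ) :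
    HasDerivAt (fun θ : ℝ => (s:ℂ) * uu θ) ((s:ℂ) * I) θ := by
  have h1 : HasDerivAt (fun θ:ℝ => (θ:ℂ)) 1 θ := by
    simpa using (hasDerivAt_id θ).ofReal_comp
  have h2 : HasDerivAt (fun θ:ℝ => uu θ) I θ := by
    simpa [uu] using (h1.mul_const I).const_add 1
  simpa using h2.const_mul ((s:ℂ))

lemma hasDerivAt_FF_theta (a c : ℕ) (hc : 0 < c) {T : ℝ} (hT : 0 < T) (θ : ℝ) (hθ : |θ| ≤ T)
    {s : ℝ} (hs : 0 ≤ s) : HasDerivAt (fun θ => FF a c θ s) (FFd a c θ s) θ := by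
  have hmem := cone_mem θ hθ hs
  have hne := Dne hT hmem.1 hmem.2
  have hgg := hasDerivAt_gg a c hc hne
  have hcomp : HasDerivAt (fun θ : ℝ => gg a c ((s:ℂ) * uu θ))
      (((s:ℂ) * I) • dg a c ((s:ℂ) * uu θ)) θ :=
    (HasDerivAt.scomp (g₁ := gg a c) θ hgg (hasDerivAt_inner θ s) : _)
  have h2 : HasDerivAt (fun θ:ℝ => uu θ) I θ := by
    have h1 : HasDerivAt (fun θ:ℝ => (θ:ℂ)) 1 θ := by
      simpa using (hasDerivAt_id θ).ofReal_comp
    simpa [uu] using (h1.mul_const I).const_add 1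
  have := h2.mul hcomp
  simp only [smul_eq_mul] at this hcomp ⊢
  exact this

lemma hasDerivAt_PP_s (a c : ℕ) (hc : 0 < c) {T : ℝ} (hT : 0 < T) (θ : ℝ) (hθ : |θ| ≤ T)
    {s : ℝ} (hs : 0 ≤ s) : HasDerivAt (PP a c θ) (FFd a c θ s) s := by
  have hmem := cone_mem θ hθ hs
  have hne := Dne hT hmem.1 hmem.2
  have hgg := hasDerivAt_gg a c hc hne
  have h1 : HasDerivAt (fun s:ℝ => (s:ℂ)) 1 s := by
    simpa using (hasDerivAt_id s).ofReal_comp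
  have hinner : HasDerivAt (fun s : ℝ => (s:ℂ) * uu θ) (uu θ) s := by
    simpa using h1.mul_const (uu θ)
  have hcomp : HasDerivAt (fun s : ℝ => gg a c ((s:ℂ) * uu θ))
      (uu θ • dg a c ((s:ℂ) * uu θ)) s := (HasDerivAt.scomp (g₁ := gg a c) s hgg hinner : _)
  have hIs : HasDerivAt (fun s:ℝ => I * (s:ℂ)) I s := by
    simpa using h1.const_mul I
  have := hIs.mul hcomp
  simp only [smul_eq_mul] at this hcomp ⊢
  refine this.congr_deriv ?_
  simp only [FFd]
  ring


lemma tendsto_id_mul_exp {k : ℝ} (hk : 0 < k) :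
    Tendsto (fun s : ℝ => s * Real.exp (-k*s)) atTop (𝓝 0) := by
  have h0 := Real.tendsto_pow_mul_exp_neg_atTop_nhds_zero 1
  have h1 : Tendsto (fun s : ℝ => k * s) atTop atTop :=
    Tendsto.const_mul_atTop hk tendsto_id
  have h2 := (h0.comp h1).const_mul (1/k)
  rw [mul_zero] at h2
  refine h2.congr fun s => ?_
  simp only [Function.comp_apply, pow_one]
  rw [show -k*s = -(k*s) from neg_mul k s]
  field_simp

lemma integrableOn_linexp {k : ℝ} (hk : 0 < k) (B1 B2 : ℝ) :
    IntegrableOn (fun s => B1 * Real.exp (-k*s) + B2 * (s * Real.exp (-k*s))) (Ioi (0:ℝ)) := by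
  refine Integrable.add ?_ ?_
  · exact (exp_neg_integrableOn_Ioi 0 hk).const_mul B1
  · refine Integrable.const_mul ?_ B2
    refine integrable_of_isBigO_exp_neg (half_pos hk) ?_ ?_
    · fun_prop
    · have h := tendsto_id_mul_exp (half_pos hk)
      refine Asymptotics.IsBigO.of_bound 1 ?_
      filter_upwards [h.eventually (eventually_le_nhds one_pos), eventually_ge_atTop (0:ℝ)]
        with s hs1 hs0
      have hsplit : s * Real.exp (-k*s) = (s * Real.exp (-(k/2)*s)) * Real.exp (-(k/2)*s) := by
        rw [mul_assoc, ← Real.exp_add]; congr 2; ring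
      rw [Real.norm_eq_abs, Real.norm_eq_abs, hsplit, abs_mul, Real.abs_exp, one_mul]
      calc |s * Real.exp (-(k/2)*s)| * Real.exp (-(k/2)*s)
          ≤ 1 * Real.exp (-(k/2)*s) := by
            refine mul_le_mul_of_nonneg_right ?_ (Real.exp_pos _).le
            rw [_root_.abs_of_nonneg (by positivity)]
            exact hs1
      _ = Real.exp (-(k/2)*s) := one_mul _

lemma contAt_gg (a c : ℕ) {w : ℂ} (hne : (1 + Complex.exp (-(2:ℂ) * w)) ≠ 0) :
    ContinuousAt (gg a c) w := by
  refine ContinuousAt.div ?_ ?_ (pow_ne_zero c hne)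
  · exact (Complex.continuous_exp.comp (continuous_const.mul continuous_id)).continuousAt
  · exact ((continuous_const.add
      (Complex.continuous_exp.comp (continuous_const.mul continuous_id))).pow c).continuousAt

lemma contAt_dg (a c : ℕ) {w : ℂ} (hne : (1 + Complex.exp (-(2:ℂ) * w)) ≠ 0) :
    ContinuousAt (dg a c) w := by
  refine ContinuousAt.add (continuousAt_const.mul (contAt_gg a c hne)) ?_
  refine ContinuousAt.div ?_ ?_ (pow_ne_zero (c+1) hne)
  · exact (continuous_const.mul
      (Complex.continuous_exp.comp (continuous_const.mul continuous_id))).continuousAt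
  · exact ((continuous_const.add
      (Complex.continuous_exp.comp (continuous_const.mul continuous_id))).pow (c+1)).continuousAt

lemma cont_inner (θ : ℝ) : Continuous (fun s : ℝ => (s:ℂ) * uu θ) :=
  Complex.continuous_ofReal.mul continuous_const

lemma contAt_comp_gg (a c : ℕ) (θ : ℝ) {s : ℝ}
    (hne : 1 + Complex.exp (-(2:ℂ) * ((s:ℂ) * uu θ)) ≠ 0) :
    ContinuousAt (fun s : ℝ => gg a c ((s:ℂ) * uu θ)) s :=
  ContinuousAt.comp (g := gg a c) (contAt_gg a c hne) ((cont_inner θ).continuousAt)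

lemma contAt_comp_dg (a c : ℕ) (θ : ℝ) {s : ℝ}
    (hne : 1 + Complex.exp (-(2:ℂ) * ((s:ℂ) * uu θ)) ≠ 0) :
    ContinuousAt (fun s : ℝ => dg a c ((s:ℂ) * uu θ)) s :=
  ContinuousAt.comp (g := dg a c) (contAt_dg a c hne) ((cont_inner θ).continuousAt)

lemma contOn_FF (a c : ℕ) {T : ℝ} (hT : 0 < T) (θ : ℝ) (hθ : |θ| ≤ T) :
    ContinuousOn (fun s => FF a c θ s) (Ici (0:ℝ)) := by
  intro s hs
  have hmem := cone_mem θ hθ (mem_Ici.mp hs)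
  have hne := Dne hT hmem.1 hmem.2
  exact (continuousAt_const.mul (contAt_comp_gg a c θ hne)).continuousWithinAt

lemma contOn_FFd (a c : ℕ) {T : ℝ} (hT : 0 < T) (θ : ℝ) (hθ : |θ| ≤ T) :
    ContinuousOn (fun s => FFd a c θ s) (Ici (0:ℝ)) := by
  intro s hs
  have hmem := cone_mem θ hθ (mem_Ici.mp hs)
  have hne := Dne hT hmem.1 hmem.2
  have hgg := contAt_comp_gg a c θ hne
  have hdg := contAt_comp_dg a c θ hne
  refine ContinuousWithinAt.add (continuousAt_const.mul hgg).continuousWithinAt ?_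
  exact (continuousAt_const.mul
    ((Complex.continuous_ofReal.continuousAt.mul continuousAt_const).mul
      hdg)).continuousWithinAt

lemma norm_FFd_le (a c : ℕ) {T : ℝ} (hT : 0 < T) (θ : ℝ) (hθ : |θ| ≤ T) {s : ℝ} (hs : 0 ≤ s) :
    ‖FFd a c θ s‖ ≤ (del T ^ c)⁻¹ * Real.exp (-(a:ℝ)*s)
      + ((1+T) * ((a:ℝ) * (del T ^ c)⁻¹ + 2 * c * (del T ^ (c+1))⁻¹))
        * (s * Real.exp (-(a:ℝ)*s)) := by
  have hmem := cone_mem θ hθ hs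
  have hre : ((s:ℂ) * uu θ).re = s := uu_re_mul θ s
  have hgg := norm_gg_le hT hmem.1 hmem.2 a c
  have hdg := norm_dg_le hT hmem.1 hmem.2 a c
  rw [hre] at hgg hdg
  have huu : ‖uu θ‖ ≤ 1 + T := le_trans (norm_uu_le θ) (by linarith)
  have h1 : ‖I * gg a c ((s:ℂ) * uu θ)‖ ≤ (del T ^ c)⁻¹ * Real.exp (-(a:ℝ)*s) := by
    rw [norm_mul, Complex.norm_I, one_mul]
    convert hgg using 3
    ring
  have h2 : ‖uu θ * (((s:ℂ) * I) * dg a c ((s:ℂ) * uu θ))‖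
      ≤ ((1+T) * ((a:ℝ) * (del T ^ c)⁻¹ + 2 * c * (del T ^ (c+1))⁻¹))
        * (s * Real.exp (-(a:ℝ)*s)) := by
    rw [norm_mul, norm_mul, norm_mul, Complex.norm_I, mul_one, Complex.norm_real,
      Real.norm_eq_abs, _root_.abs_of_nonneg hs]
    calc ‖uu θ‖ * (s * ‖dg a c ((s:ℂ) * uu θ)‖)
        ≤ (1+T) * (s * (((a:ℝ) * (del T ^ c)⁻¹ + 2 * c * (del T ^ (c+1))⁻¹)
            * Real.exp (-((a:ℝ)*s)))) := by
          refine mul_le_mul huu ?_ (by positivity) (by positivity)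
          refine mul_le_mul_of_nonneg_left ?_ hs
          exact hdg
      _ = ((1+T) * ((a:ℝ) * (del T ^ c)⁻¹ + 2 * c * (del T ^ (c+1))⁻¹))
            * (s * Real.exp (-(a:ℝ)*s)) := by ring_nf
  calc ‖FFd a c θ s‖ ≤ _ + _ := norm_add_le _ _
  _ ≤ _ := add_le_add h1 h2

lemma norm_FF_le (a c : ℕ) {T : ℝ} (hT : 0 < T) (θ : ℝ) (hθ : |θ| ≤ T) {s : ℝ} (hs : 0 ≤ s) :
    ‖FF a c θ s‖ ≤ (1+T) * ((del T ^ c)⁻¹ * Real.exp (-(a:ℝ)*s)) := by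
  have hmem := cone_mem θ hθ hs
  have hgg := norm_gg_le hT hmem.1 hmem.2 a c
  rw [uu_re_mul] at hgg
  rw [FF, norm_mul]
  have huu : ‖uu θ‖ ≤ 1 + T := le_trans (norm_uu_le θ) (by linarith)
  refine mul_le_mul huu (le_trans hgg (le_of_eq ?_)) (norm_nonneg _) (by positivity)
  ring_nf

lemma JJ_deriv (a c : ℕ) (ha : 0 < a) (hc : 0 < c) (θ₀ : ℝ) :
    HasDerivAt (JJ a c) (∫ s in Ioi (0:ℝ), FFd a c θ₀ s) θ₀
      ∧ IntegrableOn (FFd a c θ₀) (Ioi (0:ℝ)) := by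
  have haR : (0:ℝ) < (a:ℝ) := by exact_mod_cast ha
  set T := |θ₀| + 1 with hTdef
  have hT : 0 < T := by positivity
  have hθT : ∀ θ ∈ ball θ₀ 1, |θ| ≤ T := by
    intro θ hθ
    have h := mem_ball_iff_norm.mp hθ
    rw [Real.norm_eq_abs] at h
    calc |θ| = |θ₀ + (θ - θ₀)| := by ring_nf
    _ ≤ |θ₀| + |θ - θ₀| := abs_add_le _ _
    _ ≤ T := by rw [hTdef]; linarith
  have hθ₀ : |θ₀| ≤ T := by rw [hTdef]; linarith [abs_nonneg θ₀]
  have hmeas : ∀ᶠ θ in 𝓝 θ₀, AEStronglyMeasurable (fun s => FF a c θ s)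
      (volume.restrict (Ioi 0)) := by
    refine Eventually.of_forall fun θ => ?_
    exact ((contOn_FF a c (by positivity : (0:ℝ) < |θ|+1) θ (by linarith [abs_nonneg θ])).mono
      Ioi_subset_Ici_self).aestronglyMeasurable measurableSet_Ioi
  have hFint : Integrable (fun s => FF a c θ₀ s) (volume.restrict (Ioi 0)) := by
    refine Integrable.mono'
      ((exp_neg_integrableOn_Ioi 0 haR).const_mul ((1+T) * (del T ^ c)⁻¹)) ?_ ?_
    · exact ((contOn_FF a c hT θ₀ hθ₀).mono
        Ioi_subset_Ici_self).aestronglyMeasurable measurableSet_Ioi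
    · filter_upwards [ae_restrict_mem measurableSet_Ioi] with s hs
      calc ‖FF a c θ₀ s‖ ≤ (1+T) * ((del T ^ c)⁻¹ * Real.exp (-(a:ℝ)*s)) :=
            norm_FF_le a c hT θ₀ hθ₀ (le_of_lt hs)
      _ = (1+T) * (del T ^ c)⁻¹ * Real.exp (-(a:ℝ)*s) := by ring
  have hmeas' : AEStronglyMeasurable (fun s => FFd a c θ₀ s) (volume.restrict (Ioi 0)) :=
    ((contOn_FFd a c hT θ₀ hθ₀).mono
      Ioi_subset_Ici_self).aestronglyMeasurable measurableSet_Ioi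
  set bound := fun s : ℝ => (del T ^ c)⁻¹ * Real.exp (-(a:ℝ)*s)
      + ((1+T) * ((a:ℝ) * (del T ^ c)⁻¹ + 2 * c * (del T ^ (c+1))⁻¹))
        * (s * Real.exp (-(a:ℝ)*s)) with hbdef
  have hbound : ∀ᵐ s ∂(volume.restrict (Ioi (0:ℝ))), ∀ θ ∈ ball θ₀ 1,
      ‖FFd a c θ s‖ ≤ bound s := by
    filter_upwards [ae_restrict_mem measurableSet_Ioi] with s hs θ hθ
    exact norm_FFd_le a c hT θ (hθT θ hθ) (le_of_lt hs)
  have hbint : Integrable bound (volume.restrict (Ioi 0)) := integrableOn_linexp haR _ _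
  have hdiff : ∀ᵐ s ∂(volume.restrict (Ioi (0:ℝ))), ∀ θ ∈ ball θ₀ 1,
      HasDerivAt (fun θ => FF a c θ s) (FFd a c θ s) θ := by
    filter_upwards [ae_restrict_mem measurableSet_Ioi] with s hs θ hθ
    exact hasDerivAt_FF_theta a c hc hT θ (hθT θ hθ) (le_of_lt hs)
  have key := hasDerivAt_integral_of_dominated_loc_of_deriv_le (ball_mem_nhds θ₀ one_pos) hmeas hFint hmeas'
    hbound hbint hdiff
  exact ⟨key.2, key.1⟩

lemma integral_FFd_zero (a c : ℕ) (ha : 0 < a) (hc : 0 < c) (θ₀ : ℝ)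
    (hint : IntegrableOn (FFd a c θ₀) (Ioi (0:ℝ))) :
    ∫ s in Ioi (0:ℝ), FFd a c θ₀ s = 0 := by
  have haR : (0:ℝ) < (a:ℝ) := by exact_mod_cast ha
  set T := |θ₀| + 1 with hTdef
  have hT : 0 < T := by positivity
  have hθ₀ : |θ₀| ≤ T := by rw [hTdef]; linarith [abs_nonneg θ₀]
  have hcont : ContinuousWithinAt (PP a c θ₀) (Ici (0:ℝ)) 0 := by
    have hmem := cone_mem θ₀ hθ₀ (le_refl (0:ℝ))
    have hne := Dne hT hmem.1 hmem.2
    exact ((continuousAt_const.mul Complex.continuous_ofReal.continuousAt).mul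
      (contAt_comp_gg a c θ₀ hne)).continuousWithinAt
  have hderiv : ∀ s ∈ Ioi (0:ℝ), HasDerivAt (PP a c θ₀) (FFd a c θ₀ s) s :=
    fun s hs => hasDerivAt_PP_s a c hc hT θ₀ hθ₀ (le_of_lt hs)
  have htend : Tendsto (PP a c θ₀) atTop (𝓝 0) := by
    have hb : Tendsto (fun s : ℝ => (del T ^ c)⁻¹ * (s * Real.exp (-(a:ℝ)*s))) atTop (𝓝 0) := by
      have h := (tendsto_id_mul_exp haR).const_mul ((del T ^ c)⁻¹)
      rwa [mul_zero] at h
    refine squeeze_zero_norm' ?_ hb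
    filter_upwards [eventually_ge_atTop (0:ℝ)] with s hs
    have hmem := cone_mem θ₀ hθ₀ hs
    have hgg := norm_gg_le hT hmem.1 hmem.2 a c
    rw [uu_re_mul] at hgg
    calc ‖PP a c θ₀ s‖ = s * ‖gg a c ((s:ℂ) * uu θ₀)‖ := by
          rw [PP, norm_mul, norm_mul, Complex.norm_I, one_mul, Complex.norm_real,
            Real.norm_eq_abs, _root_.abs_of_nonneg hs]
    _ ≤ s * ((del T ^ c)⁻¹ * Real.exp (-((a:ℝ)*s))) := mul_le_mul_of_nonneg_left hgg hs
    _ = (del T ^ c)⁻¹ * (s * Real.exp (-(a:ℝ)*s)) := by rw [neg_mul]; ring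
  have hres := integral_Ioi_of_hasDerivAt_of_tendsto hcont hderiv hint htend
  rw [hres]
  simp [PP]

lemma JJ_eq (a c : ℕ) (ha : 0 < a) (hc : 0 < c) (θ : ℝ) : JJ a c θ = JJ a c 0 := by
  have hD : ∀ θ₀ : ℝ, HasDerivAt (JJ a c) 0 θ₀ := by
    intro θ₀
    obtain ⟨h1, h2⟩ := JJ_deriv a c ha hc θ₀
    rwa [integral_FFd_zero a c ha hc θ₀ h2] at h1
  exact is_const_of_deriv_eq_zero (fun θ => (hD θ).differentiableAt) (fun θ => (hD θ).deriv) θ 0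


lemma fz_eq (a b c : ℕ) (z : ℂ) (m : ℕ) :
    fz a b c z m = Complex.exp (-(a:ℂ) * ((m:ℂ) * z)) /
      ∏ i ∈ Finset.range c,
        (1 + Complex.exp (-((2:ℂ) * ((m:ℂ) * z) + ((b:ℂ) + 2 * i) * z))) := by
  rw [fz]
  congr 1
  · congr 1
    push_cast
    ring
  · refine Finset.prod_congr rfl fun i _ => ?_
    congr 2
    push_cast
    ring

lemma continuous_uu : Continuous uu := by
  unfold uu
  fun_prop

lemma key (a b c : ℕ) (ha : 0 < a) (hc : 0 < c) {Δ : ℝ} (hΔ : 0 < Δ)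
    (w : ℕ → ℂ) (hw : ∀ n, 0 < (w n).re ∧ |(w n).im| ≤ Δ * (w n).re)
    (hw0 : Tendsto w atTop (𝓝 0)) (θL : ℝ) (hθL : |θL| ≤ Δ)
    (hθ : Tendsto (fun n => (w n).im / (w n).re) atTop (𝓝 θL)) :
    Tendsto (fun n => w n * ∑' m, fz a b c (w n) m) atTop (𝓝 (JJ a c θL)) := by
  classical
  set x : ℕ → ℝ := fun n => (w n).re with hxdef
  have hx : ∀ n, 0 < x n := fun n => (hw n).1
  have hx0 : Tendsto x atTop (𝓝 0) := by
    have h := (Complex.continuous_re.tendsto 0).comp hw0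
    exact h
  obtain ⟨X, hX⟩ : ∃ X : ℝ, ∀ n, x n ≤ X := by
    obtain ⟨X, hX⟩ := hx0.bddAbove_range
    exact ⟨X, fun n => hX (mem_range_self n)⟩
  have hquot : ∀ n, w n / (x n : ℂ) = uu ((w n).im / x n) := by
    intro n
    rw [uu, eq_comm, eq_div_iff (Complex.ofReal_ne_zero.mpr (hx n).ne')]
    apply Complex.ext
    · simp [Complex.add_re, Complex.mul_re, hxdef]
    · simp only [Complex.add_im, Complex.mul_im, Complex.one_im, Complex.one_re,
        Complex.ofReal_re, Complex.ofReal_im, Complex.I_re, Complex.I_im]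
      field_simp
      simp
      field_simp
      exact mul_div_cancel_left₀ _ (hx n).ne'
  have habs : ∀ n, |(w n).im / x n| ≤ Δ := by
    intro n
    rw [abs_div, _root_.abs_of_pos (hx n)]
    rw [div_le_iff₀ (hx n)]
    exact (hw n).2
  have hdir : Tendsto (fun n => w n / (x n : ℂ)) atTop (𝓝 (uu θL)) := by
    have h := (continuous_uu.tendsto θL).comp hθ
    exact h.congr fun n => (hquot n).symm
  -- the step functions
  set ψ : ℕ → ℝ → ℂ := fun n s => (w n / (x n : ℂ)) * fz a b c (w n) ⌊s / x n⌋₊ with hψdef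
  have hstep : ∀ n, w n * ∑' m, fz a b c (w n) m = ∫ s in Ioi (0:ℝ), ψ n s :=
    fun n => (stepA hΔ (hw n) a b c ha).symm
  have hθLmem := fun (s : ℝ) (hs : (0:ℝ) ≤ s) => cone_mem θL hθL hs
  -- dominated convergence
  have hmain : Tendsto (fun n => ∫ s in Ioi (0:ℝ), ψ n s) atTop (𝓝 (JJ a c θL)) := by
    rw [JJ]
    refine tendsto_integral_of_dominated_convergence
      (bound := fun s => (1+Δ) * ((del Δ ^ c)⁻¹ * (Real.exp ((a:ℝ)*X) * Real.exp (-(a:ℝ)*s))))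
      ?_ ?_ ?_ ?_
    · intro n
      refine Measurable.aestronglyMeasurable ?_
      refine Measurable.const_mul ?_ _
      exact (measurable_from_top (f := fun m : ℕ => fz a b c (w n) m)).comp
        (Nat.measurable_floor.comp (measurable_id.div_const (x n)))
    · refine (Integrable.const_mul ?_ _)
      refine Integrable.const_mul ?_ _
      refine Integrable.const_mul ?_ _
      exact exp_neg_integrableOn_Ioi 0 (by exact_mod_cast ha)
    · intro n
      filter_upwards [ae_restrict_mem measurableSet_Ioi] with s hs
      have hsp : (0:ℝ) < s := hs
      set m := ⌊s / x n⌋₊ with hmdef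
      have hfl : s - x n < (m:ℝ) * x n := by
        have h1 : s / x n - 1 < (m:ℝ) := Nat.sub_one_lt_floor (s / x n)
        have h2 := mul_lt_mul_of_pos_right h1 (hx n)
        have h3 : (s / x n - 1) * x n = s - x n := by
          rw [sub_mul, div_mul_cancel₀ _ (hx n).ne', one_mul]
        calc s - x n = (s / x n - 1) * x n := h3.symm
        _ < (m:ℝ) * x n := h2
      have hexp : Real.exp (-((a:ℝ) * m * x n)) ≤ Real.exp ((a:ℝ)*X) * Real.exp (-(a:ℝ)*s) := by
        rw [← Real.exp_add]
        refine Real.exp_le_exp.2 ?_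
        have haR : (0:ℝ) ≤ (a:ℝ) := Nat.cast_nonneg a
        have h2 : s - X ≤ (m:ℝ) * x n := le_trans (by linarith [hX n]) hfl.le
        nlinarith
      have hnormdir : ‖w n / (x n : ℂ)‖ ≤ 1 + Δ := by
        rw [hquot n]
        exact le_trans (norm_uu_le _) (by linarith [habs n])
      calc ‖ψ n s‖ = ‖w n / (x n : ℂ)‖ * ‖fz a b c (w n) m‖ := norm_mul _ _
      _ ≤ (1 + Δ) * ((del Δ ^ c)⁻¹ * Real.exp (-((a:ℝ) * m * x n))) := by
          refine mul_le_mul hnormdir ?_ (norm_nonneg _) (by linarith)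
          exact norm_fz_le hΔ (hw n) a b c m
      _ ≤ (1+Δ) * ((del Δ ^ c)⁻¹ * (Real.exp ((a:ℝ)*X) * Real.exp (-(a:ℝ)*s))) := by
          have hd := del_pos hΔ
          refine mul_le_mul_of_nonneg_left ?_ (by linarith)
          exact mul_le_mul_of_nonneg_left hexp (by positivity)
    · filter_upwards [ae_restrict_mem measurableSet_Ioi] with s hs
      have hsp : (0:ℝ) < s := hs
      -- pointwise convergence
      have hfloor : Tendsto (fun n => (⌊s / x n⌋₊ : ℝ) * x n) atTop (𝓝 s) := by
        have hub : ∀ n, (⌊s / x n⌋₊ : ℝ) * x n ≤ s := by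
          intro n
          have := Nat.floor_le (le_of_lt (div_pos hsp (hx n)))
          calc (⌊s / x n⌋₊ : ℝ) * x n ≤ (s / x n) * x n :=
            mul_le_mul_of_nonneg_right this (hx n).le
          _ = s := div_mul_cancel₀ s (hx n).ne'
        have hlb : ∀ n, s - x n ≤ (⌊s / x n⌋₊ : ℝ) * x n := by
          intro n
          have h1 : s / x n - 1 < (⌊s / x n⌋₊:ℝ) := Nat.sub_one_lt_floor (s / x n)
          have h2 := mul_lt_mul_of_pos_right h1 (hx n)
          have h3 : (s / x n - 1) * x n = s - x n := by
            rw [sub_mul, div_mul_cancel₀ _ (hx n).ne', one_mul]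
          rw [h3] at h2
          exact h2.le
        have hsx : Tendsto (fun n => s - x n) atTop (𝓝 s) := by
          have := tendsto_const_nhds (x := s) (f := atTop (α := ℕ)) |>.sub hx0
          simpa using this
        exact tendsto_of_tendsto_of_tendsto_of_le_of_le hsx tendsto_const_nhds hlb hub
      have hWc : Tendsto (fun n => ((⌊s / x n⌋₊:ℕ) : ℂ) * w n) atTop (𝓝 ((s:ℂ) * uu θL)) := by
        have heq : ∀ n, ((⌊s / x n⌋₊:ℕ) : ℂ) * w n
            = (((⌊s / x n⌋₊:ℝ) * x n : ℝ) : ℂ) * (w n / (x n : ℂ)) := by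
          intro n
          push_cast
          rw [mul_assoc, mul_comm ((x n : ℂ)) (w n / (x n:ℂ)),
            div_mul_cancel₀ _ (Complex.ofReal_ne_zero.mpr (hx n).ne')]
        refine Tendsto.congr (fun n => (heq n).symm) ?_
        have h1 : Tendsto (fun n => (((⌊s / x n⌋₊:ℝ) * x n : ℝ) : ℂ)) atTop (𝓝 ((s:ℝ) : ℂ)) :=
          (Complex.continuous_ofReal.tendsto s).comp hfloor
        exact h1.mul hdir
      have hne : (1 + Complex.exp (-(2:ℂ) * ((s:ℂ) * uu θL))) ≠ 0 :=
        Dne hΔ (hθLmem s hsp.le).1 (hθLmem s hsp.le).2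
      have hnum : Tendsto (fun n => Complex.exp (-(a:ℂ) * (((⌊s / x n⌋₊:ℕ):ℂ) * w n))) atTop
          (𝓝 (Complex.exp (-(a:ℂ) * ((s:ℂ) * uu θL)))) := by
        refine (Complex.continuous_exp.tendsto _).comp ?_
        exact (tendsto_const_nhds.mul hWc : _)
      have hden : Tendsto (fun n => ∏ i ∈ Finset.range c,
            (1 + Complex.exp (-((2:ℂ) * (((⌊s / x n⌋₊:ℕ):ℂ) * w n) + ((b:ℂ) + 2 * i) * w n))))
          atTop (𝓝 ((1 + Complex.exp (-(2:ℂ) * ((s:ℂ) * uu θL)))^c)) := by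
        rw [show ((1 + Complex.exp (-(2:ℂ) * ((s:ℂ) * uu θL)))^c)
            = ∏ _i ∈ Finset.range c, (1 + Complex.exp (-(2:ℂ) * ((s:ℂ) * uu θL))) by
          rw [Finset.prod_const, Finset.card_range]]
        refine tendsto_finset_prod _ fun i _ => ?_
        refine tendsto_const_nhds.add ?_
        refine (Complex.continuous_exp.tendsto _).comp ?_
        have harg : Tendsto (fun n => -((2:ℂ) * (((⌊s / x n⌋₊:ℕ):ℂ) * w n) + ((b:ℂ) + 2 * i) * w n))
            atTop (𝓝 (-((2:ℂ) * ((s:ℂ) * uu θL) + ((b:ℂ) + 2 * i) * 0))) := by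
          refine Tendsto.neg ?_
          exact (tendsto_const_nhds.mul hWc).add (tendsto_const_nhds.mul hw0)
        simpa using harg
      have hdiv : Tendsto (fun n => fz a b c (w n) ⌊s / x n⌋₊) atTop
          (𝓝 (gg a c ((s:ℂ) * uu θL))) := by
        have h := hnum.div hden (pow_ne_zero c hne)
        rw [gg]
        refine Tendsto.congr (fun n => ?_) h
        exact (fz_eq a b c (w n) ⌊s / x n⌋₊).symm
      exact hdir.mul hdiv
  refine hmain.congr fun n => (hstep n).symm

end FabcAux

end FabcAuxSection

namespace FabcAux

lemma JJ_zero (a c : ℕ) : JJ a c 0 = ((Ical a c : ℝ) : ℂ) := by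
  rw [JJ, Ical]
  rw [show (∫ s in Ioi (0:ℝ), FF a c 0 s)
      = ∫ s in Ioi (0:ℝ), ((Real.exp (-(a:ℝ)*s) / (1+Real.exp (-2*s))^c : ℝ) : ℂ) from
    setIntegral_congr_fun measurableSet_Ioi fun s _ => by
      simp only [FF, uu, gg]
      push_cast
      norm_num]
  exact integral_ofReal


end FabcAux

open Filter in
/-- As `z → 0` in the cone `R_Δ = {x+iy : x > 0, |y| ≤ Δx}`, one has
`z · F_{a,b,c}(e^{−z}) → ∫_0^∞ e^{−ax}/(1+e^{−2x})^c dx`, where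
`F_{a,b,c}(q) = Σ_{m≥0} q^{am}/(−q^{2m+b}; q²)_c`. -/
theorem Fabc_asymptotic (a b c : ℕ) (ha : 0 < a) (hb : 0 < b) (hc : 0 < c)
    (Δ : ℝ) (hΔ : 0 < Δ) :
    Tendsto
      (fun z : ℂ => z *
        ∑' m : ℕ, Complex.exp (-((a * m : ℕ) : ℂ) * z) /
          ∏ i ∈ Finset.range c, (1 + Complex.exp (-(((2 * m + b + 2 * i : ℕ)) : ℂ) * z)))
      (nhdsWithin 0 {z : ℂ | 0 < z.re ∧ |z.im| ≤ Δ * z.re})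
      (nhds ((Ical a c : ℝ) : ℂ)) := by
  classical
  refine Filter.tendsto_of_subseq_tendsto fun ns hns => ?_
  have hns0 : Tendsto ns atTop (𝓝 0) := hns.mono_right nhdsWithin_le_nhds
  obtain ⟨N, hN⟩ : ∃ N, ∀ n ≥ N, ns n ∈ {z : ℂ | 0 < z.re ∧ |z.im| ≤ Δ * z.re} :=
    eventually_atTop.mp (hns self_mem_nhdsWithin)
  set θf : ℕ → ℝ := fun k => max (-Δ) (min Δ ((ns (k + N)).im / (ns (k + N)).re)) with hθf
  have hθmem : ∀ k, θf k ∈ Icc (-Δ) Δ :=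
    fun k => ⟨le_max_left _ _, max_le (by linarith) (min_le_left _ _)⟩
  obtain ⟨θL, hθLmem, φ, hφmono, hφtend⟩ :=
    tendsto_subseq_of_bounded (Metric.isBounded_Icc (-Δ) Δ) hθmem
  rw [isClosed_Icc.closure_eq] at hθLmem
  refine ⟨fun k => φ k + N, ?_⟩
  set w : ℕ → ℂ := fun k => ns (φ k + N) with hwdef
  have hwC : ∀ k, 0 < (w k).re ∧ |(w k).im| ≤ Δ * (w k).re :=
    fun k => hN _ (Nat.le_add_left N (φ k))
  have hw0 : Tendsto w atTop (𝓝 0) := by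
    refine hns0.comp (tendsto_atTop_mono (fun k => ?_) hφmono.tendsto_atTop)
    exact Nat.le_add_right (φ k) N
  have hθw : Tendsto (fun k => (w k).im / (w k).re) atTop (𝓝 θL) := by
    refine hφtend.congr fun k => ?_
    have hC := hwC k
    have hbabs : |(w k).im / (w k).re| ≤ Δ := by
      rw [abs_div, _root_.abs_of_pos hC.1, div_le_iff₀ hC.1]
      exact hC.2
    have hab := abs_le.mp hbabs
    show θf (φ k) = _
    rw [hθf]
    simp only []
    rw [min_eq_right hab.2, max_eq_right hab.1]
  have hθLabs : |θL| ≤ Δ := abs_le.mpr ⟨hθLmem.1, hθLmem.2⟩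
  have hkey := FabcAux.key a b c ha hc hΔ w hwC hw0 θL hθLabs hθw
  rw [FabcAux.JJ_eq a c ha hc θL, FabcAux.JJ_zero a c] at hkey
  exact hkey
end

section
/- For every constant Δ > 0 there exist constants C > 0 and ε > 0, depending only on Δ, such that for all complex z = x + iy with x > 0 and Δx ≤ |y| ≤ π, one has |ξ(e^{−z})| ≤ C · ξ(e^{−x}) · e^{−ε/x}, where ξ(q) := ∏_{j≥1}(1 + q^{2j−1}). -/
set_option maxHeartbeats 1000000

open Real

lemma one_sub_cos_lb {y : ℝ} (hy : |y| ≤ π) : 2 * y ^ 2 ≤ π ^ 2 * (1 - Real.cos y) := by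
  have hπ : 0 < π := Real.pi_pos
  have hsin : 2 / π * (|y| / 2) ≤ Real.sin (|y| / 2) :=
    Real.mul_le_sin (by positivity) (by linarith [abs_nonneg y])
  have hid : Real.sin (|y|/2) ^ 2 = 1/2 - Real.cos (2 * (|y|/2)) / 2 :=
    Real.sin_sq_eq_half_sub _
  have h2 : 2 * (|y|/2) = |y| := by ring
  rw [h2, Real.cos_abs] at hid
  have hq : (2 / π * (|y| / 2)) ^ 2 ≤ Real.sin (|y|/2) ^ 2 :=
    pow_le_pow_left₀ (by positivity) hsin 2
  have hexp : (2 / π * (|y| / 2)) ^ 2 = y^2 / π^2 := by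
    rw [show 2 / π * (|y| / 2) = |y|/π by ring, div_pow, sq_abs y]
  rw [hexp, hid] at hq
  rw [div_le_iff₀ (by positivity : (0:ℝ) < π^2)] at hq
  nlinarith [hq]

lemma key_ineq {Δ x y : ℝ} (hΔ : 0 < Δ) (hx : 0 < x) (h1 : Δ * x ≤ |y|) (h2 : |y| ≤ π) :
    4 * (Real.exp (-(π/Δ)) * Δ^2 / (16 * π^2 * (1+Δ^2))) / x
      ≤ Real.exp (-x) / (1 - Real.exp (-x)^2)
        - Real.exp (-x) * Real.cos y * (1 - Real.exp (-x)^2)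
            / (1 - 2*Real.exp (-x)^2*Real.cos (2*y) + Real.exp (-x)^4) := by
  have hπ : 0 < π := Real.pi_pos
  have hπ3 : 3 < π := Real.pi_gt_three
  have hΔne : Δ ≠ 0 := hΔ.ne'
  have hπne : π ≠ 0 := hπ.ne'
  set r := Real.exp (-x) with hrdef
  have hr0 : 0 < r := Real.exp_pos _
  have hr1 : r < 1 := by
    rw [hrdef, ← Real.exp_zero]; exact Real.exp_lt_exp.mpr (by linarith)
  set R := Real.exp (-(π/Δ)) with hRdef
  set ε := R * Δ^2 / (16 * π^2 * (1+Δ^2)) with hεdef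
  have hR0 : 0 < R := Real.exp_pos _
  have hε0 : 0 < ε := by rw [hεdef]; positivity
  have hxπ : x ≤ π / Δ := by
    rw [le_div_iff₀ hΔ]; nlinarith [le_trans h1 h2]
  have hRr : R ≤ r := Real.exp_le_exp.mpr (by linarith)
  have he0 : 0 < 1 - r^2 := by nlinarith
  have he2x : 1 - r^2 ≤ 2*x := by
    have h := Real.add_one_le_exp (-(2*x))
    have hrr : Real.exp (-(2*x)) = r^2 := by
      rw [hrdef, pow_two, ← Real.exp_add]; ring_nf
    rw [hrr] at h; linarith
  have hcos2 : Real.cos (2*y) = 1 - 2*Real.sin y^2 := by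
    have := Real.sin_sq_eq_half_sub y; linarith
  have hsy2 : Real.sin y ^ 2 ≤ y^2 := Real.sin_sq_le_sq
  set c := Real.cos y with hcdef
  have hc1 : c ≤ 1 := Real.cos_le_one y
  have hcm : -1 ≤ c := Real.neg_one_le_cos y
  set P := 1 - 2*r^2*Real.cos (2*y) + r^4 with hPdef
  have hPe : P = (1-r^2)^2 + 4*r^2*Real.sin y^2 := by rw [hPdef, hcos2]; ring
  have hP0 : 0 < P := by rw [hPe]; nlinarith [sq_nonneg (Real.sin y)]
  have hy0 : 0 < y^2 := by
    have h3 : 0 < |y| := lt_of_lt_of_le (by positivity) h1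
    rw [← sq_abs]; positivity
  have hεle : ε ≤ R / 8 := by
    have hπ2 : 9 ≤ π^2 := by nlinarith
    have h8 : 8*Δ^2 ≤ 16*π^2*(1+Δ^2) := by nlinarith [sq_nonneg Δ]
    rw [hεdef, div_le_div_iff₀ (by positivity) (by norm_num : (0:ℝ) < 8)]
    nlinarith [mul_le_mul_of_nonneg_left h8 hR0.le]
  rcases lt_or_ge c 0 with hc0 | hc0
  · -- cos y < 0 : second term is nonpositive
    have hrc : c * (r*(1-r^2)) ≤ 0 :=
      mul_nonpos_of_nonpos_of_nonneg hc0.le (by positivity)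
    have hneg : r*c*(1-r^2)/P ≤ 0 :=
      div_nonpos_iff.mpr (Or.inr ⟨by nlinarith [hrc], hP0.le⟩)
    have hmain : 4 * ε / x ≤ r / (1 - r^2) := by
      rw [div_le_div_iff₀ hx he0]
      calc 4*ε*(1-r^2) ≤ (R/2)*(2*x) :=
            mul_le_mul (by linarith) he2x (by linarith) (by positivity)
        _ = R*x := by ring
        _ ≤ r*x := mul_le_mul_of_nonneg_right hRr hx.le
    linarith
  · -- main case cos y ≥ 0
    set Q := (1-r^2)^2 + 4*r^2*(1+c) with hQdef
    have hQ1 : 1 ≤ Q := by rw [hQdef]; nlinarith [sq_nonneg r, sq_nonneg (1+r^2), mul_nonneg (sq_nonneg r) hc0]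
    have hPc : P = (1-r^2)^2 + 4*r^2*(1-c^2) := by
      rw [hPe, Real.sin_sq, hcdef]
    have hsplit : r / (1-r^2) - r*c*(1-r^2)/P = r*((1-c)*Q) / ((1-r^2)*P) := by
      rw [div_sub_div _ _ he0.ne' hP0.ne']
      congr 1
      rw [hPc, hQdef]; ring
    rw [hsplit, div_le_div_iff₀ hx (by positivity)]
    have h1c : 2*y^2 ≤ π^2*(1-c) := by
      have := one_sub_cos_lb h2
      rw [← hcdef] at this; exact this
    have h1cn : (0:ℝ) ≤ 1 - c := by linarith
    have hΔx : Δ^2*x^2 ≤ y^2 := by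
      have h := mul_self_le_mul_self (by positivity : (0:ℝ) ≤ Δ*x) h1
      rw [abs_mul_abs_self] at h; nlinarith [h]
    have hx2 : x^2 ≤ y^2/Δ^2 := by
      rw [le_div_iff₀ (by positivity)]; nlinarith [hΔx]
    have hPy : P ≤ 4*x^2 + 4*y^2 := by
      have hA := mul_self_le_mul_self he0.le he2x
      have hB : r^2 ≤ 1 := by nlinarith
      have hC : r^2 * Real.sin y^2 ≤ 1 * y^2 :=
        mul_le_mul hB hsy2 (sq_nonneg _) zero_le_one
      rw [hPe]; nlinarith [hA, hC]
    have hyc : 2*y^2/π^2 ≤ 1-c := by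
      rw [div_le_iff₀ (by positivity)]; nlinarith [h1c]
    calc 4*ε*((1-r^2)*P) ≤ 4*ε*((2*x)*(4*x^2+4*y^2)) := by
          apply mul_le_mul_of_nonneg_left _ (by positivity : (0:ℝ) ≤ 4*ε)
          exact mul_le_mul he2x hPy hP0.le (by linarith)
      _ ≤ 4*ε*((2*x)*(4*(y^2/Δ^2)+4*y^2)) := by
          apply mul_le_mul_of_nonneg_left _ (by positivity : (0:ℝ) ≤ 4*ε)
          apply mul_le_mul_of_nonneg_left _ (by linarith : (0:ℝ) ≤ 2*x)
          linarith [hx2]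
      _ = R*(2*y^2/π^2)*x := by rw [hεdef]; field_simp; ring
      _ ≤ (r*(1-c))*x := by
          apply mul_le_mul_of_nonneg_right _ hx.le
          exact mul_le_mul hRr hyc (by positivity) hr0.le
      _ ≤ r*((1-c)*Q)*x := by
          nlinarith [mul_nonneg (mul_nonneg (mul_nonneg hr0.le h1cn) hx.le)
            (by linarith : (0:ℝ) ≤ Q - 1)]

lemma factor_bound {w : ℂ} (hw : ‖w‖ ≤ 1) :
    ‖1 + w‖ ≤ (1 + ‖w‖) * Real.exp (-((‖w‖ - w.re) / 4)) := by
  have hre : w.re ≤ ‖w‖ := by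
    calc w.re ≤ |w.re| := le_abs_self _
    _ ≤ ‖w‖ := Complex.abs_re_le_norm w
    _ = ‖w‖ := rfl
  have hs0 : 0 ≤ ‖w‖ - w.re := by linarith
  have hw0 : 0 ≤ ‖w‖ := norm_nonneg w
  have hexp : 1 - (‖w‖ - w.re)/2 ≤ Real.exp (-((‖w‖ - w.re)/2)) := by
    have := Real.add_one_le_exp (-((‖w‖ - w.re)/2)); linarith
  have hb : (0:ℝ) ≤ 4 - (1+‖w‖)^2 := by nlinarith
  have hsq : ‖1 + w‖ ^ 2 ≤ ((1 + ‖w‖) * Real.exp (-((‖w‖ - w.re) / 4))) ^ 2 := by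
    have h1 : ‖1 + w‖ ^ 2 = 1 + 2 * w.re + ‖w‖^2 := by
      rw [Complex.sq_norm, Complex.normSq_apply,
        Complex.sq_norm, Complex.normSq_apply]
      simp [Complex.add_re, Complex.add_im]
      ring
    have h2 : ((1 + ‖w‖) * Real.exp (-((‖w‖ - w.re) / 4))) ^ 2
        = (1+‖w‖)^2 * Real.exp (-((‖w‖ - w.re)/2)) := by
      rw [mul_pow, pow_two (Real.exp _), ← Real.exp_add]
      ring_nf
    rw [h1, h2]
    have h4 : 1 + 2*w.re + ‖w‖^2 ≤ (1+‖w‖)^2 * (1 - (‖w‖ - w.re)/2) := by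
      nlinarith [mul_nonneg hs0 hb]
    nlinarith [mul_le_mul_of_nonneg_left hexp (by positivity : (0:ℝ) ≤ (1+‖w‖)^2)]
  exact (pow_le_pow_iff_left₀ (norm_nonneg _) (by positivity) (two_ne_zero)).mp hsq

open Real in
/-- Minor-arc bound: for every `Δ > 0` there are `C, ε > 0` depending only on `Δ` such
that for all `z = x + iy` with `x > 0` and `Δx ≤ |y| ≤ π`, one has
`|ξ(e^{−z})| ≤ C · ξ(e^{−x}) · e^{−ε/x}`, where `ξ(q) = ∏_{j≥1}(1+q^{2j−1})`. -/
theorem xi_minor_arc (Δ : ℝ) (hΔ : 0 < Δ) :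
    ∃ C > (0 : ℝ), ∃ ε > (0 : ℝ), ∀ z : ℂ, 0 < z.re →
      Δ * z.re ≤ |z.im| → |z.im| ≤ π →
      ‖∏' j : ℕ, (1 + Complex.exp (-z) ^ (2 * j + 1))‖ ≤
        C * (∏' j : ℕ, (1 + Real.exp (-z.re) ^ (2 * j + 1))) * Real.exp (-ε / z.re) := by
  have hπ : 0 < π := Real.pi_pos
  refine ⟨1, one_pos, Real.exp (-(π/Δ)) * Δ^2 / (16*π^2*(1+Δ^2)), by positivity, ?_⟩
  set ε := Real.exp (-(π/Δ)) * Δ^2 / (16*π^2*(1+Δ^2)) with hεdef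
  intro z hx hyl hyu
  set x := z.re with hxdef
  set y := z.im with hydef
  set q := Complex.exp (-z) with hqdef
  set r := Real.exp (-x) with hrdef
  have hqr : ‖q‖ = r := by
    rw [hqdef, Complex.norm_exp, Complex.neg_re, hrdef]
  have hr0 : 0 < r := Real.exp_pos _
  have hr1 : r < 1 := by
    rw [hrdef, ← Real.exp_zero]; exact Real.exp_lt_exp.mpr (by linarith)
  have hwnorm : ∀ j : ℕ, ‖q ^ (2*j+1)‖ = r ^ (2*j+1) := fun j => by rw [norm_pow, hqr]
  have hrj_le : ∀ j : ℕ, r ^ (2*j+1) ≤ r := fun j =>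
    pow_le_pow_of_le_one hr0.le hr1.le (by omega) |>.trans_eq (pow_one r)
  have hrj_lt1 : ∀ j : ℕ, r ^ (2*j+1) < 1 := fun j => pow_lt_one₀ hr0.le hr1 (by omega)
  -- geometric sums
  have hq2 : ‖q^2‖ < 1 := by rw [norm_pow, hqr]; nlinarith
  have hfq : (fun j : ℕ => q^(2*j+1)) = fun j : ℕ => q * (q^2)^j := by
    funext j; rw [pow_succ, pow_mul]; ring
  have hsq : HasSum (fun j : ℕ => q^(2*j+1)) (q * (1 - q^2)⁻¹) := by
    rw [hfq]; exact (hasSum_geometric_of_norm_lt_one hq2).mul_left q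
  have hr2 : ‖r^2‖ < 1 := by
    rw [Real.norm_eq_abs, abs_of_nonneg (by positivity)]; nlinarith
  have hfr : (fun j : ℕ => r^(2*j+1)) = fun j : ℕ => r * (r^2)^j := by
    funext j; rw [pow_succ, pow_mul]; ring
  have hsr : HasSum (fun j : ℕ => r^(2*j+1)) (r * (1 - r^2)⁻¹) := by
    rw [hfr]; exact (hasSum_geometric_of_norm_lt_one hr2).mul_left r
  have hss : HasSum (fun j : ℕ => r^(2*j+1) - (q^(2*j+1)).re)
      (r * (1 - r^2)⁻¹ - (q * (1 - q^2)⁻¹).re) := hsr.sub (Complex.hasSum_re hsq)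
  -- components of q and q^2
  have hq_re : q.re = r * Real.cos y := by
    rw [hqdef, Complex.exp_re, Complex.neg_re, Complex.neg_im, Real.cos_neg, hrdef, hxdef, hydef]
  have hq_im : q.im = -(r * Real.sin y) := by
    rw [hqdef, Complex.exp_im, Complex.neg_re, Complex.neg_im, Real.sin_neg, hrdef, hxdef, hydef]
    ring
  have hq2e : q^2 = Complex.exp (-z + -z) := by rw [Complex.exp_add, hqdef, pow_two]
  have he1 : Real.exp ((-z + -z).re) = r^2 := by
    rw [Complex.add_re, Complex.neg_re, Real.exp_add, hrdef, pow_two, hxdef]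
  have hq2_re : (q^2).re = r^2 * Real.cos (2*y) := by
    rw [hq2e, Complex.exp_re, he1, Complex.add_im, Complex.neg_im,
      show -z.im + -z.im = -(2*z.im) by ring, Real.cos_neg, hydef]
  have hq2_im : (q^2).im = -(r^2 * Real.sin (2*y)) := by
    rw [hq2e, Complex.exp_im, he1, Complex.add_im, Complex.neg_im,
      show -z.im + -z.im = -(2*z.im) by ring, Real.sin_neg, hydef]
    ring
  have hs2c2 : Real.sin (2*y)^2 + Real.cos (2*y)^2 = 1 := Real.sin_sq_add_cos_sq _
  have hNP : Complex.normSq (1 - q^2) = 1 - 2*r^2*Real.cos (2*y) + r^4 := by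
    rw [Complex.normSq_apply, Complex.sub_re, Complex.sub_im, Complex.one_re, Complex.one_im,
      hq2_re, hq2_im]
    linear_combination (r^4) * hs2c2
  have htrig : Real.cos (2*y) * Real.cos y + Real.sin (2*y) * Real.sin y = Real.cos y := by
    have h := Real.cos_sub (2*y) y
    rw [show 2*y - y = y by ring] at h
    linarith
  have hre_eq : (q * (1 - q^2)⁻¹).re
      = r * Real.cos y * (1-r^2) / (1 - 2*r^2*Real.cos (2*y) + r^4) := by
    rw [← div_eq_mul_inv, Complex.div_re, hNP, Complex.sub_re, Complex.sub_im, Complex.one_re,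
      Complex.one_im, hq2_re, hq2_im, hq_re, hq_im, ← add_div]
    congr 1
    linear_combination (-(r^3)) * htrig
  -- the lower bound for the sum
  have hKey := key_ineq hΔ hx hyl hyu
  have hS : 4 * ε / x ≤ ∑' j : ℕ, (r^(2*j+1) - (q^(2*j+1)).re) := by
    rw [hss.tsum_eq, hre_eq]
    rw [← hrdef, ← hεdef, div_eq_mul_inv r (1-r^2)] at hKey
    exact hKey
  -- factor-wise bound
  have hfac : ∀ j : ℕ, ‖1 + q^(2*j+1)‖
      ≤ (1 + r^(2*j+1)) * Real.exp (-((r^(2*j+1) - (q^(2*j+1)).re)/4)) := by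
    intro j
    have h := factor_bound (w := q^(2*j+1)) (by rw [hwnorm]; exact (hrj_lt1 j).le)
    rw [hwnorm] at h
    exact h
  -- multipliability (complex)
  have hlogsum : Summable fun j : ℕ => Complex.log (1 + q^(2*j+1)) := by
    apply Summable.of_norm_bounded (g := fun j : ℕ => (r*(1-r)⁻¹/2 + 1) * r^(2*j+1))
      (hsr.summable.mul_left _)
    intro j
    have hb := Complex.norm_log_one_add_le (z := q^(2*j+1)) (by rw [hwnorm]; exact hrj_lt1 j)
    rw [hwnorm] at hb
    have h1r : 0 < 1 - r := by linarith
    have h1j : 0 < 1 - r^(2*j+1) := by linarith [hrj_lt1 j]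
    have hinv : (1 - r^(2*j+1))⁻¹ ≤ (1-r)⁻¹ := by
      apply inv_anti₀ h1r
      linarith [hrj_le j]
    have hjn : (0:ℝ) ≤ r^(2*j+1) := by positivity
    have hmm : r^(2*j+1) * (1 - r^(2*j+1))⁻¹ ≤ r * (1-r)⁻¹ :=
      mul_le_mul (hrj_le j) hinv (by positivity) hr0.le
    calc ‖Complex.log (1 + q^(2*j+1))‖
        ≤ (r^(2*j+1))^2 * (1 - r^(2*j+1))⁻¹ / 2 + r^(2*j+1) := hb
      _ ≤ (r*(1-r)⁻¹/2 + 1) * r^(2*j+1) := by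
          have := mul_le_mul_of_nonneg_left hmm hjn
          nlinarith [this]
  have hne : ∀ j : ℕ, (1 : ℂ) + q^(2*j+1) ≠ 0 := by
    intro j h0
    have h1 : q^(2*j+1) = -1 := by linear_combination h0
    have := hwnorm j
    rw [h1] at this
    simp at this
    nlinarith [hrj_lt1 j, this]
  have mq : Multipliable (fun j : ℕ => 1 + q^(2*j+1)) := by
    have := Complex.multipliable_of_summable_log (f := fun j : ℕ => 1 + q^(2*j+1)) hlogsum
    exact this
  -- multipliability (real)
  have hlogsumr : Summable fun j : ℕ => Real.log (1 + r^(2*j+1)) := by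
    apply Summable.of_nonneg_of_le (fun j => Real.log_nonneg (by nlinarith [pow_pos hr0 (2*j+1)]))
      (fun j => ?_) hsr.summable
    have := Real.log_le_sub_one_of_pos (x := 1 + r^(2*j+1)) (by positivity)
    linarith
  have mr : Multipliable (fun j : ℕ => 1 + r^(2*j+1)) := by
    have := Real.multipliable_of_summable_log (f := fun j : ℕ => 1 + r^(2*j+1))
      (fun j => by positivity) hlogsumr
    exact this
  -- partial sums/products
  have hAB : ∀ n : ℕ, ‖∏ j ∈ Finset.range n, (1 + q^(2*j+1))‖
      ≤ (∏ j ∈ Finset.range n, (1 + r^(2*j+1)))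
        * Real.exp (-(∑ j ∈ Finset.range n, (r^(2*j+1) - (q^(2*j+1)).re)) / 4) := by
    intro n
    rw [norm_prod]
    calc ∏ j ∈ Finset.range n, ‖1 + q^(2*j+1)‖
        ≤ ∏ j ∈ Finset.range n,
            ((1 + r^(2*j+1)) * Real.exp (-((r^(2*j+1) - (q^(2*j+1)).re)/4))) :=
          Finset.prod_le_prod (fun j _ => norm_nonneg _) (fun j _ => hfac j)
      _ = (∏ j ∈ Finset.range n, (1 + r^(2*j+1)))
            * Real.exp (-(∑ j ∈ Finset.range n, (r^(2*j+1) - (q^(2*j+1)).re)) / 4) := by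
          rw [Finset.prod_mul_distrib, ← Real.exp_sum, Finset.sum_neg_distrib,
            ← Finset.sum_div, neg_div]
  -- limits
  set S := ∑' j : ℕ, (r^(2*j+1) - (q^(2*j+1)).re) with hSdef
  have htA : Filter.Tendsto (fun n => ‖∏ j ∈ Finset.range n, (1 + q^(2*j+1))‖)
      Filter.atTop (nhds ‖∏' j : ℕ, (1 + q^(2*j+1))‖) :=
    (mq.hasProd.tendsto_prod_nat).norm
  have htSum : Filter.Tendsto (fun n => ∑ j ∈ Finset.range n, (r^(2*j+1) - (q^(2*j+1)).re))
      Filter.atTop (nhds S) := by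
    rw [hSdef, ← hss.tsum_eq] at *
    exact hss.tendsto_sum_nat
  have htExp : Filter.Tendsto
      (fun n => Real.exp (-(∑ j ∈ Finset.range n, (r^(2*j+1) - (q^(2*j+1)).re)) / 4))
      Filter.atTop (nhds (Real.exp (-S/4))) :=
    (Real.continuous_exp.tendsto _).comp ((htSum.neg).div_const 4)
  have htB : Filter.Tendsto (fun n => (∏ j ∈ Finset.range n, (1 + r^(2*j+1)))
      * Real.exp (-(∑ j ∈ Finset.range n, (r^(2*j+1) - (q^(2*j+1)).re)) / 4))
      Filter.atTop (nhds ((∏' j : ℕ, (1 + r^(2*j+1))) * Real.exp (-S/4))) :=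
    (mr.hasProd.tendsto_prod_nat).mul htExp
  have hlim : ‖∏' j : ℕ, (1 + q^(2*j+1))‖
      ≤ (∏' j : ℕ, (1 + r^(2*j+1))) * Real.exp (-S/4) :=
    le_of_tendsto_of_tendsto' htA htB hAB
  have hPr0 : 0 ≤ ∏' j : ℕ, (1 + r^(2*j+1)) :=
    ge_of_tendsto' mr.hasProd.tendsto_prod_nat
      (fun n => Finset.prod_nonneg fun j _ => by positivity)
  have hε0 : 0 < ε := by rw [hεdef]; positivity
  have h4 : ε/x ≤ S/4 := by
    rw [div_le_iff₀ hx] at hS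
    rw [div_le_div_iff₀ hx (by norm_num : (0:ℝ) < 4)]
    linarith
  have hexp_le : Real.exp (-S/4) ≤ Real.exp (-ε/x) := by
    apply Real.exp_le_exp.mpr
    rw [neg_div, neg_div]
    exact neg_le_neg h4
  calc ‖∏' j : ℕ, (1 + q^(2*j+1))‖
      ≤ (∏' j : ℕ, (1 + r^(2*j+1))) * Real.exp (-S/4) := hlim
    _ ≤ (∏' j : ℕ, (1 + r^(2*j+1))) * Real.exp (-ε/x) :=
        mul_le_mul_of_nonneg_left hexp_le hPr0
    _ = 1 * (∏' j : ℕ, (1 + r^(2*j+1))) * Real.exp (-ε/x) := by rw [one_mul]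
end

section
/- For every integer t ≥ 2: (1) there exist rational numbers a and b with β*_t = a + b·ln(2); and (2) β*_t is a rational number if and only if t is a multiple of 3. -/
open Polynomial MeasureTheory intervalIntegral Real Finset Nat


lemma aux_dvd_fact (n : ℕ) (P : ℤ[X]) (h : (X : ℤ[X])^n ∣ P) (j : ℕ) :
    (n ! : ℤ) ∣ (derivative^[j] P).eval 0 := by
  rw [← Polynomial.coeff_zero_eq_eval_zero, Polynomial.coeff_iterate_derivative]
  simp only [zero_add, nsmul_eq_mul]
  rcases lt_or_ge j n with hj | hj
  · simp [Polynomial.X_pow_dvd_iff.mp h j hj]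
  · refine Dvd.dvd.mul_right ?_ _
    rw [Nat.descFactorial_self]
    exact_mod_cast Int.natCast_dvd_natCast.mpr (Nat.factorial_dvd_factorial hj)

lemma iter_deriv_comp_shift (P : ℤ[X]) (j : ℕ) :
    derivative^[j] (P.comp (X + C 1)) = (derivative^[j] P).comp (X + C 1) := by
  induction j with
  | zero => simp
  | succ j ih =>
    rw [Function.iterate_succ_apply', ih, Function.iterate_succ_apply',
      Polynomial.derivative_comp]
    simp [mul_comm]

set_option maxHeartbeats 1000000 in
lemma log_two_irrational : Irrational (Real.log 2) := by
  intro hmem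
  obtain ⟨r, hr⟩ := hmem
  set ℓ := Real.log 2 with hℓ
  have hℓpos : 0 < ℓ := Real.log_pos (by norm_num)
  have hrpos : 0 < r := by
    have : (0:ℝ) < (r:ℝ) := by rw [hr]; exact hℓpos
    exact_mod_cast this
  set a : ℤ := r.num with haa
  set b : ℕ := r.den with hbb
  have ha : 0 < a := Rat.num_pos.mpr hrpos
  have hapos : (0:ℝ) < (a:ℝ) := by exact_mod_cast ha
  have hb : 0 < b := r.pos
  have hbpos : (0:ℝ) < (b:ℝ) := by exact_mod_cast hb
  have hba : (b:ℝ) * ℓ = (a:ℝ) := by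
    rw [← hr, Rat.cast_def, haa, hbb]
    field_simp
  have htend := FloorSemiring.tendsto_pow_div_factorial_atTop ((a:ℝ)^2)
  have hev := (htend.eventually_lt_const (show (0:ℝ) < 1/(2*(a:ℝ)) by positivity)).exists
  obtain ⟨n, hn⟩ := hev
  -- the polynomial
  set p : ℤ[X] := X^n * (1 - X)^n with hp
  have hdeg : derivative^[2*n+1] p = 0 := by
    apply Polynomial.iterate_derivative_eq_zero
    calc p.natDegree ≤ ((X:ℤ[X])^n).natDegree + (((1:ℤ[X])-X)^n).natDegree :=
          Polynomial.natDegree_mul_le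
    _ ≤ n + n := by
        have h1 : ((1:ℤ[X])-X).natDegree ≤ 1 := by
          refine (Polynomial.natDegree_sub_le _ _).trans ?_
          simp
        have h2 : (((1:ℤ[X])-X)^n).natDegree ≤ n := by
          refine (Polynomial.natDegree_pow_le).trans ?_
          calc n * ((1:ℤ[X])-X).natDegree ≤ n * 1 := Nat.mul_le_mul_left n h1
          _ = n := by omega
        rw [Polynomial.natDegree_X_pow]
        omega
    _ < 2*n+1 := by omega
  set G : ℤ[X] := ∑ j ∈ Finset.range (2*n+1),
      C ((-1)^j * (b:ℤ)^(j+1) * a^(2*n-j)) * derivative^[j] p with hG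
  have hGderiv : derivative G = ∑ j ∈ Finset.range (2*n+1),
      C ((-1)^j * (b:ℤ)^(j+1) * a^(2*n-j)) * derivative^[j+1] p := by
    rw [hG, map_sum]
    refine Finset.sum_congr rfl fun j _ => ?_
    rw [Polynomial.derivative_C_mul, Function.iterate_succ_apply']
  have key : ∀ x : ℝ, ℓ * (aeval x G) + aeval x (derivative G)
      = (a:ℝ)^(2*n+1) * aeval x p := by
    intro x
    set u : ℕ → ℝ := fun j =>
      (-1:ℝ)^j * (b:ℝ)^j * (a:ℝ)^(2*n+1-j) * aeval x (derivative^[j] p) with hu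
    have hsum := Finset.sum_range_sub' u (2*n+1)
    have hstep : ∀ j ∈ Finset.range (2*n+1),
        ℓ * (((-1:ℤ)^j * (b:ℤ)^(j+1) * a^(2*n-j) : ℤ) : ℝ) * aeval x (derivative^[j] p)
          + (((-1:ℤ)^j * (b:ℤ)^(j+1) * a^(2*n-j) : ℤ) : ℝ) * aeval x (derivative^[j+1] p)
        = u j - u (j+1) := by
      intro j hj
      have hjle : j ≤ 2*n := by simpa [Nat.lt_succ_iff] using hj
      have e1 : 2*n+1-j = (2*n-j)+1 := by omega
      have e2 : 2*n+1-(j+1) = 2*n-j := by omega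
      rw [hu]
      simp only [e1, e2]
      push_cast
      rw [pow_succ ((a:ℝ)) (2*n-j)]
      linear_combination ((-1:ℝ))^j * (b:ℝ)^j * (a:ℝ)^(2*n-j)
        * (aeval x (derivative^[j] p)) * hba
    calc ℓ * (aeval x G) + aeval x (derivative G)
        = ∑ j ∈ Finset.range (2*n+1),
            (ℓ * (((-1:ℤ)^j * (b:ℤ)^(j+1) * a^(2*n-j) : ℤ) : ℝ) * aeval x (derivative^[j] p)
              + (((-1:ℤ)^j * (b:ℤ)^(j+1) * a^(2*n-j) : ℤ) : ℝ) * aeval x (derivative^[j+1] p)) := by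
          rw [hG, hGderiv, map_sum, map_sum, Finset.mul_sum, ← Finset.sum_add_distrib]
          refine Finset.sum_congr rfl fun j _ => ?_
          simp only [map_mul, Polynomial.aeval_C, algebraMap_int_eq, Int.coe_castRingHom]
          push_cast
          ring
    _ = ∑ j ∈ Finset.range (2*n+1), (u j - u (j+1)) := Finset.sum_congr rfl hstep
    _ = u 0 - u (2*n+1) := hsum
    _ = (a:ℝ)^(2*n+1) * aeval x p := by
        rw [hu]
        simp [hdeg]
  have haevalp : ∀ x : ℝ, (aeval x p : ℝ) = x^n * (1-x)^n := by
    intro x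
    rw [hp]
    simp
  have hcont : Continuous fun x : ℝ => Real.exp (ℓ*x) * ((a:ℝ)^(2*n+1) * aeval x p) :=
    (Real.continuous_exp.comp (continuous_const.mul continuous_id)).mul
      (continuous_const.mul (Polynomial.continuous_aeval p))
  have hcont2 : Continuous fun x : ℝ => Real.exp (ℓ*x) * (aeval x p : ℝ) :=
    (Real.continuous_exp.comp (continuous_const.mul continuous_id)).mul
      (Polynomial.continuous_aeval p)
  have e1 : (Polynomial.aeval (1:ℝ)) G = ((G.eval 1 : ℤ) : ℝ) := by
    rw [Polynomial.aeval_def, Polynomial.eval₂_at_one]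
    simp
  have e0 : (Polynomial.aeval (0:ℝ)) G = ((G.eval 0 : ℤ) : ℝ) := by
    rw [Polynomial.aeval_def, Polynomial.eval₂_at_zero, Polynomial.coeff_zero_eq_eval_zero]
    simp
  have hFTC : ∫ x in (0:ℝ)..1, Real.exp (ℓ*x) * ((a:ℝ)^(2*n+1) * aeval x p)
      = 2 * ((G.eval 1 : ℤ) : ℝ) - ((G.eval 0 : ℤ) : ℝ) := by
    have hd : ∀ x ∈ Set.uIcc (0:ℝ) 1, HasDerivAt (fun x => Real.exp (ℓ*x) * aeval x G)
        (Real.exp (ℓ*x) * ((a:ℝ)^(2*n+1) * aeval x p)) x := by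
      intro x _
      have h1 : HasDerivAt (fun x : ℝ => ℓ * x) ℓ x := by
        simpa using (hasDerivAt_id x).const_mul ℓ
      have h2 := h1.exp
      have h3 := G.hasDerivAt_aeval x
      have h4 := h2.mul h3
      refine h4.congr_deriv (Eq.symm ?_)
      rw [← key x]
      ring
    rw [intervalIntegral.integral_eq_sub_of_hasDerivAt hd (hcont.intervalIntegrable 0 1)]
    rw [e1, e0, mul_one, mul_zero, Real.exp_zero, Real.exp_log (by norm_num : (0:ℝ) < 2)]
    ring
  set I : ℝ := ∫ x in (0:ℝ)..1, Real.exp (ℓ*x) * (aeval x p : ℝ) with hI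
  have hIpos : 0 < I := by
    apply intervalIntegral.intervalIntegral_pos_of_pos_on (hcont2.intervalIntegrable 0 1)
      _ one_pos
    intro x hx
    obtain ⟨hx0, hx1⟩ := hx
    rw [haevalp]
    have h1 : (0:ℝ) < 1 - x := by linarith
    positivity
  have hIle : I ≤ 2 := by
    have h2 : I ≤ ∫ _x in (0:ℝ)..1, (2:ℝ) := by
      apply intervalIntegral.integral_mono_on (by norm_num) (hcont2.intervalIntegrable 0 1)
        (intervalIntegrable_const)
      intro x hx
      obtain ⟨hx0, hx1⟩ := hx
      have h1 : Real.exp (ℓ*x) ≤ 2 := by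
        rw [← Real.exp_log (show (0:ℝ) < 2 by norm_num)]
        apply Real.exp_le_exp.mpr
        nlinarith
      have hpa : (aeval x p : ℝ) ≤ 1 := by
        rw [haevalp]
        have hxn : x^n ≤ 1 := pow_le_one₀ hx0 hx1
        have h1xn : (1-x)^n ≤ 1 := pow_le_one₀ (by linarith) (by linarith)
        nlinarith [pow_nonneg hx0 n, pow_nonneg (show (0:ℝ) ≤ 1-x by linarith) n]
      have hp0 : (0:ℝ) ≤ (aeval x p : ℝ) := by
        rw [haevalp]
        have h1 : (0:ℝ) ≤ 1 - x := by linarith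
        positivity
      nlinarith [Real.exp_pos (ℓ*x)]
    simpa using h2
  have hd0 : (n ! : ℤ) ∣ G.eval 0 := by
    rw [hG, Polynomial.eval_finset_sum]
    apply Finset.dvd_sum
    intro j _
    rw [Polynomial.eval_mul, Polynomial.eval_C]
    exact Dvd.dvd.mul_left (aux_dvd_fact n p (by rw [hp]; exact dvd_mul_right _ _) j) _
  have hd1 : (n ! : ℤ) ∣ G.eval 1 := by
    rw [hG, Polynomial.eval_finset_sum]
    apply Finset.dvd_sum
    intro j _
    rw [Polynomial.eval_mul, Polynomial.eval_C]
    refine Dvd.dvd.mul_left ?_ _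
    have hcomp : (X:ℤ[X])^n ∣ p.comp (X + C 1) := by
      refine ⟨(X + C 1)^n * (-1)^n, ?_⟩
      rw [hp]
      rw [Polynomial.mul_comp, Polynomial.pow_comp, Polynomial.pow_comp,
        Polynomial.sub_comp, Polynomial.one_comp, Polynomial.X_comp]
      rw [Polynomial.C_1]
      ring
    have hdvd := aux_dvd_fact n _ hcomp j
    rwa [iter_deriv_comp_shift, Polynomial.eval_comp, Polynomial.eval_add, Polynomial.eval_X,
      Polynomial.eval_C, zero_add] at hdvd
  obtain ⟨k0, hk0⟩ := hd0
  obtain ⟨k1, hk1⟩ := hd1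
  have hmain : (a:ℝ)^(2*n+1) * I = (n ! : ℝ) * ((2*k1 - k0 : ℤ) : ℝ) := by
    have hstep2 : (a:ℝ)^(2*n+1) * I
        = ∫ x in (0:ℝ)..1, Real.exp (ℓ*x) * ((a:ℝ)^(2*n+1) * aeval x p) := by
      rw [hI, ← intervalIntegral.integral_const_mul]
      congr 1
      funext x
      ring
    rw [hstep2, hFTC, hk0, hk1]
    push_cast
    ring
  have hKpos : 0 < (2*k1 - k0 : ℤ) := by
    have h1 : 0 < (a:ℝ)^(2*n+1) * I := by positivity
    rw [hmain] at h1
    by_contra hcon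
    push_neg at hcon
    have h2 : ((2*k1-k0:ℤ):ℝ) ≤ 0 := by exact_mod_cast hcon
    have h3 : (0:ℝ) < (n ! : ℝ) := by positivity
    nlinarith
  have hfinal : (n ! : ℝ) ≤ 2 * (a:ℝ) * ((a:ℝ)^2)^n := by
    have hK1 : (1:ℝ) ≤ ((2*k1-k0:ℤ):ℝ) := by exact_mod_cast hKpos
    have h3 : (0:ℝ) < (n ! : ℝ) := by positivity
    calc (n ! :ℝ) = (n ! :ℝ) * 1 := by ring
    _ ≤ (n ! :ℝ) * ((2*k1-k0:ℤ):ℝ) := by nlinarith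
    _ = (a:ℝ)^(2*n+1) * I := hmain.symm
    _ ≤ (a:ℝ)^(2*n+1) * 2 := by
        apply mul_le_mul_of_nonneg_left hIle (by positivity)
    _ = 2*(a:ℝ)*((a:ℝ)^2)^n := by ring
  have hfact : (0:ℝ) < (n ! : ℝ) := by positivity
  rw [div_lt_div_iff₀ hfact (by positivity)] at hn
  nlinarith



lemma one_add_exp_pos (x : ℝ) : (0:ℝ) < 1 + Real.exp (-2*x) := by
  have := Real.exp_pos (-2*x); linarith

lemma Ifun_integrable (a c : ℕ) (ha : 1 ≤ a) :
    MeasureTheory.IntegrableOn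
      (fun x => Real.exp (-(a:ℝ)*x) / (1 + Real.exp (-2*x)) ^ c) (Set.Ioi (0:ℝ)) := by
  have hc : Continuous fun x : ℝ => Real.exp (-(a:ℝ)*x) / (1 + Real.exp (-2*x)) ^ c := by
    apply Continuous.div
    · exact Real.continuous_exp.comp (continuous_const.mul continuous_id)
    · exact (continuous_const.add (Real.continuous_exp.comp
        (continuous_const.mul continuous_id))).pow c
    · intro x
      exact pow_ne_zero _ (ne_of_gt (one_add_exp_pos x))
  have hb : (0:ℝ) < (a:ℝ) := by exact_mod_cast ha
  apply MeasureTheory.Integrable.mono' (exp_neg_integrableOn_Ioi 0 hb)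
  · exact hc.aestronglyMeasurable.restrict
  · filter_upwards with x
    rw [Real.norm_eq_abs, abs_of_nonneg (by positivity)]
    apply div_le_self (le_of_lt (Real.exp_pos _))
    exact one_le_pow₀ (by nlinarith [Real.exp_pos (-2*x)])

lemma tendsto_exp_const_mul (b : ℝ) (hb : 0 < b) :
    Filter.Tendsto (fun x : ℝ => Real.exp (-b*x)) Filter.atTop (nhds 0) :=
  Real.tendsto_exp_atBot.comp (Filter.tendsto_id.const_mul_atTop_of_neg (neg_neg_iff_pos.2 hb))

lemma Ical_c_zero (m : ℕ) (hm : 1 ≤ m) : Ical (2*m) 0 = 1/(2*m) := by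
  have hb : (0:ℝ) < 2*(m:ℝ) := by positivity
  have hderiv : ∀ x ∈ Set.Ici (0:ℝ),
      HasDerivAt (fun x : ℝ => -(Real.exp (-(2*(m:ℝ))*x) / (2*(m:ℝ))))
        (Real.exp (-((2*m : ℕ):ℝ)*x) / (1 + Real.exp (-2*x)) ^ 0) x := by
    intro x _
    have h1 : HasDerivAt (fun x : ℝ => (-(2*(m:ℝ)))*x) (-(2*(m:ℝ))) x := by
      simpa using (hasDerivAt_id x).const_mul (-(2*(m:ℝ)))
    have h2 := ((h1.exp).div_const (2*(m:ℝ))).neg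
    refine h2.congr_deriv (Eq.symm ?_)
    rw [pow_zero, div_one]
    push_cast
    field_simp
  have htend : Filter.Tendsto (fun x : ℝ => -(Real.exp (-(2*(m:ℝ))*x) / (2*(m:ℝ))))
      Filter.atTop (nhds 0) := by
    have := ((tendsto_exp_const_mul (2*(m:ℝ)) hb).div_const (2*(m:ℝ))).neg
    simpa using this
  rw [Ical, MeasureTheory.integral_Ioi_of_hasDerivAt_of_tendsto' hderiv
    (by simpa using Ifun_integrable (2*m) 0 (by omega)) htend]
  simp

lemma tendsto_one_add_exp :
    Filter.Tendsto (fun x : ℝ => 1 + Real.exp (-2*x)) Filter.atTop (nhds 1) := by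
  have := (tendsto_exp_const_mul 2 (by norm_num)).const_add 1
  simpa using this

lemma hasDerivAt_one_add_exp (x : ℝ) :
    HasDerivAt (fun x : ℝ => 1 + Real.exp (-2*x)) (Real.exp (-2*x) * (-2)) x := by
  have h1 : HasDerivAt (fun x : ℝ => (-2:ℝ)*x) (-2) x := by
    simpa using (hasDerivAt_id x).const_mul (-2:ℝ)
  exact (h1.exp).const_add 1

lemma Ical_two_one : Ical 2 1 = (1/2) * Real.log 2 := by
  have hderiv : ∀ x ∈ Set.Ici (0:ℝ),
      HasDerivAt (fun x : ℝ => -(1/2) * Real.log (1 + Real.exp (-2*x)))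
        (Real.exp (-((2:ℕ):ℝ)*x) / (1 + Real.exp (-2*x)) ^ 1) x := by
    intro x _
    have h2 := ((hasDerivAt_one_add_exp x).log (ne_of_gt (one_add_exp_pos x))).const_mul (-(1/2):ℝ)
    refine h2.congr_deriv (Eq.symm ?_)
    rw [pow_one]
    push_cast
    have := one_add_exp_pos x
    field_simp
  have htend : Filter.Tendsto (fun x : ℝ => -(1/2) * Real.log (1 + Real.exp (-2*x)))
      Filter.atTop (nhds 0) := by
    have h3 : Filter.Tendsto (fun x : ℝ => Real.log (1 + Real.exp (-2*x)))
        Filter.atTop (nhds 0) := by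
      have h4 := (Real.continuousAt_log (by norm_num : (1:ℝ) ≠ 0)).tendsto.comp
        tendsto_one_add_exp
      simpa [Function.comp_def] using h4
    have := h3.const_mul (-(1/2):ℝ)
    simpa using this
  rw [Ical, MeasureTheory.integral_Ioi_of_hasDerivAt_of_tendsto' hderiv
    (by simpa using Ifun_integrable 2 1 (by omega)) htend]
  norm_num

lemma Ical_two_big (k : ℕ) :
    Ical 2 (k+2) = 1/(2*(k+1)) - 1/(2*(k+1)) * (1/2^(k+1)) := by
  set F : ℝ → ℝ := fun x => (1/(2*((k:ℝ)+1))) * ((1 + Real.exp (-2*x)) ^ (k+1))⁻¹ with hF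
  have hderiv : ∀ x ∈ Set.Ici (0:ℝ),
      HasDerivAt F (Real.exp (-((2:ℕ):ℝ)*x) / (1 + Real.exp (-2*x)) ^ (k+2)) x := by
    intro x _
    have hpos := one_add_exp_pos x
    have h1 := (hasDerivAt_one_add_exp x).pow (k+1)
    have h2 := (h1.inv (pow_ne_zero _ (ne_of_gt hpos))).const_mul (1/(2*((k:ℝ)+1)))
    refine h2.congr_deriv (Eq.symm ?_)
    simp only [Pi.pow_apply]
    push_cast
    rw [div_eq_iff (pow_ne_zero _ (ne_of_gt hpos))]
    have hkk : ((k:ℝ)+1) ≠ 0 := by positivity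
    field_simp
    ring_nf
  have htend : Filter.Tendsto F Filter.atTop (nhds (1/(2*((k:ℝ)+1)))) := by
    have h1 : Filter.Tendsto (fun x : ℝ => ((1 + Real.exp (-2*x)) ^ (k+1))⁻¹)
        Filter.atTop (nhds 1) := by
      have := ((tendsto_one_add_exp.pow (k+1)).inv₀ (by norm_num)).congr (fun x => rfl)
      simpa using this
    have := h1.const_mul (1/(2*((k:ℝ)+1)))
    simpa [hF] using this
  rw [Ical, MeasureTheory.integral_Ioi_of_hasDerivAt_of_tendsto' hderiv
    (by simpa using Ifun_integrable 2 (k+2) (by omega)) htend]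
  rw [hF]
  norm_num

lemma Ical_rec (m c : ℕ) (hm : 1 ≤ m) :
    Ical (2*(m+1)) (c+1) = Ical (2*m) c - Ical (2*m) (c+1) := by
  have h1 := Ifun_integrable (2*m) c (by omega)
  have h2 := Ifun_integrable (2*m) (c+1) (by omega)
  rw [Ical, Ical, Ical, ← MeasureTheory.integral_sub h1 h2]
  refine MeasureTheory.setIntegral_congr_fun measurableSet_Ioi fun x _ => ?_
  have hpos := one_add_exp_pos x
  have hsplit : (-((2*(m+1) : ℕ):ℝ))*x = (-((2*m : ℕ):ℝ))*x + (-2)*x := by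
    push_cast; ring
  rw [hsplit, Real.exp_add]
  field_simp
  ring

def Lq (m c : ℕ) : ℚ := if c = 0 then 0 else (-1)^(m+c) * ((m-1).choose (c-1)) / 2

lemma Lq_rec (m c : ℕ) : Lq (m+2) (c+1) = Lq (m+1) c - Lq (m+1) (c+1) := by
  rcases c with _ | c
  · simp only [Lq, if_neg (Nat.succ_ne_zero 0), if_pos rfl]
    norm_num
    rw [show m+2+1 = (m+1+1)+1 by ring, pow_succ]
    ring
  · simp only [Lq, if_neg (Nat.succ_ne_zero _)]
    have e1 : m+2-1 = m+1 := by omega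
    have e2 : m+1-1 = m := by omega
    have e3 : c+1-1 = c := by omega
    have e4 : c+1+1-1 = c+1 := by omega
    rw [e1, e2, e3, e4, Nat.choose_succ_succ' m c]
    push_cast
    ring

lemma Ical_eq (m c : ℕ) :
    ∃ q : ℚ, Ical (2*(m+1)) c = (q:ℝ) + (Lq (m+1) c : ℝ) * Real.log 2 := by
  induction m generalizing c with
  | zero =>
    match c with
    | 0 =>
      refine ⟨1/2, ?_⟩
      rw [show 2*(0+1) = 2*1 by rfl, Ical_c_zero 1 le_rfl]
      simp [Lq]
    | 1 =>
      refine ⟨0, ?_⟩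
      rw [show 2*(0+1) = 2 by rfl, Ical_two_one]
      simp [Lq]
    | (k+2) =>
      refine ⟨1/(2*(k+1)) - 1/(2*(k+1)) * (1/2^(k+1)), ?_⟩
      rw [show 2*(0+1) = 2 by rfl, Ical_two_big k]
      have hL : Lq 1 (k+2) = 0 := by
        simp [Lq, Nat.choose_eq_zero_of_lt]
      rw [hL]
      push_cast
      ring
  | succ m ih =>
    match c with
    | 0 =>
      refine ⟨1/(2*(m+2)), ?_⟩
      rw [Ical_c_zero (m+2) (by omega)]
      have hL : Lq (m+2) 0 = 0 := by simp [Lq]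
      rw [hL]
      push_cast
      ring
    | (c+1) =>
      obtain ⟨q1, h1⟩ := ih c
      obtain ⟨q2, h2⟩ := ih (c+1)
      refine ⟨q1 - q2, ?_⟩
      rw [Ical_rec (m+1) c (by omega), h1, h2, Lq_rec]
      push_cast
      ring


def Bq (t : ℕ) : ℚ :=
  if Even t then
    (∑ k ∈ Finset.range (ub t 4),
        (Nat.choose ((t - 2 * k - 2) / 2) (2 * k + 1) : ℚ) * Lq (2*k+2) ((t - 2 * k) / 2))
      + ∑ k ∈ Finset.range (ub t 2),
        (Nat.choose ((t - 2 * k - 2) / 2) (2 * k) : ℚ) * Lq (2*k+1) ((t - 2 * k) / 2)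
  else
    (∑ k ∈ Finset.range (ub t 1),
        (Nat.choose ((t - 2 * k - 1) / 2) (2 * k) : ℚ) * Lq (2*k+1) ((t - 2 * k + 1) / 2))
      + ∑ k ∈ Finset.range (ub t 5),
        (Nat.choose ((t - 2 * k - 3) / 2) (2 * k + 1) : ℚ) * Lq (2*k+2) ((t - 2 * k - 1) / 2)

lemma Ical_eq' (m c : ℕ) (hm : 1 ≤ m) :
    ∃ q : ℚ, Ical (2*m) c = (q:ℝ) + (Lq m c : ℝ) * Real.log 2 := by
  obtain ⟨q, hq⟩ := Ical_eq (m-1) c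
  rw [show m-1+1 = m by omega] at hq
  exact ⟨q, hq⟩

lemma sum_Ical_eq (n : ℕ) (co mf cf : ℕ → ℕ) (hmf : ∀ k, 1 ≤ mf k) :
    ∃ q : ℚ, (∑ k ∈ Finset.range n, (co k : ℝ) * Ical (2 * mf k) (cf k))
      = (q:ℝ) + ((∑ k ∈ Finset.range n, (co k : ℚ) * Lq (mf k) (cf k) : ℚ) : ℝ) * Real.log 2 := by
  choose q hq using fun k => Ical_eq' (mf k) (cf k) (hmf k)
  refine ⟨∑ k ∈ Finset.range n, (co k : ℚ) * q k, ?_⟩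
  have h1 : ∀ k ∈ Finset.range n, (co k : ℝ) * Ical (2 * mf k) (cf k)
      = (((co k : ℚ) * q k : ℚ) : ℝ) + (((co k : ℚ) * Lq (mf k) (cf k) : ℚ) : ℝ) * Real.log 2 := by
    intro k _
    rw [hq k]
    push_cast
    ring
  rw [Finset.sum_congr rfl h1, Finset.sum_add_distrib, ← Finset.sum_mul]
  push_cast
  ring

lemma betaStar_eq (t : ℕ) : ∃ q : ℚ, betaStar t = (q:ℝ) + (Bq t : ℝ) * Real.log 2 := by
  rw [betaStar, Bq]
  by_cases hE : Even t
  · rw [if_pos hE, if_pos hE]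
    have e1 : ∀ k : ℕ, (4*k+4) = 2 * (2*k+2) := fun k => by ring
    have e2 : ∀ k : ℕ, (4*k+2) = 2 * (2*k+1) := fun k => by ring
    simp only [e1, e2]
    obtain ⟨q1, h1⟩ := sum_Ical_eq (ub t 4) (fun k => ((t - 2*k - 2)/2).choose (2*k+1))
        (fun k => 2*k+2) (fun k => (t - 2*k)/2) (fun k => by show 1 ≤ 2*k+2; omega)
    obtain ⟨q2, h2⟩ := sum_Ical_eq (ub t 2) (fun k => ((t - 2*k - 2)/2).choose (2*k))
        (fun k => 2*k+1) (fun k => (t - 2*k)/2) (fun k => by show 1 ≤ 2*k+1; omega)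
    refine ⟨q1 + q2, ?_⟩
    rw [h1, h2]
    push_cast
    ring
  · rw [if_neg hE, if_neg hE]
    have e1 : ∀ k : ℕ, (4*k+4) = 2 * (2*k+2) := fun k => by ring
    have e2 : ∀ k : ℕ, (4*k+2) = 2 * (2*k+1) := fun k => by ring
    simp only [e1, e2]
    obtain ⟨q1, h1⟩ := sum_Ical_eq (ub t 1) (fun k => ((t - 2*k - 1)/2).choose (2*k))
        (fun k => 2*k+1) (fun k => (t - 2*k + 1)/2) (fun k => by show 1 ≤ 2*k+1; omega)
    obtain ⟨q2, h2⟩ := sum_Ical_eq (ub t 5) (fun k => ((t - 2*k - 3)/2).choose (2*k+1))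
        (fun k => 2*k+2) (fun k => (t - 2*k - 1)/2) (fun k => by show 1 ≤ 2*k+2; omega)
    refine ⟨q1 + q2, ?_⟩
    rw [h1, h2]
    push_cast
    ring

lemma Lq_eq_zero {m c : ℕ} (h : (m-1).choose (c-1) = 0) : Lq m c = 0 := by
  unfold Lq
  split
  · rfl
  · rw [h]; simp

lemma Lq_val (m c : ℕ) (hc : c ≠ 0) :
    Lq m c = (-1)^(m+c) * ((m-1).choose (c-1)) / 2 := if_neg hc

lemma Bq_val (t : ℕ) (ht : 2 ≤ t) : Bq t = if 3 ∣ t then 0 else 1/2 := by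
  obtain ⟨k0, r, hr6, ht6⟩ : ∃ k0 r, r < 6 ∧ t = 6*k0 + r :=
    ⟨t/6, t%6, Nat.mod_lt _ (by norm_num), by omega⟩
  subst ht6
  interval_cases r
  · -- r = 0 : divisible by 3, even
    rw [if_pos (by omega : 3 ∣ 6*k0 + 0), Bq, if_pos (Nat.even_iff.mpr (by omega))]
    rw [Finset.sum_eq_zero, Finset.sum_eq_zero, add_zero]
    · intro k hk
      have hk' := Finset.mem_range.mp hk
      have hub := show ub (6*k0+0) 2 = k0 by unfold ub; omega
      rw [hub] at hk'
      apply mul_eq_zero_of_right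
      exact Lq_eq_zero (Nat.choose_eq_zero_of_lt (by omega))
    · intro k hk
      have hk' := Finset.mem_range.mp hk
      have hub := show ub (6*k0+0) 4 = k0 by unfold ub; omega
      rw [hub] at hk'
      apply mul_eq_zero_of_right
      exact Lq_eq_zero (Nat.choose_eq_zero_of_lt (by omega))
  · -- r = 1 : odd, not divisible by 3; single term k0 in first sum
    rw [if_neg (by omega : ¬ 3 ∣ 6*k0 + 1), Bq, if_neg (by rw [Nat.even_iff]; omega)]
    have hub1 : ub (6*k0+1) 1 = k0 + 1 := by unfold ub; omega
    have hub5 : ub (6*k0+1) 5 = k0 := by unfold ub; omega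
    rw [hub1, hub5]
    rw [Finset.sum_eq_single_of_mem k0 (Finset.mem_range.mpr (by omega)), Finset.sum_eq_zero]
    · rw [show (6*k0+1 - 2*k0 - 1)/2 = 2*k0 by omega, show (6*k0+1 - 2*k0 + 1)/2 = 2*k0+1 by omega,
        Nat.choose_self, Lq_val _ _ (by omega), show 2*k0+1-1 = 2*k0 by omega, Nat.choose_self,
        show 2*k0+1+(2*k0+1) = 2*(2*k0+1) by ring, pow_mul]
      norm_num
    · intro k hk
      have hk' := Finset.mem_range.mp hk
      apply mul_eq_zero_of_right
      exact Lq_eq_zero (Nat.choose_eq_zero_of_lt (by omega))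
    · intro k hk hne
      have hk' := Finset.mem_range.mp hk
      apply mul_eq_zero_of_right
      exact Lq_eq_zero (Nat.choose_eq_zero_of_lt (by omega))
  · -- r = 2 : even, not divisible by 3; single term k0 in second sum
    rw [if_neg (by omega : ¬ 3 ∣ 6*k0 + 2), Bq, if_pos (Nat.even_iff.mpr (by omega))]
    have hub4 : ub (6*k0+2) 4 = k0 := by unfold ub; omega
    have hub2 : ub (6*k0+2) 2 = k0 + 1 := by unfold ub; omega
    rw [hub4, hub2]
    rw [Finset.sum_eq_zero, Finset.sum_eq_single_of_mem k0 (Finset.mem_range.mpr (by omega)),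
      zero_add]
    · rw [show (6*k0+2 - 2*k0 - 2)/2 = 2*k0 by omega, show (6*k0+2 - 2*k0)/2 = 2*k0+1 by omega,
        Nat.choose_self, Lq_val _ _ (by omega), show 2*k0+1-1 = 2*k0 by omega, Nat.choose_self,
        show 2*k0+1+(2*k0+1) = 2*(2*k0+1) by ring, pow_mul]
      norm_num
    · intro k hk hne
      have hk' := Finset.mem_range.mp hk
      apply mul_eq_zero_of_right
      exact Lq_eq_zero (Nat.choose_eq_zero_of_lt (by omega))
    · intro k hk
      have hk' := Finset.mem_range.mp hk
      apply mul_eq_zero_of_right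
      exact Lq_eq_zero (Nat.choose_eq_zero_of_lt (by omega))
  · -- r = 3 : odd, divisible by 3
    rw [if_pos (by omega : 3 ∣ 6*k0 + 3), Bq, if_neg (by rw [Nat.even_iff]; omega)]
    rw [Finset.sum_eq_zero, Finset.sum_eq_zero, add_zero]
    · intro k hk
      have hk' := Finset.mem_range.mp hk
      have hub := show ub (6*k0+3) 5 = k0 by unfold ub; omega
      rw [hub] at hk'
      apply mul_eq_zero_of_right
      exact Lq_eq_zero (Nat.choose_eq_zero_of_lt (by omega))
    · intro k hk
      have hk' := Finset.mem_range.mp hk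
      have hub := show ub (6*k0+3) 1 = k0 + 1 by unfold ub; omega
      rw [hub] at hk'
      apply mul_eq_zero_of_right
      exact Lq_eq_zero (Nat.choose_eq_zero_of_lt (by omega))
  · -- r = 4 : even, not divisible by 3; single term k0 in first sum
    rw [if_neg (by omega : ¬ 3 ∣ 6*k0 + 4), Bq, if_pos (Nat.even_iff.mpr (by omega))]
    have hub4 : ub (6*k0+4) 4 = k0 + 1 := by unfold ub; omega
    have hub2 : ub (6*k0+4) 2 = k0 + 1 := by unfold ub; omega
    rw [hub4, hub2]
    rw [Finset.sum_eq_single_of_mem k0 (Finset.mem_range.mpr (by omega)), Finset.sum_eq_zero,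
      add_zero]
    · rw [show (6*k0+4 - 2*k0 - 2)/2 = 2*k0+1 by omega, show (6*k0+4 - 2*k0)/2 = 2*k0+2 by omega,
        Nat.choose_self, Lq_val _ _ (by omega), show 2*k0+2-1 = 2*k0+1 by omega,
        Nat.choose_self, show 2*k0+2+(2*k0+2) = 2*(2*k0+2) by ring, pow_mul]
      norm_num
    · intro k hk
      have hk' := Finset.mem_range.mp hk
      apply mul_eq_zero_of_right
      exact Lq_eq_zero (Nat.choose_eq_zero_of_lt (by omega))
    · intro k hk hne
      have hk' := Finset.mem_range.mp hk
      apply mul_eq_zero_of_right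
      exact Lq_eq_zero (Nat.choose_eq_zero_of_lt (by omega))
  · -- r = 5 : odd, not divisible by 3; single term k0 in second sum
    rw [if_neg (by omega : ¬ 3 ∣ 6*k0 + 5), Bq, if_neg (by rw [Nat.even_iff]; omega)]
    have hub1 : ub (6*k0+5) 1 = k0 + 1 := by unfold ub; omega
    have hub5 : ub (6*k0+5) 5 = k0 + 1 := by unfold ub; omega
    rw [hub1, hub5]
    rw [Finset.sum_eq_zero, Finset.sum_eq_single_of_mem k0 (Finset.mem_range.mpr (by omega)),
      zero_add]
    · rw [show (6*k0+5 - 2*k0 - 3)/2 = 2*k0+1 by omega, show (6*k0+5 - 2*k0 - 1)/2 = 2*k0+2 by omega,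
        Nat.choose_self, Lq_val _ _ (by omega), show 2*k0+2-1 = 2*k0+1 by omega,
        Nat.choose_self, show 2*k0+2+(2*k0+2) = 2*(2*k0+2) by ring, pow_mul]
      norm_num
    · intro k hk hne
      have hk' := Finset.mem_range.mp hk
      apply mul_eq_zero_of_right
      exact Lq_eq_zero (Nat.choose_eq_zero_of_lt (by omega))
    · intro k hk
      have hk' := Finset.mem_range.mp hk
      apply mul_eq_zero_of_right
      exact Lq_eq_zero (Nat.choose_eq_zero_of_lt (by omega))

/-- For every `t ≥ 2`: `β*_t ∈ ℚ(log 2)`, i.e. `β*_t = a + b·ln 2` with `a, b ∈ ℚ`;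
and `β*_t ∈ ℚ` if and only if `3 ∣ t`. -/
theorem betaStar_rationality (t : ℕ) (ht : 2 ≤ t) :
    (∃ a b : ℚ, betaStar t = (a : ℝ) + (b : ℝ) * Real.log 2) ∧
    ((∃ r : ℚ, betaStar t = (r : ℝ)) ↔ 3 ∣ t) := by
  obtain ⟨q, hq⟩ := betaStar_eq t
  refine ⟨⟨q, Bq t, hq⟩, ?_, ?_⟩
  · rintro ⟨r, hr⟩
    by_contra h3
    rw [Bq_val t ht, if_neg h3] at hq
    apply log_two_irrational
    refine ⟨2*(r - q), ?_⟩
    rw [hr] at hq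
    push_cast at hq ⊢
    linarith
  · intro h3
    rw [Bq_val t ht, if_pos h3] at hq
    refine ⟨q, ?_⟩
    rw [hq]
    push_cast
    ring
end
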